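/- arXiv:1008.4764 — 8 statements merged into one kernel-verified Lean document; each statement's English description precedes it below -/
import Mathlib

section
/- Suppose (K; a_1,…,a_m) underlies a complete simplicial fan in ℝ^n. Then the action of R on U(K) is proper: the map R × U(K) → U(K) × U(K), (y, z) ↦ (y·z, z), is a proper map, i.e. the preimage of every compact subset of U(K) × U(K) is compact. -/
open Filter Topology

/-- The simplicial cone spanned by the vectors `a i`, `i ∈ I`: all nonnegative linear
combinations of the `a i` with `i ∈ I`. -/
def cone {n m : ℕ} (a : Fin m → (Fin n → ℝ)) (I : Set (Fin m)) : Set (Fin n → ℝ) :=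
  {x | ∃ μ : Fin m → ℝ, (∀ i, 0 ≤ μ i) ∧ (∀ i, i ∉ I → μ i = 0) ∧ x = ∑ i, μ i • a i}

lemma indep_zero {n m : ℕ} (a : Fin m → (Fin n → ℝ)) (I : Set (Fin m))
    (hInd : LinearIndependent ℝ (fun i : I => a i.1))
    (c : Fin m → ℝ) (hc0 : ∀ i, i ∉ I → c i = 0)
    (hsum : ∑ i, c i • a i = 0) : ∀ i, c i = 0 := by
  classical
  haveI : Fintype I := Fintype.ofFinite _
  have h1 : ∑ i : I, c i.1 • a i.1 = 0 := by
    rw [Finset.sum_set_coe (f := fun i => c i • a i)]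
    rw [← hsum]
    exact Finset.sum_subset (Finset.subset_univ _)
      (fun i _ hi => by rw [hc0 i (by simpa using hi), zero_smul])
  have h2 := Fintype.linearIndependent_iff.mp hInd (fun i => c i.1) h1
  intro i
  by_cases hi : i ∈ I
  · exact h2 ⟨i, hi⟩
  · exact hc0 i hi

lemma sep_lemma {n m : ℕ} (a : Fin m → (Fin n → ℝ)) (I J : Set (Fin m))
    (hIndI : LinearIndependent ℝ (fun i : I => a i.1))
    (hIndJ : LinearIndependent ℝ (fun i : J => a i.1))
    (hIJ : cone a I ∩ cone a J = cone a (I ∩ J))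
    (u : Fin m → ℝ) (hu : ∑ i, u i • a i = 0)
    (hI : ∀ i, i ∉ I → u i ≤ 0) (hJ : ∀ i, i ∉ J → 0 ≤ u i) :
    ∀ i, u i = 0 := by
  classical
  set p : Fin m → ℝ := fun i => max (u i) 0 with hp
  set q : Fin m → ℝ := fun i => max (-u i) 0 with hq
  have hpq : ∀ i, u i = p i - q i := by
    intro i; simp only [hp, hq]
    rcases le_total (u i) 0 with h | h
    · rw [max_eq_right h, max_eq_left (by linarith)]; ring
    · rw [max_eq_left h, max_eq_right (by linarith)]; ring
  have hsumeq : ∑ i, p i • a i = ∑ i, q i • a i := by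
    have : ∑ i, p i • a i - ∑ i, q i • a i = 0 := by
      rw [← Finset.sum_sub_distrib, ← hu]
      exact Finset.sum_congr rfl fun i _ => by rw [← sub_smul, ← hpq]
    exact sub_eq_zero.mp this
  have hxI : (∑ i, p i • a i) ∈ cone a I := by
    refine ⟨p, fun i => le_max_right _ _, fun i hi => ?_, rfl⟩
    exact max_eq_right (hI i hi)
  have hxJ : (∑ i, p i • a i) ∈ cone a J := by
    refine ⟨q, fun i => le_max_right _ _, fun i hi => ?_, hsumeq⟩
    exact max_eq_right (by simpa using hJ i hi)
  have hx : (∑ i, p i • a i) ∈ cone a (I ∩ J) := hIJ ▸ ⟨hxI, hxJ⟩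
  obtain ⟨ν, hν0, hνsupp, hνsum⟩ := hx
  have hpν : ∀ i, p i = ν i := by
    have := indep_zero a I hIndI (fun i => p i - ν i)
      (fun i hi => by
        show p i - ν i = 0
        rw [show p i = 0 from max_eq_right (hI i hi), hνsupp i (fun h => hi h.1)]; ring)
      (by
        rw [Finset.sum_congr rfl (fun i _ => (sub_smul (p i) (ν i) (a i))),
          Finset.sum_sub_distrib, ← hνsum, sub_self])
    intro i; have h := this i; linarith
  have hqν : ∀ i, q i = ν i := by
    have := indep_zero a J hIndJ (fun i => q i - ν i)
      (fun i hi => by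
        show q i - ν i = 0
        rw [show q i = 0 from max_eq_right (by simpa using hJ i hi),
          hνsupp i (fun h => hi h.2)]; ring)
      (by
        rw [Finset.sum_congr rfl (fun i _ => (sub_smul (q i) (ν i) (a i))),
          Finset.sum_sub_distrib, ← hsumeq, ← hνsum, sub_self])
    intro i; have h := this i; linarith
  intro i
  have h1 : p i = q i := by rw [hpν i, hqν i]
  rcases lt_trichotomy (u i) 0 with h | h | h
  · exfalso
    have hp0 : p i = 0 := max_eq_right h.le
    have hq0 : q i = 0 := by rw [← h1, hp0]
    have h2 : max (-u i) 0 = 0 := hq0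
    have h3 : 0 < -u i := by linarith
    rw [max_eq_left h3.le] at h2; linarith
  · exact h
  · exfalso
    have hq0 : q i = 0 := max_eq_right (by linarith)
    have hp0 : p i = 0 := by rw [h1, hq0]
    rw [show p i = u i from max_eq_left h.le] at hp0; linarith

/-- If `(K; a₁, …, a_m)` underlies a complete simplicial fan in ℝⁿ, then the
action of `R` on `U(K)` is proper: the map `R × U(K) → U(K) × U(K)`, `(y, z) ↦ (y·z, z)`,
has compact preimages of compact sets. -/
theorem R_action_on_UK_is_proper (n m : ℕ) (hn : 1 ≤ n) (hm : 1 ≤ m)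
    (a : Fin m → (Fin n → ℝ)) (K : Set (Set (Fin m)))
    (hKempty : ∅ ∈ K) (hKdown : ∀ I ∈ K, ∀ J ⊆ I, J ∈ K)
    (hInd : ∀ I ∈ K, LinearIndependent ℝ (fun i : I => a i.1))
    (hInter : ∀ I ∈ K, ∀ J ∈ K, cone a I ∩ cone a J = cone a (I ∩ J))
    (hCover : (⋃ I ∈ K, cone a I) = Set.univ) :
    ∀ V : Set ((Fin m → ℂ) × (Fin m → ℂ)),
      V ⊆ {z | {i | z i = 0} ∈ K} ×ˢ {z | {i | z i = 0} ∈ K} →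
      IsCompact V →
      IsCompact {p : (Fin m → ℝ) × (Fin m → ℂ) |
        ((∀ i, 0 < p.1 i) ∧ ∑ i, Real.log (p.1 i) • a i = 0) ∧
        {i | p.2 i = 0} ∈ K ∧
        ((fun i => (p.1 i : ℂ) * p.2 i), p.2) ∈ V} := by
  intro V hV hVcomp
  refine IsSeqCompact.isCompact ?_
  intro f hf
  classical
  have hypos : ∀ k i, 0 < (f k).1 i := fun k => (hf k).1.1
  set y : ℕ → Fin m → ℝ := fun k => (f k).1 with hy_def
  set z : ℕ → Fin m → ℂ := fun k => (f k).2 with hz_def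
  have hlog : ∀ k, ∑ i, Real.log (y k i) • a i = 0 := fun k => (hf k).1.2
  have hVm : ∀ k, ((fun i => (y k i : ℂ) * z k i), z k) ∈ V := fun k => (hf k).2.2
  have hLcont : Continuous (fun v : Fin m → ℝ => ∑ i, v i • a i) :=
    continuous_finset_sum _ fun i _ => (continuous_apply i).smul continuous_const
  -- Step 1: extract a subsequence converging in V
  obtain ⟨⟨w, zlim⟩, hwzV, φ₀, hφ₀, hconv⟩ := hVcomp.isSeqCompact hVm
  have hw : Tendsto (fun k => (fun i => (y (φ₀ k) i : ℂ) * z (φ₀ k) i)) atTop (𝓝 w) :=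
    (continuous_fst.tendsto (w, zlim)).comp hconv
  have hzlim : Tendsto (fun k => z (φ₀ k)) atTop (𝓝 zlim) :=
    (continuous_snd.tendsto (w, zlim)).comp hconv
  have hwi : ∀ i, Tendsto (fun k => (y (φ₀ k) i : ℂ) * z (φ₀ k) i) atTop (𝓝 (w i)) :=
    fun i => tendsto_pi_nhds.mp hw i
  have hzi : ∀ i, Tendsto (fun k => z (φ₀ k) i) atTop (𝓝 (zlim i)) :=
    fun i => tendsto_pi_nhds.mp hzlim i
  have habsw : ∀ i, Tendsto (fun k => y (φ₀ k) i * ‖z (φ₀ k) i‖) atTop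
      (𝓝 (‖w i‖)) := by
    intro i
    have h := (continuous_norm.tendsto (w i)).comp (hwi i)
    refine h.congr fun k => ?_
    simp [Function.comp, map_mul, Complex.norm_real, abs_of_pos (hypos (φ₀ k) i)]
    exact Or.inl (hypos (φ₀ k) i).le
  have habsz : ∀ i, Tendsto (fun k => ‖z (φ₀ k) i‖) atTop
      (𝓝 (‖zlim i‖)) := fun i => (continuous_norm.tendsto _).comp (hzi i)
  set I : Set (Fin m) := {i | zlim i = 0} with hI_def
  set J : Set (Fin m) := {i | w i = 0} with hJ_def
  have hprod := hV hwzV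
  have hJK : J ∈ K := hprod.1
  have hIK : I ∈ K := hprod.2
  set t : ℕ → Fin m → ℝ := fun k i => Real.log (y k i) with ht_def
  have hyt : ∀ k i, y k i = Real.exp (t k i) := fun k i => (Real.exp_log (hypos k i)).symm
  have htsum : ∀ k, ∑ i, t k i • a i = 0 := hlog
  -- per-coordinate eventual bounds
  have hUB : ∀ i, i ∉ I → ∃ B : ℝ, ∀ᶠ k in atTop, t (φ₀ k) i ≤ B := by
    intro i hi
    have hzne : (0:ℝ) < ‖zlim i‖ := norm_pos_iff.mpr hi
    refine ⟨Real.log ((‖w i‖ + 1) / (‖zlim i‖ / 2)), ?_⟩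
    have h1 : ∀ᶠ k in atTop, ‖zlim i‖ / 2 < ‖z (φ₀ k) i‖ :=
      (habsz i).eventually (eventually_gt_nhds (by linarith))
    have h2 : ∀ᶠ k in atTop,
        y (φ₀ k) i * ‖z (φ₀ k) i‖ < ‖w i‖ + 1 :=
      (habsw i).eventually (eventually_lt_nhds (by linarith))
    filter_upwards [h1, h2] with k hk1 hk2
    have hy' : y (φ₀ k) i ≤ (‖w i‖ + 1) / (‖zlim i‖ / 2) := by
      rw [le_div_iff₀ (by linarith)]
      calc y (φ₀ k) i * (‖zlim i‖ / 2)
          ≤ y (φ₀ k) i * ‖z (φ₀ k) i‖ :=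
            mul_le_mul_of_nonneg_left hk1.le (hypos _ i).le
        _ ≤ ‖w i‖ + 1 := hk2.le
    exact Real.log_le_log (hypos _ i) hy'
  have hLB : ∀ i, i ∉ J → ∃ B : ℝ, ∀ᶠ k in atTop, B ≤ t (φ₀ k) i := by
    intro i hi
    have hwne : (0:ℝ) < ‖w i‖ := norm_pos_iff.mpr hi
    refine ⟨Real.log (‖w i‖ / 2 / (‖zlim i‖ + 1)), ?_⟩
    have habsnn : (0:ℝ) ≤ ‖zlim i‖ := norm_nonneg _
    have h1 : ∀ᶠ k in atTop, ‖z (φ₀ k) i‖ < ‖zlim i‖ + 1 :=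
      (habsz i).eventually (eventually_lt_nhds (lt_add_one _))
    have h2 : ∀ᶠ k in atTop,
        ‖w i‖ / 2 < y (φ₀ k) i * ‖z (φ₀ k) i‖ :=
      (habsw i).eventually (eventually_gt_nhds (by linarith))
    filter_upwards [h1, h2] with k hk1 hk2
    have hy' : ‖w i‖ / 2 / (‖zlim i‖ + 1) ≤ y (φ₀ k) i := by
      rw [div_le_iff₀ (by linarith)]
      calc ‖w i‖ / 2 ≤ y (φ₀ k) i * ‖z (φ₀ k) i‖ := hk2.le
        _ ≤ y (φ₀ k) i * (‖zlim i‖ + 1) :=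
            mul_le_mul_of_nonneg_left hk1.le (hypos _ i).le
    exact Real.log_le_log (by positivity) hy'
  -- Step 2: the sequence t (φ₀ k) is eventually bounded in norm
  have hbd : ∃ B : ℝ, ∀ᶠ k in atTop, ‖t (φ₀ k)‖ ≤ B := by
    by_contra hnb
    push_neg at hnb
    have hfreq : ∀ N : ℕ, ∃ᶠ k in atTop, (N : ℝ) < ‖t (φ₀ k)‖ := by
      intro N
      have h := hnb N
      exact h
    obtain ⟨φ₁, hφ₁, hφ₁n⟩ := Filter.extraction_forall_of_frequently hfreq
    have hnormpos : ∀ k, 0 < ‖t (φ₀ (φ₁ k))‖ := fun k =>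
      lt_of_le_of_lt (Nat.cast_nonneg k) (hφ₁n k)
    set u : ℕ → Fin m → ℝ := fun k => ‖t (φ₀ (φ₁ k))‖⁻¹ • t (φ₀ (φ₁ k)) with hu_def
    have hunorm : ∀ k, ‖u k‖ = 1 := by
      intro k
      simp only [hu_def, norm_smul, norm_inv, norm_norm]
      exact inv_mul_cancel₀ (hnormpos k).ne'
    have humem : ∀ k, u k ∈ Metric.closedBall (0 : Fin m → ℝ) 1 := fun k => by
      rw [Metric.mem_closedBall, dist_zero_right, hunorm k]
    obtain ⟨ulim, hulimmem, φ₂, hφ₂, hulim⟩ :=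
      (isCompact_closedBall (0 : Fin m → ℝ) 1).tendsto_subseq humem
    have hn1 : ‖ulim‖ = 1 := by
      have h1 : Tendsto (fun k => ‖(u ∘ φ₂) k‖) atTop (𝓝 ‖ulim‖) :=
        (continuous_norm.tendsto _).comp hulim
      have h2 : (fun k => ‖(u ∘ φ₂) k‖) = fun _ => (1 : ℝ) :=
        funext fun k => hunorm (φ₂ k)
      rw [h2] at h1
      exact tendsto_nhds_unique h1 tendsto_const_nhds
    have hLu : ∀ k, ∑ i, u k i • a i = 0 := by
      intro k
      have h : ∑ i, u k i • a i = ‖t (φ₀ (φ₁ k))‖⁻¹ • ∑ i, t (φ₀ (φ₁ k)) i • a i := by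
        rw [Finset.smul_sum]
        exact Finset.sum_congr rfl fun i _ => by
          simp [hu_def, Pi.smul_apply, smul_smul]
      rw [h, htsum, smul_zero]
    have hLulim : ∑ i, ulim i • a i = 0 := by
      have h1 : Tendsto (fun k => ∑ i, (u ∘ φ₂) k i • a i) atTop (𝓝 (∑ i, ulim i • a i)) :=
        (hLcont.tendsto _).comp hulim
      have h2 : (fun k => ∑ i, (u ∘ φ₂) k i • a i) = fun _ => (0 : Fin n → ℝ) :=
        funext fun k => hLu (φ₂ k)
      rw [h2] at h1
      exact tendsto_nhds_unique h1 tendsto_const_nhds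
    have hnorm_tendsto : Tendsto (fun k => ‖t (φ₀ (φ₁ (φ₂ k)))‖) atTop atTop := by
      apply tendsto_atTop_mono (fun k => (hφ₁n (φ₂ k)).le.trans' ?_)
        tendsto_natCast_atTop_atTop
      exact_mod_cast Nat.cast_le.mpr hφ₂.le_apply
    have hinv0 : Tendsto (fun k => ‖t (φ₀ (φ₁ (φ₂ k)))‖⁻¹) atTop (𝓝 0) :=
      tendsto_inv_atTop_zero.comp hnorm_tendsto
    have hui : ∀ i, Tendsto (fun k => u (φ₂ k) i) atTop (𝓝 (ulim i)) :=
      fun i => tendsto_pi_nhds.mp hulim i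
    have husignI : ∀ i, i ∉ I → ulim i ≤ 0 := by
      intro i hi
      obtain ⟨B, hB⟩ := hUB i hi
      have hBk : Tendsto (fun k => ‖t (φ₀ (φ₁ (φ₂ k)))‖⁻¹ * B) atTop (𝓝 0) := by
        simpa using hinv0.mul_const B
      have hev : ∀ᶠ k in atTop, t (φ₀ (φ₁ (φ₂ k))) i ≤ B :=
        ((hφ₁.comp hφ₂).tendsto_atTop).eventually hB
      refine le_of_tendsto_of_tendsto (hui i) hBk (hev.mono fun k hk => ?_)
      have hpos := hnormpos (φ₂ k)
      simp only [hu_def, Pi.smul_apply, smul_eq_mul]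
      exact mul_le_mul_of_nonneg_left hk (inv_nonneg.mpr hpos.le)
    have husignJ : ∀ i, i ∉ J → 0 ≤ ulim i := by
      intro i hi
      obtain ⟨B, hB⟩ := hLB i hi
      have hBk : Tendsto (fun k => ‖t (φ₀ (φ₁ (φ₂ k)))‖⁻¹ * B) atTop (𝓝 0) := by
        simpa using hinv0.mul_const B
      have hev : ∀ᶠ k in atTop, B ≤ t (φ₀ (φ₁ (φ₂ k))) i :=
        ((hφ₁.comp hφ₂).tendsto_atTop).eventually hB
      refine le_of_tendsto_of_tendsto hBk (hui i) (hev.mono fun k hk => ?_)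
      have hpos := hnormpos (φ₂ k)
      simp only [hu_def, Pi.smul_apply, smul_eq_mul]
      exact mul_le_mul_of_nonneg_left hk (inv_nonneg.mpr hpos.le)
    have hzero := sep_lemma a I J (hInd I hIK) (hInd J hJK) (hInter I hIK J hJK)
      ulim hLulim husignI husignJ
    have : ulim = 0 := funext hzero
    rw [this, norm_zero] at hn1
    exact absurd hn1 (by norm_num)
  -- Step 3: extract a convergent subsequence of t and conclude
  obtain ⟨B, hB⟩ := hbd
  obtain ⟨φ₁, hφ₁, hφ₁B⟩ := Filter.extraction_of_frequently_atTop hB.frequently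
  have hmem : ∀ k, t (φ₀ (φ₁ k)) ∈ Metric.closedBall (0 : Fin m → ℝ) B := fun k => by
    rw [Metric.mem_closedBall, dist_zero_right]; exact hφ₁B k
  obtain ⟨tlim, htlimmem, φ₂, hφ₂, htlim⟩ :=
    (isCompact_closedBall (0 : Fin m → ℝ) B).tendsto_subseq hmem
  set Φ : ℕ → ℕ := fun k => φ₀ (φ₁ (φ₂ k)) with hΦ_def
  have hΦmono : StrictMono Φ := hφ₀.comp (hφ₁.comp hφ₂)
  set ylim : Fin m → ℝ := fun i => Real.exp (tlim i) with hylim_def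
  have htlimi : ∀ i, Tendsto (fun k => t (Φ k) i) atTop (𝓝 (tlim i)) :=
    fun i => tendsto_pi_nhds.mp htlim i
  have hyΦ : Tendsto (fun k => y (Φ k)) atTop (𝓝 ylim) := by
    rw [tendsto_pi_nhds]
    intro i
    have h := (Real.continuous_exp.tendsto (tlim i)).comp (htlimi i)
    exact h.congr fun k => (hyt (Φ k) i).symm
  have hzΦ : Tendsto (fun k => z (Φ k)) atTop (𝓝 zlim) :=
    hzlim.comp ((hφ₁.comp hφ₂).tendsto_atTop)
  have hylimpos : ∀ i, 0 < ylim i := fun i => Real.exp_pos _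
  have hloglim : ∑ i, Real.log (ylim i) • a i = 0 := by
    have h1 : Tendsto (fun k => ∑ i, (t ∘ Φ) k i • a i) atTop (𝓝 (∑ i, tlim i • a i)) :=
      (hLcont.tendsto _).comp htlim
    have h2 : (fun k => ∑ i, (t ∘ Φ) k i • a i) = fun _ => (0 : Fin n → ℝ) :=
      funext fun k => htsum (Φ k)
    rw [h2] at h1
    have h3 : ∑ i, tlim i • a i = 0 := tendsto_nhds_unique h1 tendsto_const_nhds
    simpa [hylim_def, Real.log_exp] using h3
  have hwz : ∀ i, (ylim i : ℂ) * zlim i = w i := by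
    intro i
    have h1 : Tendsto (fun k => (y (Φ k) i : ℂ) * z (Φ k) i) atTop
        (𝓝 ((ylim i : ℂ) * zlim i)) :=
      ((Complex.continuous_ofReal.tendsto _).comp (tendsto_pi_nhds.mp hyΦ i)).mul
        (tendsto_pi_nhds.mp hzΦ i)
    have h2 : Tendsto (fun k => (y (Φ k) i : ℂ) * z (Φ k) i) atTop (𝓝 (w i)) :=
      (hwi i).comp ((hφ₁.comp hφ₂).tendsto_atTop)
    exact tendsto_nhds_unique h1 h2
  have hVmemlim : ((fun i => (ylim i : ℂ) * zlim i), zlim) ∈ V := by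
    have heq : ((fun i => (ylim i : ℂ) * zlim i), zlim) = (w, zlim) := by
      refine Prod.ext ?_ rfl
      exact funext hwz
    rw [heq]; exact hwzV
  refine ⟨(ylim, zlim), ⟨⟨hylimpos, hloglim⟩, hIK, hVmemlim⟩, Φ, hΦmono, ?_⟩
  exact hyΦ.prodMk_nhds hzΦ
end

section
/- Suppose (K; a_1,…,a_m) underlies a complete simplicial fan in ℝ^n. Then the map from {x ∈ ℝ^m : x_i ≤ 0 for all i, and {i : x_i ≠ 0} ∈ K} to ℝ^n sending x to Σ_{i=1}^m x_i a_i is a bijection. -/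
/-- If `(K; a₁, …, a_m)` underlies a complete simplicial fan in ℝⁿ, then the map
`x ↦ Σ_i x_i a_i` restricted to `{x : x_i ≤ 0 ∀i, {i : x_i ≠ 0} ∈ K}` is a bijection onto ℝⁿ. -/
theorem nonpositive_cone_decomposition_bijective (n m : ℕ) (hn : 1 ≤ n) (hm : 1 ≤ m)
    (a : Fin m → (Fin n → ℝ)) (K : Set (Set (Fin m)))
    (hKempty : ∅ ∈ K) (hKdown : ∀ I ∈ K, ∀ J ⊆ I, J ∈ K)
    (hInd : ∀ I ∈ K, LinearIndependent ℝ (fun i : I => a i.1))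
    (hInter : ∀ I ∈ K, ∀ J ∈ K, cone a I ∩ cone a J = cone a (I ∩ J))
    (hCover : (⋃ I ∈ K, cone a I) = Set.univ) :
    Set.BijOn (fun x : Fin m → ℝ => ∑ i, x i • a i)
      {x | (∀ i, x i ≤ 0) ∧ {i | x i ≠ 0} ∈ K} Set.univ := by
  classical
  -- uniqueness of representations with support in a fixed `I ∈ K`
  have key : ∀ I ∈ K, ∀ μ ν : Fin m → ℝ, (∀ i, i ∉ I → μ i = 0) →
      (∀ i, i ∉ I → ν i = 0) → (∑ i, μ i • a i) = (∑ i, ν i • a i) → μ = ν := by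
    intro I hI μ ν hμ hν hsum
    have hli := hInd I hI
    haveI : Fintype ↥I := Fintype.ofFinite _
    rw [Fintype.linearIndependent_iff] at hli
    have hsum2 : (∑ i : I, (μ i.1 - ν i.1) • a i.1) = 0 := by
      have h1 : (∑ i : I, (μ i.1 - ν i.1) • a i.1)
          = ∑ i ∈ I.toFinset, (μ i - ν i) • a i := by
        rw [← Finset.sum_set_coe]
      have h2 : (∑ i ∈ I.toFinset, (μ i - ν i) • a i)
          = ∑ i, (μ i - ν i) • a i := by
        apply Finset.sum_subset (Finset.subset_univ _)
        intro i _ hi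
        rw [Set.mem_toFinset] at hi
        rw [hμ i hi, hν i hi]
        simp
      rw [h1, h2]
      simp only [sub_smul, Finset.sum_sub_distrib, hsum, sub_self]
    have hz := hli (fun i : I => μ i.1 - ν i.1) hsum2
    funext i
    by_cases h : i ∈ I
    · have := hz ⟨i, h⟩
      simpa [sub_eq_zero] using this
    · rw [hμ i h, hν i h]
  refine ⟨fun x _ => trivial, ?_, ?_⟩
  · -- injectivity
    rintro x ⟨hx1, hxK⟩ y ⟨hy1, hyK⟩ hxy
    simp only at hxy
    set p : Fin n → ℝ := ∑ i, (-x i) • a i with hp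
    have hpx : p ∈ cone a {i | x i ≠ 0} :=
      ⟨fun i => -x i, fun i => by simpa using hx1 i,
        fun i hi => by simpa using not_not.mp hi, rfl⟩
    have hpy : p ∈ cone a {i | y i ≠ 0} := by
      refine ⟨fun i => -y i, fun i => by simpa using hy1 i,
        fun i hi => by simpa using not_not.mp hi, ?_⟩
      rw [hp]
      simp only [neg_smul, Finset.sum_neg_distrib]
      rw [hxy]
    have hmem : p ∈ cone a ({i | x i ≠ 0} ∩ {i | y i ≠ 0}) := by
      rw [← hInter _ hxK _ hyK]; exact ⟨hpx, hpy⟩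
    obtain ⟨ν, hν0, hνsupp, hνsum⟩ := hmem
    have hx' : (fun i => -x i) = ν := by
      apply key _ hxK
      · intro i hi; simpa using not_not.mp hi
      · intro i hi; exact hνsupp i (fun h => hi h.1)
      · exact hνsum
    have hy' : (fun i => -y i) = ν := by
      apply key _ hyK
      · intro i hi; simpa using not_not.mp hi
      · intro i hi; exact hνsupp i (fun h => hi h.2)
      · rw [← hνsum, hp]
        simp only [neg_smul, Finset.sum_neg_distrib]
        rw [hxy]
    funext i
    have := congrFun (hx'.trans hy'.symm) i
    simpa using this
  · -- surjectivity
    intro y _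
    have : -y ∈ ⋃ I ∈ K, cone a I := by rw [hCover]; trivial
    obtain ⟨I, hI, μ, hμ0, hμsupp, hμsum⟩ := by
      simpa only [Set.mem_iUnion, cone, Set.mem_setOf_eq] using this
    refine ⟨fun i => -μ i, ⟨fun i => by simpa using hμ0 i, ?_⟩, ?_⟩
    · apply hKdown I hI
      intro i hi
      by_contra h
      exact hi (by simp [hμsupp i h])
    · simp only
      have : (∑ i, (-μ i) • a i) = -∑ i, μ i • a i := by
        simp [neg_smul, Finset.sum_neg_distrib]
      rw [this, ← hμsum, neg_neg]
end

section
/- Suppose (K; a_1,…,a_m) underlies a complete simplicial fan in ℝ^n. Then for every z ∈ U(K) there exists a unique y ∈ R such that y·z ∈ Z_K; that is, every R-orbit in U(K) intersects the moment-angle complex Z_K in exactly one point. -/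
/-- The moment-angle complex `Z_K ⊆ ℂ^m`. -/
def momentAngleComplex (m : ℕ) (K : Set (Set (Fin m))) : Set (Fin m → ℂ) :=
  {z | (∀ i, ‖z i‖ ≤ 1) ∧ {i | ‖z i‖ < 1} ∈ K}

/-- Convert a full sum to a subtype sum when the coefficients vanish off `I`. -/
lemma sum_restrict {n m : ℕ} (a : Fin m → (Fin n → ℝ)) (I : Set (Fin m)) [Fintype ↥I]
    (v : Fin m → ℝ) (hv : ∀ i ∉ I, v i = 0) :
    ∑ i, v i • a i = ∑ i : I, v i.1 • a i.1 := by
  classical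
  rw [← Finset.sum_subtype I.toFinset (fun x => Set.mem_toFinset) (fun i => v i • a i)]
  refine (Finset.sum_subset (Finset.subset_univ _) ?_).symm
  intro i _ hi
  rw [hv i (by simpa using hi), zero_smul]

lemma unique_rep {n m : ℕ} (a : Fin m → (Fin n → ℝ)) (I : Set (Fin m)) [Fintype ↥I]
    (hI : LinearIndependent ℝ (fun i : I => a i.1))
    (v w : Fin m → ℝ) (hv : ∀ i ∉ I, v i = 0) (hw : ∀ i ∉ I, w i = 0)
    (h : ∑ i, v i • a i = ∑ i, w i • a i) : v = w := by
  classical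
  have key : ∀ i : I, (v i.1 - w i.1) = 0 := by
    refine Fintype.linearIndependent_iff.mp hI (fun i => v i.1 - w i.1) ?_
    have h2 : ∑ i : I, (v i.1 - w i.1) • a i.1 = ∑ i, (v i - w i) • a i :=
      (sum_restrict a I (fun i => v i - w i) (fun i hi => by
        show v i - w i = 0; rw [hv i hi, hw i hi, sub_zero])).symm
    rw [h2]
    simp only [sub_smul, Finset.sum_sub_distrib, h, sub_self]
  funext i
  by_cases hi : i ∈ I
  · exact sub_eq_zero.mp (key ⟨i, hi⟩)
  · rw [hv i hi, hw i hi]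

lemma cone_isClosed {n m : ℕ} (a : Fin m → (Fin n → ℝ)) (I : Set (Fin m)) [Fintype ↥I]
    (hI : LinearIndependent ℝ (fun i : I => a i.1)) : IsClosed (cone a I) := by
  classical
  set T : (↥I → ℝ) →ₗ[ℝ] (Fin n → ℝ) :=
    { toFun := fun μ => ∑ i : I, μ i • a i.1
      map_add' := by intro x y; simp [add_smul, Finset.sum_add_distrib]
      map_smul' := by intro c x; simp [smul_smul, Finset.smul_sum] } with hT
  have hker : LinearMap.ker T = ⊥ := by
    rw [LinearMap.ker_eq_bot']
    intro μ hμ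
    funext i
    exact Fintype.linearIndependent_iff.mp hI μ hμ i
  have hemb := LinearMap.isClosedEmbedding_of_injective hker
  have hcl : IsClosed {μ : ↥I → ℝ | ∀ i, 0 ≤ μ i} := by
    have : {μ : ↥I → ℝ | ∀ i, 0 ≤ μ i} = ⋂ i, (fun μ : ↥I → ℝ => μ i) ⁻¹' Set.Ici 0 := by
      ext μ; simp [Set.mem_iInter]
    rw [this]
    exact isClosed_iInter fun i => isClosed_Ici.preimage (continuous_apply i)
  have himg : cone a I = T '' {μ : ↥I → ℝ | ∀ i, 0 ≤ μ i} := by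
    ext x
    constructor
    · rintro ⟨μ, hμ0, hμs, rfl⟩
      exact ⟨fun i => μ i.1, fun i => hμ0 i.1, (sum_restrict a I μ hμs).symm⟩
    · rintro ⟨μ, hμ0, rfl⟩
      refine ⟨fun i => if h : i ∈ I then μ ⟨i, h⟩ else 0, ?_, ?_, ?_⟩
      · intro i
        by_cases h : i ∈ I
        · simpa [h] using hμ0 ⟨i, h⟩
        · simp [h]
      · intro i h; simp [h]
      · rw [sum_restrict a I _ (fun i h => by simp [h])]
        show T μ = _
        simp [hT]
  rw [himg]
  exact hemb.isClosedMap _ hcl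

lemma key_lemma {n m : ℕ} (a : Fin m → (Fin n → ℝ)) (K : Set (Set (Fin m)))
    (hKdown : ∀ I ∈ K, ∀ J ⊆ I, J ∈ K)
    (hInd : ∀ I ∈ K, LinearIndependent ℝ (fun i : I => a i.1))
    (hInter : ∀ I ∈ K, ∀ J ∈ K, cone a I ∩ cone a J = cone a (I ∩ J))
    (hCover : (⋃ I ∈ K, cone a I) = Set.univ)
    (Z : Set (Fin m)) (hZ : Z ∈ K) (p : Fin n → ℝ) :
    ∃! u : Fin m → ℝ,
      (∀ i ∉ Z, 0 ≤ u i) ∧ ∑ i, u i • a i = p ∧ (Z ∪ {i | 0 < u i}) ∈ K := by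
  classical
  set ζ : Fin m → ℝ := fun i => if i ∈ Z then 1 else 0 with hζ
  set b : Fin n → ℝ := ∑ i, ζ i • a i with hb
  -- b is in cone a Z
  have hbZ : b ∈ cone a Z := ⟨ζ, fun i => by by_cases h : i ∈ Z <;> simp [hζ, h],
    fun i h => by simp [hζ, h], rfl⟩
  -- any cone of K containing b has index set ⊇ Z
  have hmain : ∀ I ∈ K, b ∈ cone a I → Z ⊆ I := by
    intro I hI hbI
    have : b ∈ cone a (I ∩ Z) := by
      rw [← hInter I hI Z hZ]; exact ⟨hbI, hbZ⟩
    obtain ⟨μ, hμ0, hμs, hμsum⟩ := this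
    have hμζ : μ = ζ := unique_rep a Z (hInd Z hZ) μ ζ
      (fun i hi => hμs i (fun h => hi h.2)) (fun i hi => by simp [hζ, hi]) (by rw [← hμsum])
    intro i hiZ
    by_contra hiI
    have h1 : μ i = 0 := hμs i (fun h => hiI h.1)
    have h2 : μ i = 1 := by rw [hμζ]; simp [hζ, hiZ]
    rw [h1] at h2; exact zero_ne_one h2
  -- the union of cones not containing Z is closed and misses b
  set C : Set (Fin n → ℝ) := ⋃ I ∈ {I | I ∈ K ∧ ¬ Z ⊆ I}, cone a I with hC
  have hCclosed : IsClosed C := by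
    refine Set.Finite.isClosed_biUnion (Set.toFinite _) ?_
    intro I hI
    exact cone_isClosed a I (hInd I hI.1)
  have hbC : b ∉ C := by
    intro hbc
    obtain ⟨I, hI, hbI⟩ := Set.mem_iUnion₂.mp hbc
    exact hI.2 (hmain I hI.1 hbI)
  -- existence
  obtain ⟨ε, hε, hball⟩ := Metric.isOpen_iff.mp hCclosed.isOpen_compl b hbC
  -- uniqueness
  have huniq : ∀ u u' : Fin m → ℝ,
      ((∀ i ∉ Z, 0 ≤ u i) ∧ ∑ i, u i • a i = p ∧ (Z ∪ {i | 0 < u i}) ∈ K) →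
      ((∀ i ∉ Z, 0 ≤ u' i) ∧ ∑ i, u' i • a i = p ∧ (Z ∪ {i | 0 < u' i}) ∈ K) →
      u = u' := by
    rintro u u' ⟨h0, hsum, hK⟩ ⟨h0', hsum', hK'⟩
    set M : ℝ := 1 + ∑ i, (|u i| + |u' i|) with hM
    have hMb : ∀ i, |u i| ≤ M ∧ |u' i| ≤ M := by
      intro i
      have h1 : |u i| + |u' i| ≤ ∑ j, (|u j| + |u' j|) :=
        Finset.single_le_sum (f := fun j => |u j| + |u' j|)
          (fun j _ => by positivity) (Finset.mem_univ i)
      constructor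
      · nlinarith [abs_nonneg (u' i)]
      · nlinarith [abs_nonneg (u i)]
    set w : Fin m → ℝ := fun i => u i + M * ζ i with hw
    set w' : Fin m → ℝ := fun i => u' i + M * ζ i with hw'
    set I : Set (Fin m) := Z ∪ {i | 0 < u i} with hI
    set I' : Set (Fin m) := Z ∪ {i | 0 < u' i} with hI'
    have hsumgen : ∀ v : Fin m → ℝ, (∑ i, v i • a i = p) →
        ∑ i, (v i + M * ζ i) • a i = p + M • b := by
      intro v hv
      simp only [add_smul, Finset.sum_add_distrib, hv, mul_smul, hb, ← Finset.smul_sum]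
    have hwsum : ∑ i, w i • a i = p + M • b := hsumgen u hsum
    have hw'sum : ∑ i, w' i • a i = p + M • b := hsumgen u' hsum'
    have hwnn : ∀ v : Fin m → ℝ, (∀ i ∉ Z, 0 ≤ v i) → (∀ i, |v i| ≤ M) →
        ∀ i, 0 ≤ v i + M * ζ i := by
      intro v hv hb2 i
      by_cases h : i ∈ Z
      · have := hb2 i; simp only [hζ, h, if_true, mul_one]
        nlinarith [neg_abs_le (v i)]
      · simp only [hζ, h, if_false, mul_zero, add_zero]; exact hv i h
    have hwsupp : ∀ i ∉ I, w i = 0 := by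
      intro i hi
      have h1 : i ∉ Z := fun h => hi (Or.inl h)
      have h2 : ¬ 0 < u i := fun h => hi (Or.inr h)
      have h3 : u i = 0 := le_antisymm (not_lt.mp h2) (h0 i h1)
      simp [hw, hζ, h1, h3]
    have hw'supp : ∀ i ∉ I', w' i = 0 := by
      intro i hi
      have h1 : i ∉ Z := fun h => hi (Or.inl h)
      have h2 : ¬ 0 < u' i := fun h => hi (Or.inr h)
      have h3 : u' i = 0 := le_antisymm (not_lt.mp h2) (h0' i h1)
      simp [hw', hζ, h1, h3]
    have hqI : p + M • b ∈ cone a I :=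
      ⟨w, hwnn u h0 (fun i => (hMb i).1), hwsupp, hwsum.symm⟩
    have hqI' : p + M • b ∈ cone a I' :=
      ⟨w', hwnn u' h0' (fun i => (hMb i).2), hw'supp, hw'sum.symm⟩
    have hqint : p + M • b ∈ cone a (I ∩ I') := by
      rw [← hInter I hK I' hK']; exact ⟨hqI, hqI'⟩
    obtain ⟨μ, hμ0, hμs, hμsum⟩ := hqint
    have hwμ : w = μ := unique_rep a I (hInd I hK) w μ hwsupp
      (fun i hi => hμs i (fun h => hi h.1)) (hwsum.trans hμsum)
    have hw'μ : w' = μ := unique_rep a I' (hInd I' hK') w' μ hw'supp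
      (fun i hi => hμs i (fun h => hi h.2)) (hw'sum.trans hμsum)
    funext i
    have : w i = w' i := by rw [hwμ, hw'μ]
    simpa [hw, hw'] using this
  -- existence
  set δ : ℝ := ε / (2 * (‖p‖ + 1)) with hδ
  have hδpos : 0 < δ := by
    apply div_pos hε; positivity
  have hδeq : δ * (2 * (‖p‖ + 1)) = ε := by
    rw [hδ]; field_simp
  have hmem : b + δ • p ∈ Metric.ball b ε := by
    rw [Metric.mem_ball, dist_eq_norm]
    have h1 : b + δ • p - b = δ • p := by abel
    rw [h1, norm_smul, Real.norm_eq_abs, abs_of_pos hδpos]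
    nlinarith [norm_nonneg p]
  have hcov : b + δ • p ∈ ⋃ I ∈ K, cone a I := by rw [hCover]; trivial
  obtain ⟨I, hIK, hmemI⟩ := Set.mem_iUnion₂.mp hcov
  have hZI : Z ⊆ I := by
    by_contra hns
    exact (hball hmem) (Set.mem_iUnion₂.mpr ⟨I, ⟨hIK, hns⟩, hmemI⟩)
  obtain ⟨μ, hμ0, hμs, hμsum⟩ := hmemI
  set u : Fin m → ℝ := fun i => (μ i - ζ i) / δ with hu
  have hu0 : ∀ i ∉ Z, 0 ≤ u i := by
    intro i hi
    have : ζ i = 0 := by simp [hζ, hi]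
    rw [hu]; simp only [this, sub_zero]
    exact div_nonneg (hμ0 i) hδpos.le
  have husum : ∑ i, u i • a i = p := by
    have hstep : ∀ i, u i • a i = δ⁻¹ • (μ i • a i - ζ i • a i) := by
      intro i
      rw [hu]
      show ((μ i - ζ i) / δ) • a i = _
      rw [div_eq_inv_mul, mul_smul, sub_smul, smul_sub]
    simp only [hstep, ← Finset.smul_sum, Finset.sum_sub_distrib, ← hb, ← hμsum]
    have h1 : b + δ • p - b = δ • p := by abel
    rw [h1, smul_smul, inv_mul_cancel₀ hδpos.ne', one_smul]
  have huK : (Z ∪ {i | 0 < u i}) ∈ K := by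
    refine hKdown I hIK _ ?_
    intro i hi
    rcases hi with hi | hi
    · exact hZI hi
    · by_contra hiI
      have h1 : μ i = 0 := hμs i hiI
      have hz : i ∉ Z := fun h => hiI (hZI h)
      have h2 : ζ i = 0 := by simp [hζ, hz]
      have h3 : u i = 0 := by rw [hu]; simp [h1, h2]
      have hpos : 0 < u i := hi
      rw [h3] at hpos; exact lt_irrefl 0 hpos
  exact ⟨u, ⟨hu0, husum, huK⟩, fun u' h' => huniq u' u h' ⟨hu0, husum, huK⟩⟩

/-- If `(K; a₁, …, a_m)` underlies a complete simplicial fan in ℝⁿ, then every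
`R`-orbit in `U(K)` meets the moment-angle complex `Z_K` in exactly one point: for every
`z ∈ U(K)` there is a unique `y ∈ R` with `y·z ∈ Z_K`. -/
theorem R_orbit_meets_ZK_once (n m : ℕ) (hn : 1 ≤ n) (hm : 1 ≤ m)
    (a : Fin m → (Fin n → ℝ)) (K : Set (Set (Fin m)))
    (hKempty : ∅ ∈ K) (hKdown : ∀ I ∈ K, ∀ J ⊆ I, J ∈ K)
    (hInd : ∀ I ∈ K, LinearIndependent ℝ (fun i : I => a i.1))
    (hInter : ∀ I ∈ K, ∀ J ∈ K, cone a I ∩ cone a J = cone a (I ∩ J))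
    (hCover : (⋃ I ∈ K, cone a I) = Set.univ) :
    ∀ z : Fin m → ℂ, {i | z i = 0} ∈ K →
      ∃! y : Fin m → ℝ,
        ((∀ i, 0 < y i) ∧ ∑ i, Real.log (y i) • a i = 0) ∧
        (fun i => (y i : ℂ) * z i) ∈ momentAngleComplex m K := by
  intro z hZK
  classical
  set Z : Set (Fin m) := {i | z i = 0} with hZdef
  set c : Fin m → ℝ := fun i => -Real.log ‖z i‖ with hc
  obtain ⟨u, ⟨hu0, husum, huK⟩, huniq⟩ :=
    key_lemma a K hKdown hInd hInter hCover Z hZK (∑ i, c i • a i)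
  have hnormz : ∀ i ∉ Z, ‖z i‖ = Real.exp (-(c i)) := by
    intro i hi
    have hz : z i ≠ 0 := hi
    rw [hc]; simp only [neg_neg]
    rw [Real.exp_log (norm_pos_iff.mpr hz)]
  have hnorm : ∀ (t : ℝ) (i : Fin m), 0 < t → i ∉ Z →
      ‖(t : ℂ) * z i‖ = Real.exp (Real.log t - c i) := by
    intro t i ht hi
    have h1 : Real.exp (Real.log t - c i) = t * Real.exp (-(c i)) := by
      rw [sub_eq_add_neg, Real.exp_add, Real.exp_log ht]
    rw [norm_mul, Complex.norm_real, Real.norm_eq_abs, abs_of_pos ht, hnormz i hi, h1]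
  set y : Fin m → ℝ := fun i => Real.exp (c i - u i) with hy
  have hyn : ∀ i ∉ Z, ‖(y i : ℂ) * z i‖ = Real.exp (-(u i)) := by
    intro i hi
    rw [hy]
    rw [hnorm _ i (Real.exp_pos _) hi, Real.log_exp]
    ring_nf
  have hylog : ∀ i, Real.log (y i) = c i - u i := fun i => Real.log_exp _
  refine ⟨y, ⟨⟨fun i => Real.exp_pos _, ?_⟩, ?_, ?_⟩, ?_⟩
  · simp only [hylog, sub_smul, Finset.sum_sub_distrib, husum, sub_self]
  · intro i
    by_cases hi : i ∈ Z
    · have hz : z i = 0 := hi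
      simp [hz]
    · rw [hyn i hi, Real.exp_le_one_iff]
      linarith [hu0 i hi]
  · have hset : {i | ‖(y i : ℂ) * z i‖ < 1} = Z ∪ {i | 0 < u i} := by
      ext i
      by_cases hi : i ∈ Z
      · have hz : z i = 0 := hi
        simp [hz, hi]
      · simp only [Set.mem_setOf_eq, Set.mem_union, hi, false_or]
        rw [hyn i hi, Real.exp_lt_one_iff, neg_lt_zero]
    show {i | ‖(y i : ℂ) * z i‖ < 1} ∈ K
    rw [hset]; exact huK
  · rintro y' ⟨⟨hy'pos, hy'sum⟩, hy'le, hy'K⟩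
    set u' : Fin m → ℝ := fun i => c i - Real.log (y' i) with hu'
    have h1 : ∀ i ∉ Z, 0 ≤ u' i := by
      intro i hi
      have h := hy'le i
      rw [hnorm _ i (hy'pos i) hi, Real.exp_le_one_iff] at h
      show (0:ℝ) ≤ c i - Real.log (y' i)
      linarith
    have h2 : ∑ i, u' i • a i = ∑ i, c i • a i := by
      simp only [hu', sub_smul, Finset.sum_sub_distrib, hy'sum, sub_zero]
    have h3 : (Z ∪ {i | 0 < u' i}) ∈ K := by
      have hset : Z ∪ {i | 0 < u' i} = {i | ‖(y' i : ℂ) * z i‖ < 1} := by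
        ext i
        by_cases hi : i ∈ Z
        · have hz : z i = 0 := hi
          simp [hz, hi]
        · simp only [Set.mem_setOf_eq, Set.mem_union, hi, false_or]
          rw [hnorm _ i (hy'pos i) hi, Real.exp_lt_one_iff]
          show 0 < c i - Real.log (y' i) ↔ _
          constructor <;> intro <;> linarith
      rw [hset]; exact hy'K
    have hueq : u' = u := huniq u' ⟨h1, h2, h3⟩
    funext i
    have : Real.log (y' i) = c i - u i := by
      rw [← hueq]
      show Real.log (y' i) = c i - (c i - Real.log (y' i))
      ring
    calc y' i = Real.exp (Real.log (y' i)) := (Real.exp_log (hy'pos i)).symm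
      _ = Real.exp (c i - u i) := by rw [this]
      _ = y i := rfl
end

section
/- Suppose (K; a_1,…,a_m) underlies a complete simplicial fan in ℝ^n. Then the composition of the inclusion Z_K ↪ U(K) with the quotient map U(K) → U(K)/R onto the space of R-orbits (equipped with the quotient topology) is a homeomorphism from Z_K onto U(K)/R. -/
set_option maxHeartbeats 1000000
attribute [local instance] Classical.propDecidable


/-- The coordinate subspace arrangement complement `U(K) ⊆ ℂ^m`. -/
def UK (m : ℕ) (K : Set (Set (Fin m))) : Set (Fin m → ℂ) :=
  {z | {i | z i = 0} ∈ K}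

/-- The `R`-orbit relation on `U(K)`: `w` is obtained from `z` by the coordinatewise action of
an element `y ∈ R = exp(Ker Λ_ℝ)`.  The space of `R`-orbits with the quotient topology is
`Quot (ROrbitRel n m a K)`. -/
def ROrbitRel (n m : ℕ) (a : Fin m → (Fin n → ℝ)) (K : Set (Set (Fin m)))
    (z w : UK m K) : Prop :=
  ∃ y : Fin m → ℝ, ((∀ i, 0 < y i) ∧ ∑ i, Real.log (y i) • a i = 0) ∧
    ∀ i, (w : Fin m → ℂ) i = (y i : ℂ) * (z : Fin m → ℂ) i

namespace ZKAux

variable {n m : ℕ}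

noncomputable def Mm (a : Fin m → Fin n → ℝ) : (Fin m → ℝ) →ₗ[ℝ] (Fin n → ℝ) :=
  Fintype.linearCombination ℝ a

lemma Mm_apply (a : Fin m → Fin n → ℝ) (c : Fin m → ℝ) : Mm a c = ∑ i, c i • a i := rfl

/-- If `c` is supported in `J` and the `a i`, `i ∈ J`, are independent, and the combination
vanishes, then `c = 0`. -/
lemma supp_eq_zero {a : Fin m → Fin n → ℝ} {J : Set (Fin m)}
    (hJ : LinearIndependent ℝ (fun i : J => a i.1)) {c : Fin m → ℝ}
    (hc : ∀ i ∉ J, c i = 0) (h : ∑ i, c i • a i = 0) : c = 0 := by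
  have h2 : ∑ i ∈ Finset.univ.filter (· ∈ J), c i • a i = 0 := by
    rw [Finset.sum_filter_of_ne (fun i _ hi => by
      by_contra hmem
      exact hi (by rw [hc i hmem, zero_smul]))]
    exact h
  have h3 : ∑ i : J, c i.1 • a i.1 = 0 := by
    rw [← h2, Finset.sum_subtype (Finset.univ.filter (· ∈ J)) (p := (· ∈ J)) (by simp)
      (fun i => c i • a i)]
  have := Fintype.linearIndependent_iff.1 hJ (fun i : J => c i.1) h3
  funext i
  by_cases hi : i ∈ J
  · exact this ⟨i, hi⟩
  · exact hc i hi

/-- A continuous linear left inverse for the coefficient representation on `J`. -/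
lemma exists_psi (a : Fin m → Fin n → ℝ) (J : Set (Fin m))
    (hJ : LinearIndependent ℝ (fun i : J => a i.1)) :
    ∃ ψ : (Fin n → ℝ) →ₗ[ℝ] (Fin m → ℝ),
      (∀ x, ∀ i ∉ J, ψ x i = 0) ∧
      (∀ c : Fin m → ℝ, (∀ i ∉ J, c i = 0) → ψ (∑ i, c i • a i) = c) := by
  set V : Submodule ℝ (Fin m → ℝ) := {
    carrier := {c | ∀ i ∉ J, c i = 0}
    add_mem' := fun hc hd i hi => by simp [hc i hi, hd i hi]
    zero_mem' := fun i _ => rfl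
    smul_mem' := fun r c hc i hi => by simp [hc i hi] }
  have hVmem : ∀ c : Fin m → ℝ, c ∈ V ↔ ∀ i ∉ J, c i = 0 := fun c => Iff.rfl
  set f : V →ₗ[ℝ] (Fin n → ℝ) := (Mm a).comp V.subtype
  have hker : LinearMap.ker f = ⊥ := by
    rw [LinearMap.ker_eq_bot']
    intro c hc
    have : (c : Fin m → ℝ) = 0 := supp_eq_zero hJ c.2 hc
    exact Subtype.ext this
  obtain ⟨g, hg⟩ := f.exists_leftInverse_of_injective hker
  refine ⟨V.subtype.comp g, fun x i hi => (g x).2 i hi, fun c hc => ?_⟩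
  have : f ⟨c, hc⟩ = ∑ i, c i • a i := rfl
  rw [← this]
  have := LinearMap.congr_fun hg ⟨c, hc⟩
  simpa using congrArg Subtype.val this



/-- decomposition predicate -/
def IsDecomp (a : Fin m → Fin n → ℝ) (K : Set (Set (Fin m))) (I : Set (Fin m))
    (x : Fin n → ℝ) (c : Fin m → ℝ) : Prop :=
  (∀ i ∉ I, 0 ≤ c i) ∧ (I ∪ {i | c i ≠ 0}) ∈ K ∧ x = ∑ i, c i • a i

section
variable {a : Fin m → Fin n → ℝ} {K : Set (Set (Fin m))}

lemma cone_closed (J : Set (Fin m)) (hJ : LinearIndependent ℝ (fun i : J => a i.1)) :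
    IsClosed (cone a J) := by
  obtain ⟨ψ, hψ0, hψ⟩ := exists_psi a J hJ
  have hcone : cone a J = {x | (∑ i, ψ x i • a i) = x} ∩ ⋂ i, {x | 0 ≤ ψ x i} := by
    ext x
    constructor
    · rintro ⟨μ, hμ0, hμsupp, rfl⟩
      have : ψ (∑ i, μ i • a i) = μ := hψ μ hμsupp
      refine ⟨by simp only [Set.mem_setOf_eq, this], Set.mem_iInter.2 fun i => by rw [Set.mem_setOf_eq, this]; exact hμ0 i⟩
    · rintro ⟨h1, h2⟩
      exact ⟨ψ x, fun i => Set.mem_iInter.1 h2 i, fun i hi => hψ0 x i hi, h1.symm⟩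
  rw [hcone]
  have hψc : Continuous ψ := LinearMap.continuous_of_finiteDimensional ψ
  refine IsClosed.inter (isClosed_eq ?_ continuous_id) (isClosed_iInter fun i => ?_)
  · exact ((Mm a).continuous_of_finiteDimensional).comp hψc
  · exact isClosed_le continuous_const ((continuous_apply i).comp hψc)

lemma bb_not_mem_bad
    (hInd : ∀ I ∈ K, LinearIndependent ℝ (fun i : I => a i.1))
    (hInter : ∀ I ∈ K, ∀ J ∈ K, cone a I ∩ cone a J = cone a (I ∩ J))
    (I : Set (Fin m)) (hI : I ∈ K) (J : Set (Fin m)) (hJ : J ∈ K)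
    (hIJ : ¬ I ⊆ J) : (∑ i, (if i ∈ I then (1:ℝ) else 0) • a i) ∉ cone a J := by
  intro hmem
  set bb := ∑ i, (if i ∈ I then (1:ℝ) else 0) • a i with hbb
  have hbI : bb ∈ cone a I :=
    ⟨fun i => if i ∈ I then 1 else 0, fun i => by positivity, fun i hi => if_neg hi, rfl⟩
  have hmem2 : bb ∈ cone a (I ∩ J) := by rw [← hInter I hI J hJ]; exact ⟨hbI, hmem⟩
  obtain ⟨ν, hν0, hνsupp, hνsum⟩ := hmem2
  obtain ⟨i0, hi0I, hi0J⟩ := Set.not_subset.1 hIJ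
  have hdiff : (fun i => (if i ∈ I then (1:ℝ) else 0) - ν i) = 0 := by
    apply supp_eq_zero (hInd I hI)
    · intro i hi
      rw [hνsupp i (fun h => hi h.1), if_neg hi, sub_zero]
    · rw [Finset.sum_congr rfl (fun i _ => sub_smul _ _ _), Finset.sum_sub_distrib,
        ← hbb, ← hνsum, sub_self]
  have h1 : (1:ℝ) - ν i0 = 0 := by simpa [hi0I] using congrFun hdiff i0
  have h2 : ν i0 = 0 := hνsupp i0 (fun h => hi0J h.2)
  rw [h2, sub_zero] at h1
  exact one_ne_zero h1

lemma decomp_exists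
    (hKdown : ∀ I ∈ K, ∀ J ⊆ I, J ∈ K)
    (hInd : ∀ I ∈ K, LinearIndependent ℝ (fun i : I => a i.1))
    (hInter : ∀ I ∈ K, ∀ J ∈ K, cone a I ∩ cone a J = cone a (I ∩ J))
    (hCover : (⋃ I ∈ K, cone a I) = Set.univ)
    (I : Set (Fin m)) (hI : I ∈ K) (x : Fin n → ℝ) : ∃ c, IsDecomp a K I x c := by
  classical
  set bb := ∑ i, (if i ∈ I then (1:ℝ) else 0) • a i with hbb
  set s : Set (Set (Fin m)) := {J | J ∈ K ∧ ¬ I ⊆ J} with hs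
  set B := ⋃ J ∈ s, cone a J with hB
  have hBclosed : IsClosed B :=
    Set.Finite.isClosed_biUnion (Set.toFinite s) (fun J hJ => cone_closed J (hInd J hJ.1))
  have hbbB : bb ∈ Bᶜ := by
    intro hmem
    rw [hB, Set.mem_iUnion₂] at hmem
    obtain ⟨J, hJs, hmem⟩ := hmem
    exact bb_not_mem_bad hInd hInter I hI J hJs.1 hJs.2 hmem
  obtain ⟨t, ht0, htB⟩ : ∃ t : ℝ, 0 < t ∧ bb + t • x ∈ Bᶜ := by
    have hcont : Filter.Tendsto (fun t : ℝ => bb + t • x) (nhdsWithin 0 (Set.Ioi 0)) (nhds bb) := by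
      have hc : Continuous fun t : ℝ => bb + t • x := by continuity
      simpa using (hc.tendsto 0).mono_left nhdsWithin_le_nhds
    have h1 : ∀ᶠ t in nhdsWithin (0:ℝ) (Set.Ioi 0), bb + t • x ∈ Bᶜ :=
      hcont.eventually (hBclosed.isOpen_compl.eventually_mem hbbB)
    have h2 : ∀ᶠ t in nhdsWithin (0:ℝ) (Set.Ioi 0), t ∈ Set.Ioi (0:ℝ) := self_mem_nhdsWithin
    obtain ⟨t, ht1, ht2⟩ := (h2.and h1).exists
    exact ⟨t, ht1, ht2⟩
  have hz : bb + t • x ∈ ⋃ J ∈ K, cone a J := hCover ▸ Set.mem_univ _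
  rw [Set.mem_iUnion₂] at hz
  obtain ⟨J, hJK, hzJ⟩ := hz
  have hIJ : I ⊆ J := by
    by_contra hIJ
    exact htB (Set.mem_iUnion₂.2 ⟨J, ⟨hJK, hIJ⟩, hzJ⟩)
  obtain ⟨μ, hμ0, hμsupp, hμsum⟩ := hzJ
  refine ⟨fun i => t⁻¹ * μ i - (if i ∈ I then t⁻¹ else 0), ?_, ?_, ?_⟩
  · intro i hi
    dsimp only
    rw [if_neg hi, sub_zero]
    exact mul_nonneg (by positivity) (hμ0 i)
  · apply hKdown J hJK
    intro i hi
    rcases hi with hi | hi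
    · exact hIJ hi
    · by_contra hiJ
      apply hi
      simp only [Set.mem_setOf_eq, not_not]
      rw [hμsupp i hiJ, if_neg (fun h => hiJ (hIJ h)), mul_zero, sub_zero]
  · dsimp only
    have e1 : ∑ i, (t⁻¹ * μ i - (if i ∈ I then t⁻¹ else 0)) • a i
        = t⁻¹ • (∑ i, μ i • a i) - t⁻¹ • bb := by
      rw [Finset.smul_sum, Finset.smul_sum, ← Finset.sum_sub_distrib]
      refine Finset.sum_congr rfl fun i _ => ?_
      rw [sub_smul, smul_smul]
      congr 1
      by_cases hi : i ∈ I <;> simp [hi, smul_smul]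
    rw [e1, ← hμsum, smul_add, smul_smul, inv_mul_cancel₀ ht0.ne', one_smul,
      add_sub_cancel_left]

lemma decomp_unique
    (hInd : ∀ I ∈ K, LinearIndependent ℝ (fun i : I => a i.1))
    (hInter : ∀ I ∈ K, ∀ J ∈ K, cone a I ∩ cone a J = cone a (I ∩ J))
    (I : Set (Fin m)) (x : Fin n → ℝ) {c c' : Fin m → ℝ}
    (h : IsDecomp a K I x c) (h' : IsDecomp a K I x c') : c = c' := by
  classical
  obtain ⟨hc0, hcK, hcsum⟩ := h
  obtain ⟨hc0', hcK', hcsum'⟩ := h'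
  set lam := 1 + ∑ i, (|c i| + |c' i|) with hlam
  have hsumnn : ∀ i : Fin m, |c i| + |c' i| ≤ ∑ j, (|c j| + |c' j|) := fun i =>
    Finset.single_le_sum (f := fun j => |c j| + |c' j|)
      (fun j _ => by positivity) (Finset.mem_univ i)
  have hpos : ∀ i, 0 < c i + lam := fun i => by
    have h1 := hsumnn i
    have h2 := abs_nonneg (c' i)
    have h3 := neg_abs_le (c i)
    simp only [hlam]
    linarith
  have hpos' : ∀ i, 0 < c' i + lam := fun i => by
    have h1 := hsumnn i
    have h2 := abs_nonneg (c i)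
    have h3 := neg_abs_le (c' i)
    simp only [hlam]
    linarith
  set bb := ∑ i, (if i ∈ I then (1:ℝ) else 0) • a i with hbb
  set d : Fin m → ℝ := fun i => c i + (if i ∈ I then lam else 0) with hd
  set d' : Fin m → ℝ := fun i => c' i + (if i ∈ I then lam else 0) with hd'
  have hsum_gen : ∀ e : Fin m → ℝ, ∑ i, (e i + (if i ∈ I then lam else 0)) • a i
      = (∑ i, e i • a i) + lam • bb := by
    intro e
    rw [hbb, Finset.smul_sum, ← Finset.sum_add_distrib]
    refine Finset.sum_congr rfl fun i _ => ?_
    rw [add_smul]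
    congr 1
    by_cases hi : i ∈ I <;> simp [hi, smul_smul]
  have hdcone : x + lam • bb ∈ cone a (I ∪ {i | c i ≠ 0}) := by
    refine ⟨d, fun i => ?_, fun i hi => ?_, ?_⟩
    · by_cases hi : i ∈ I
      · simp only [hd, if_pos hi]
        exact (hpos i).le
      · simp only [hd, if_neg hi, add_zero]
        exact hc0 i hi
    · have hiI : i ∉ I := fun h => hi (Or.inl h)
      have hic : c i = 0 := by
        by_contra hne
        exact hi (Or.inr hne)
      simp [hd, hic, if_neg hiI]
    · rw [hd]
      rw [hsum_gen c, ← hcsum]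
  have hdcone' : x + lam • bb ∈ cone a (I ∪ {i | c' i ≠ 0}) := by
    refine ⟨d', fun i => ?_, fun i hi => ?_, ?_⟩
    · by_cases hi : i ∈ I
      · simp only [hd', if_pos hi]
        exact (hpos' i).le
      · simp only [hd', if_neg hi, add_zero]
        exact hc0' i hi
    · have hiI : i ∉ I := fun h => hi (Or.inl h)
      have hic : c' i = 0 := by
        by_contra hne
        exact hi (Or.inr hne)
      simp [hd', hic, if_neg hiI]
    · rw [hd']
      rw [hsum_gen c', ← hcsum']
  have hmix : x + lam • bb ∈ cone a ((I ∪ {i | c i ≠ 0}) ∩ (I ∪ {i | c' i ≠ 0})) := by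
    rw [← hInter _ hcK _ hcK']
    exact ⟨hdcone, hdcone'⟩
  obtain ⟨μ, hμ0, hμsupp, hμsum⟩ := hmix
  have key : ∀ (J : Set (Fin m)), J ∈ K → ∀ e : Fin m → ℝ, (∀ i ∉ J, e i = 0) →
      (∑ i, e i • a i = x + lam • bb) → (∀ i ∉ J, μ i = 0) → e = μ := by
    intro J hJ e hesupp hesum hμsupp2
    have hdiff : (fun i => e i - μ i) = 0 := by
      apply supp_eq_zero (hInd J hJ)
      · intro i hi
        rw [hesupp i hi, hμsupp2 i hi, sub_zero]
      · rw [Finset.sum_congr rfl (fun i _ => sub_smul _ _ _), Finset.sum_sub_distrib,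
          hesum, ← hμsum, sub_self]
    funext i
    have := congrFun hdiff i
    simp only [Pi.zero_apply] at this
    linarith
  have hde : d = μ := by
    refine key _ hcK d ?_ ?_ ?_
    · intro i hi
      have hiI : i ∉ I := fun h => hi (Or.inl h)
      have hic : c i = 0 := by
        by_contra hne
        exact hi (Or.inr hne)
      simp [hd, hic, if_neg hiI]
    · rw [hd, hsum_gen c, ← hcsum]
    · intro i hi
      exact hμsupp i (fun h => hi h.1)
  have hde' : d' = μ := by
    refine key _ hcK' d' ?_ ?_ ?_
    · intro i hi
      have hiI : i ∉ I := fun h => hi (Or.inl h)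
      have hic : c' i = 0 := by
        by_contra hne
        exact hi (Or.inr hne)
      simp [hd', hic, if_neg hiI]
    · rw [hd', hsum_gen c', ← hcsum']
    · intro i hi
      exact hμsupp i (fun h => hi h.2)
  funext i
  have := congrFun (hde.trans hde'.symm) i
  simp only [hd, hd'] at this
  linarith [this]

noncomputable def Dfun (a : Fin m → Fin n → ℝ) (K : Set (Set (Fin m))) (I : Set (Fin m))
    (x : Fin n → ℝ) : Fin m → ℝ :=
  if h : ∃ c, IsDecomp a K I x c then Classical.choose h else 0

lemma Dfun_eq
    (hInd : ∀ I ∈ K, LinearIndependent ℝ (fun i : I => a i.1))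
    (hInter : ∀ I ∈ K, ∀ J ∈ K, cone a I ∩ cone a J = cone a (I ∩ J))
    (I : Set (Fin m)) {x : Fin n → ℝ} {c : Fin m → ℝ}
    (hc : IsDecomp a K I x c) : Dfun a K I x = c := by
  have hex : ∃ c, IsDecomp a K I x c := ⟨c, hc⟩
  rw [Dfun, dif_pos hex]
  exact decomp_unique hInd hInter I x (Classical.choose_spec hex) hc

lemma Dfun_spec
    (hKdown : ∀ I ∈ K, ∀ J ⊆ I, J ∈ K)
    (hInd : ∀ I ∈ K, LinearIndependent ℝ (fun i : I => a i.1))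
    (hInter : ∀ I ∈ K, ∀ J ∈ K, cone a I ∩ cone a J = cone a (I ∩ J))
    (hCover : (⋃ I ∈ K, cone a I) = Set.univ)
    (I : Set (Fin m)) (hI : I ∈ K) (x : Fin n → ℝ) : IsDecomp a K I x (Dfun a K I x) := by
  have hex : ∃ c, IsDecomp a K I x c := decomp_exists hKdown hInd hInter hCover I hI x
  rw [Dfun, dif_pos hex]
  exact Classical.choose_spec hex

/-- the auxiliary "partial cone" sets -/
def CJ (a : Fin m → Fin n → ℝ) (I J : Set (Fin m)) : Set (Fin n → ℝ) :=
  {x | ∃ c : Fin m → ℝ, (∀ i ∉ I, 0 ≤ c i) ∧ (∀ i ∉ J, c i = 0) ∧ x = ∑ i, c i • a i}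

lemma Dfun_continuous
    (hKdown : ∀ I ∈ K, ∀ J ⊆ I, J ∈ K)
    (hInd : ∀ I ∈ K, LinearIndependent ℝ (fun i : I => a i.1))
    (hInter : ∀ I ∈ K, ∀ J ∈ K, cone a I ∩ cone a J = cone a (I ∩ J))
    (hCover : (⋃ I ∈ K, cone a I) = Set.univ)
    (I : Set (Fin m)) (hI : I ∈ K) : Continuous (Dfun a K I) := by
  classical
  have hψex : ∀ J : Set (Fin m), J ∈ K →
      ∃ ψ : (Fin n → ℝ) →ₗ[ℝ] (Fin m → ℝ),
        (∀ x, ∀ i ∉ J, ψ x i = 0) ∧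
        (∀ c : Fin m → ℝ, (∀ i ∉ J, c i = 0) → ψ (∑ i, c i • a i) = c) :=
    fun J hJ => exists_psi a J (hInd J hJ)
  choose ψ hψ0 hψspec using hψex
  -- formula on CJ
  have hformula : ∀ J (hJ : J ∈ K), I ⊆ J → ∀ x ∈ CJ a I J, Dfun a K I x = ψ J hJ x := by
    intro J hJ hIJ x hx
    obtain ⟨c, hc0, hcsupp, rfl⟩ := hx
    have hcK : (I ∪ {i | c i ≠ 0}) ∈ K := by
      apply hKdown J hJ
      intro i hi
      rcases hi with hi | hi
      · exact hIJ hi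
      · by_contra hiJ
        exact hi (hcsupp i hiJ)
    rw [Dfun_eq hInd hInter I ⟨hc0, hcK, rfl⟩, hψspec J hJ c hcsupp]
  -- CJ closed
  have hclosed : ∀ J (hJ : J ∈ K), IsClosed (CJ a I J) := by
    intro J hJ
    have hCJeq : CJ a I J = {x | (∑ i, ψ J hJ x i • a i) = x} ∩
        ⋂ i, {x | i ∉ I → 0 ≤ ψ J hJ x i} := by
      ext x
      constructor
      · rintro ⟨c, hc0, hcsupp, rfl⟩
        have hc : ψ J hJ (∑ i, c i • a i) = c := hψspec J hJ c hcsupp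
        refine ⟨by simp only [Set.mem_setOf_eq, hc], Set.mem_iInter.2 fun i => ?_⟩
        simp only [Set.mem_setOf_eq, hc]
        exact fun hi => hc0 i hi
      · rintro ⟨h1, h2⟩
        exact ⟨ψ J hJ x, fun i hi => Set.mem_iInter.1 h2 i hi,
          fun i hi => hψ0 J hJ x i hi, h1.symm⟩
    rw [hCJeq]
    have hψc : Continuous (ψ J hJ) := LinearMap.continuous_of_finiteDimensional _
    refine IsClosed.inter (isClosed_eq ?_ continuous_id) (isClosed_iInter fun i => ?_)
    · exact ((Mm a).continuous_of_finiteDimensional).comp hψc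
    · by_cases hi : i ∈ I
      · simp only [hi, not_true_eq_false, false_implies]
        simp only [Set.setOf_true]
        exact isClosed_univ
      · simp only [hi, not_false_eq_true, true_implies]
        exact isClosed_le continuous_const ((continuous_apply i).comp hψc)
  -- cover
  have hcover2 : ∀ x : Fin n → ℝ, ∃ J, ∃ (hJ : J ∈ K), I ⊆ J ∧ x ∈ CJ a I J := by
    intro x
    obtain ⟨c, hc0, hcK, hcsum⟩ := decomp_exists hKdown hInd hInter hCover I hI x
    refine ⟨I ∪ {i | c i ≠ 0}, hcK, Set.subset_union_left, c, hc0, fun i hi => ?_, hcsum⟩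
    by_contra hne
    exact hi (Or.inr hne)
  rw [continuous_iff_continuousAt]
  intro x₀
  rw [ContinuousAt, Metric.tendsto_nhds]
  intro ε hε
  have hev1 : ∀ᶠ y in nhds x₀, ∀ J : {J : Set (Fin m) // J ∈ K},
      dist (ψ J.1 J.2 y) (ψ J.1 J.2 x₀) < ε := by
    rw [Filter.eventually_all]
    intro J
    have hψc : Continuous (ψ J.1 J.2) := LinearMap.continuous_of_finiteDimensional _
    exact Metric.tendsto_nhds.1 (hψc.tendsto x₀) ε hε
  have hev2 : ∀ᶠ y in nhds x₀, ∀ J : {J : Set (Fin m) // J ∈ K ∧ I ⊆ J ∧ x₀ ∉ CJ a I J},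
      y ∉ CJ a I J.1 := by
    rw [Filter.eventually_all]
    intro J
    exact (hclosed J.1 J.2.1).isOpen_compl.eventually_mem J.2.2.2
  filter_upwards [hev1, hev2] with y hy1 hy2
  obtain ⟨J, hJ, hIJ, hyJ⟩ := hcover2 y
  have hx₀J : x₀ ∈ CJ a I J := by
    by_contra hx₀J
    exact hy2 ⟨J, hJ, hIJ, hx₀J⟩ hyJ
  rw [hformula J hJ hIJ y hyJ, hformula J hJ hIJ x₀ hx₀J]
  exact hy1 ⟨J, hJ⟩

noncomputable def uvec (z : Fin m → ℂ) : Fin m → ℝ :=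
  fun i => if z i = 0 then 0 else -Real.log ‖z i‖

def Iz (z : Fin m → ℂ) : Set (Fin m) := {i | z i = 0}

noncomputable def xvec (a : Fin m → Fin n → ℝ) (z : Fin m → ℂ) : Fin n → ℝ :=
  ∑ i, uvec z i • a i

noncomputable def retr (a : Fin m → Fin n → ℝ) (K : Set (Set (Fin m))) (z : Fin m → ℂ) :
    Fin m → ℂ :=
  fun i => z i * Complex.exp (((uvec z i - Dfun a K (Iz z) (xvec a z) i : ℝ) : ℂ))

lemma retr_norm (a : Fin m → Fin n → ℝ) (K : Set (Set (Fin m))) (z : Fin m → ℂ) (i : Fin m)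
    (hzi : z i ≠ 0) :
    ‖retr a K z i‖ = Real.exp (-(Dfun a K (Iz z) (xvec a z) i)) := by
  rw [retr, norm_mul, Complex.norm_exp]
  simp only [Complex.ofReal_re, uvec, if_neg hzi]
  rw [← Real.exp_log (norm_pos_iff.2 hzi), ← Real.exp_add]
  congr 1
  rw [Real.log_exp]
  ring

lemma retr_zero (a : Fin m → Fin n → ℝ) (K : Set (Set (Fin m))) (z : Fin m → ℂ) (i : Fin m)
    (hzi : z i = 0) : retr a K z i = 0 := by
  rw [retr, hzi, zero_mul]

section
variable {a : Fin m → Fin n → ℝ} {K : Set (Set (Fin m))}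

lemma ZK_subset_UK (hKdown : ∀ I ∈ K, ∀ J ⊆ I, J ∈ K) {z : Fin m → ℂ}
    (hz : z ∈ momentAngleComplex m K) : z ∈ UK m K := by
  apply hKdown _ hz.2
  intro i hi
  simp only [Set.mem_setOf_eq] at hi ⊢
  rw [hi]
  simp

lemma retr_mem_ZK
    (hKdown : ∀ I ∈ K, ∀ J ⊆ I, J ∈ K)
    (hInd : ∀ I ∈ K, LinearIndependent ℝ (fun i : I => a i.1))
    (hInter : ∀ I ∈ K, ∀ J ∈ K, cone a I ∩ cone a J = cone a (I ∩ J))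
    (hCover : (⋃ I ∈ K, cone a I) = Set.univ)
    {z : Fin m → ℂ} (hz : z ∈ UK m K) : retr a K z ∈ momentAngleComplex m K := by
  have hIK : Iz z ∈ K := hz
  obtain ⟨hc0, hcK, hcsum⟩ := Dfun_spec hKdown hInd hInter hCover (Iz z) hIK (xvec a z)
  set c := Dfun a K (Iz z) (xvec a z) with hc
  constructor
  · intro i
    by_cases hzi : z i = 0
    · rw [retr_zero a K z i hzi, norm_zero]; norm_num
    · rw [retr_norm a K z i hzi, ← hc, Real.exp_le_one_iff]
      have := hc0 i hzi
      linarith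
  · have heq : {i | ‖retr a K z i‖ < 1} = Iz z ∪ {i | c i ≠ 0} := by
      ext i
      by_cases hzi : z i = 0
      · simp only [Set.mem_setOf_eq, Set.mem_union, retr_zero a K z i hzi, norm_zero]
        refine ⟨fun _ => Or.inl hzi, fun _ => by norm_num⟩
      · simp only [Set.mem_setOf_eq, Set.mem_union, retr_norm a K z i hzi, ← hc]
        rw [Real.exp_lt_one_iff]
        constructor
        · intro h
          refine Or.inr (fun h0 => ?_)
          rw [h0] at h
          norm_num at h
        · rintro (h | h)
          · exact absurd h hzi
          · have := hc0 i hzi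
            have : 0 < c i := lt_of_le_of_ne this (Ne.symm h)
            linarith
    rw [heq]
    exact hcK

lemma retr_rel
    (hKdown : ∀ I ∈ K, ∀ J ⊆ I, J ∈ K)
    (hInd : ∀ I ∈ K, LinearIndependent ℝ (fun i : I => a i.1))
    (hInter : ∀ I ∈ K, ∀ J ∈ K, cone a I ∩ cone a J = cone a (I ∩ J))
    (hCover : (⋃ I ∈ K, cone a I) = Set.univ)
    {z : Fin m → ℂ} (hz : z ∈ UK m K) :
    ∃ y : Fin m → ℝ, ((∀ i, 0 < y i) ∧ ∑ i, Real.log (y i) • a i = 0) ∧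
      ∀ i, retr a K z i = (y i : ℂ) * z i := by
  have hIK : Iz z ∈ K := hz
  obtain ⟨hc0, hcK, hcsum⟩ := Dfun_spec hKdown hInd hInter hCover (Iz z) hIK (xvec a z)
  set c := Dfun a K (Iz z) (xvec a z) with hc
  refine ⟨fun i => Real.exp (uvec z i - c i), ⟨fun i => Real.exp_pos _, ?_⟩, fun i => ?_⟩
  · have hlog : ∀ i, Real.log (Real.exp (uvec z i - c i)) = uvec z i - c i :=
      fun i => Real.log_exp _
    rw [Finset.sum_congr rfl (fun i _ => by rw [hlog i, sub_smul]), Finset.sum_sub_distrib]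
    rw [← xvec, ← hcsum, sub_self]
  · rw [retr, ← hc, Complex.ofReal_exp, mul_comm]

lemma unique_in_ZK
    (hKdown : ∀ I ∈ K, ∀ J ⊆ I, J ∈ K)
    (hInd : ∀ I ∈ K, LinearIndependent ℝ (fun i : I => a i.1))
    (hInter : ∀ I ∈ K, ∀ J ∈ K, cone a I ∩ cone a J = cone a (I ∩ J))
    {w w' : Fin m → ℂ} (hw : w ∈ momentAngleComplex m K) (hw' : w' ∈ momentAngleComplex m K)
    {t : Fin m → ℝ} (ht0 : ∀ i, 0 < t i) (htker : ∑ i, Real.log (t i) • a i = 0)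
    (hrel : ∀ i, w' i = (t i : ℂ) * w i) : w' = w := by
  classical
  set I : Set (Fin m) := {i | w i = 0} with hI
  have hzero : ∀ i, w' i = 0 ↔ w i = 0 := by
    intro i
    rw [hrel i]
    simp only [mul_eq_zero, Complex.ofReal_eq_zero]
    exact ⟨fun h => h.resolve_left (ne_of_gt (ht0 i)), fun h => Or.inr h⟩
  have hnorm' : ∀ i, ‖w' i‖ = t i * ‖w i‖ := by
    intro i
    rw [hrel i, norm_mul, Complex.norm_real, Real.norm_eq_abs, abs_of_pos (ht0 i)]
  have hIK : I ∈ K := by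
    apply hKdown _ hw.2
    intro i hi
    simp only [hI, Set.mem_setOf_eq] at hi ⊢
    rw [hi, norm_zero]
    norm_num
  set p : Fin m → ℝ := fun i => if w i = 0 then 0 else -Real.log ‖w i‖ with hp
  set q : Fin m → ℝ := fun i => if w i = 0 then -Real.log (t i) else -Real.log ‖w' i‖ with hq
  have hdecp : IsDecomp a K I (∑ i, p i • a i) p := by
    refine ⟨fun i hi => ?_, ?_, rfl⟩
    · simp only [hI, Set.mem_setOf_eq] at hi
      simp only [hp, if_neg hi, Left.nonneg_neg_iff]
      exact Real.log_nonpos (norm_nonneg _) (hw.1 i)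
    · apply hKdown _ hw.2
      intro i hi
      rcases hi with hi | hi
      · simp only [hI, Set.mem_setOf_eq] at hi
        simp only [Set.mem_setOf_eq, hi, norm_zero]
        norm_num
      · simp only [Set.mem_setOf_eq, hp] at hi
        by_cases hwi : w i = 0
        · simp only [Set.mem_setOf_eq, hwi, norm_zero]; norm_num
        · simp only [if_neg hwi, neg_ne_zero] at hi
          simp only [Set.mem_setOf_eq]
          rcases lt_or_eq_of_le (hw.1 i) with h | h
          · exact h
          · exact absurd (by rw [h]; exact Real.log_one) hi
  have hqp : ∀ i, q i = p i - Real.log (t i) := by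
    intro i
    by_cases hwi : w i = 0
    · simp [hq, hp, hwi]
    · have hwn : (0:ℝ) < ‖w i‖ := norm_pos_iff.2 hwi
      simp only [hq, hp, if_neg hwi]
      rw [hnorm' i, Real.log_mul (ne_of_gt (ht0 i)) (ne_of_gt hwn)]
      ring
  have hdecq : IsDecomp a K I (∑ i, p i • a i) q := by
    refine ⟨fun i hi => ?_, ?_, ?_⟩
    · simp only [hI, Set.mem_setOf_eq] at hi
      simp only [hq, if_neg hi, Left.nonneg_neg_iff]
      exact Real.log_nonpos (norm_nonneg _) (hw'.1 i)
    · apply hKdown _ hw'.2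
      intro i hi
      rcases hi with hi | hi
      · simp only [hI, Set.mem_setOf_eq] at hi
        simp only [Set.mem_setOf_eq, (hzero i).2 hi, norm_zero]
        norm_num
      · simp only [Set.mem_setOf_eq, hq] at hi
        by_cases hwi : w i = 0
        · simp only [Set.mem_setOf_eq, (hzero i).2 hwi, norm_zero]; norm_num
        · have hwi' : w' i ≠ 0 := fun h => hwi ((hzero i).1 h)
          simp only [if_neg hwi, neg_ne_zero] at hi
          simp only [Set.mem_setOf_eq]
          rcases lt_or_eq_of_le (hw'.1 i) with h | h
          · exact h
          · exact absurd (by rw [h]; exact Real.log_one) hi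
    · have hs : ∑ i, q i • a i = (∑ i, p i • a i) - ∑ i, Real.log (t i) • a i := by
        rw [← Finset.sum_sub_distrib]
        exact Finset.sum_congr rfl fun i _ => by rw [hqp i, sub_smul]
      rw [hs, htker, sub_zero]
  have hpq : p = q := decomp_unique hInd hInter I _ hdecp hdecq
  funext i
  by_cases hwi : w i = 0
  · rw [(hzero i).2 hwi, hwi]
  · have h1 : p i = q i := congrFun hpq i
    simp only [hp, hq, if_neg hwi] at h1
    have hwn : (0:ℝ) < ‖w i‖ := norm_pos_iff.2 hwi
    have hwn' : (0:ℝ) < ‖w' i‖ := by rw [hnorm' i]; exact mul_pos (ht0 i) hwn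
    have h2 : ‖w i‖ = ‖w' i‖ := by
      have := Real.log_injOn_pos (Set.mem_Ioi.2 hwn) (Set.mem_Ioi.2 hwn')
      exact this (by linarith)
    have ht1 : t i = 1 := by
      have h3 := hnorm' i
      rw [← h2] at h3
      have h4 : (1:ℝ) * ‖w i‖ = t i * ‖w i‖ := by rw [one_mul]; exact h3
      exact (mul_right_cancel₀ (ne_of_gt hwn) h4).symm
    rw [hrel i, ht1]
    simp

lemma retr_continuous
    (hKdown : ∀ I ∈ K, ∀ J ⊆ I, J ∈ K)
    (hInd : ∀ I ∈ K, LinearIndependent ℝ (fun i : I => a i.1))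
    (hInter : ∀ I ∈ K, ∀ J ∈ K, cone a I ∩ cone a J = cone a (I ∩ J))
    (hCover : (⋃ I ∈ K, cone a I) = Set.univ) :
    Continuous (fun z : (UK m K) => retr a K z.1) := by
  classical
  rw [continuous_iff_continuousAt]
  intro z₀
  set I₀ : Set (Fin m) := Iz z₀.1 with hI₀def
  have hI₀K : I₀ ∈ K := z₀.2
  set xv' : (Fin m → ℂ) → (Fin n → ℝ) :=
    fun z => ∑ i, (if i ∈ I₀ then 0 else -Real.log ‖z i‖) • a i with hxv'
  set cfun : (Fin m → ℂ) → (Fin m → ℝ) := fun z => Dfun a K I₀ (xv' z) with hcfun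
  set N' : Set (Fin m → ℂ) := {z | ∀ i ∉ I₀, z i ≠ 0} with hN'
  have hN'open : IsOpen N' := by
    have : N' = ⋂ i, {z : Fin m → ℂ | i ∉ I₀ → z i ≠ 0} := by
      ext z; simp [hN']
    rw [this]
    refine isOpen_iInter_of_finite fun i => ?_
    by_cases hi : i ∈ I₀
    · simp only [hi, not_true_eq_false, false_implies, Set.setOf_true]
      exact isOpen_univ
    · simp only [hi, not_false_eq_true, true_implies]
      exact isOpen_ne.preimage (continuous_apply i)
  have hxv'cont : ContinuousOn xv' N' := by
    apply continuousOn_finset_sum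
    intro i _
    by_cases hi : i ∈ I₀
    · simp only [hi, if_true]
      exact continuousOn_const.fun_smul continuousOn_const
    · simp only [hi, if_false]
      refine ContinuousOn.fun_smul ?_ continuousOn_const
      intro z hz
      have hzi : z i ≠ 0 := hz i hi
      have h1 : ContinuousAt (fun z : Fin m → ℂ => -Real.log ‖z i‖) z := by
        have h2 : ContinuousAt Real.log ‖z i‖ := Real.continuousAt_log (by simpa using hzi)
        have hf : ContinuousAt (fun z : Fin m → ℂ => ‖z i‖) z :=
          ((continuous_apply i).norm).continuousAt
        exact (ContinuousAt.comp (x := z) h2 hf).neg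
      exact h1.continuousWithinAt
  have hDcont : Continuous (Dfun a K I₀) := Dfun_continuous hKdown hInd hInter hCover I₀ hI₀K
  have hcfuncont : ContinuousOn cfun N' := (hDcont.comp_continuousOn hxv'cont)
  have hcfunicont : ∀ i, ContinuousOn (fun z => cfun z i) N' :=
    fun i => (continuous_apply i).comp_continuousOn hcfuncont
  -- the neighborhood
  set N : Set (Fin m → ℂ) := N' ∩ ⋂ i, (if i ∈ I₀ then
      N' ∩ (fun z => ‖z i‖ * Real.exp (-(cfun z i))) ⁻¹' (Set.Iio 1) else Set.univ) with hN
  have hNsubN' : N ⊆ N' := Set.inter_subset_left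
  have hNopen : IsOpen N := by
    refine hN'open.inter (isOpen_iInter_of_finite fun i => ?_)
    by_cases hi : i ∈ I₀
    · simp only [hi, if_true]
      refine ContinuousOn.isOpen_inter_preimage ?_ hN'open isOpen_Iio
      exact (((continuous_apply (A := fun _ : Fin m => ℂ) i).norm).continuousOn).mul
        (Real.continuous_exp.comp_continuousOn ((hcfunicont i).neg))
    · simp only [hi, if_false]; exact isOpen_univ
  have hz₀N' : z₀.1 ∈ N' := fun i hi => fun h => hi h
  have hz₀N : z₀.1 ∈ N := by
    refine ⟨hz₀N', Set.mem_iInter.2 fun i => ?_⟩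
    by_cases hi : i ∈ I₀
    · simp only [hi, if_true]
      refine ⟨hz₀N', ?_⟩
      have : z₀.1 i = 0 := hi
      simp only [Set.mem_preimage, Set.mem_Iio, this, norm_zero, zero_mul]
      norm_num
    · simp only [hi, if_false]
      exact Set.mem_univ _
  -- the local formula
  set rloc : (Fin m → ℂ) → (Fin m → ℂ) := fun z => fun i =>
    z i * Complex.exp ((((if i ∈ I₀ then 0 else -Real.log ‖z i‖) - cfun z i : ℝ) : ℂ)) with hrloc
  have hkey : ∀ z : Fin m → ℂ, z ∈ UK m K → z ∈ N → retr a K z = rloc z := by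
    intro z hzU hzN
    have hzN' : z ∈ N' := hNsubN' hzN
    obtain ⟨hc'0, hc'K, hc'sum⟩ := Dfun_spec hKdown hInd hInter hCover I₀ hI₀K (xv' z)
    have hsmall : ∀ i ∈ I₀, ‖z i‖ * Real.exp (-(cfun z i)) < 1 := by
      intro i hi
      have h2 := Set.mem_iInter.1 hzN.2 i
      rw [if_pos hi] at h2
      exact h2.2
    set chat : Fin m → ℝ := fun i => cfun z i + (if i ∈ I₀ then uvec z i else 0) with hchat
    have hIzsub : Iz z ⊆ I₀ := by
      intro i hi
      by_contra hiI₀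
      exact hzN' i hiI₀ hi
    have hdec : IsDecomp a K (Iz z) (xvec a z) chat := by
      refine ⟨fun i hi => ?_, ?_, ?_⟩
      · have hzi : z i ≠ 0 := hi
        by_cases hiI₀ : i ∈ I₀
        · simp only [hchat, if_pos hiI₀, uvec, if_neg hzi]
          have h3 := hsmall i hiI₀
          have hzn : (0:ℝ) < ‖z i‖ := norm_pos_iff.2 hzi
          have h4 : Real.log (‖z i‖ * Real.exp (-(cfun z i))) < Real.log 1 := by
            apply Real.log_lt_log (by positivity) h3
          rw [Real.log_one, Real.log_mul (ne_of_gt hzn) (Real.exp_ne_zero _),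
            Real.log_exp] at h4
          linarith
        · simp only [hchat, if_neg hiI₀, add_zero]
          exact hc'0 i hiI₀
      · apply hKdown _ hc'K
        intro i hi
        rcases hi with hi | hi
        · exact Or.inl (hIzsub hi)
        · simp only [Set.mem_setOf_eq, hchat] at hi
          by_cases hiI₀ : i ∈ I₀
          · exact Or.inl hiI₀
          · rw [if_neg hiI₀, add_zero] at hi
            exact Or.inr hi
      · have hterm : ∀ i, uvec z i • a i
            = (if i ∈ I₀ then 0 else -Real.log ‖z i‖) • a i
              + (if i ∈ I₀ then uvec z i else 0) • a i := by
          intro i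
          by_cases hiI₀ : i ∈ I₀
          · simp [hiI₀]
          · have hzi : z i ≠ 0 := hzN' i hiI₀
            simp [hiI₀, uvec, if_neg hzi]
        have : xvec a z = xv' z + ∑ i, (if i ∈ I₀ then uvec z i else 0) • a i := by
          rw [xvec, hxv', ← Finset.sum_add_distrib]
          exact Finset.sum_congr rfl fun i _ => hterm i
        rw [this, hc'sum]
        rw [← Finset.sum_add_distrib]
        exact Finset.sum_congr rfl fun i _ => by rw [hchat]; rw [add_smul]
    have hDeq : Dfun a K (Iz z) (xvec a z) = chat := Dfun_eq hInd hInter (Iz z) hdec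
    funext i
    rw [retr, hDeq, hrloc]
    by_cases hiI₀ : i ∈ I₀
    · simp only [hchat, if_pos hiI₀]
      congr 2
      push_cast
      ring
    · simp only [hchat, if_neg hiI₀, add_zero]
      have hzi : z i ≠ 0 := hzN' i hiI₀
      simp only [uvec, if_neg hzi]
  -- continuity of rloc
  have hrloccont : ContinuousOn rloc N' := by
    rw [continuousOn_pi]
    intro i
    refine ContinuousOn.mul ((continuous_apply i).continuousOn) ?_
    refine Complex.continuous_exp.comp_continuousOn ?_
    refine Complex.continuous_ofReal.comp_continuousOn ?_
    refine ContinuousOn.sub ?_ (hcfunicont i)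
    by_cases hi : i ∈ I₀
    · simp only [hi, if_true]
      exact continuousOn_const
    · simp only [hi, if_false]
      intro z hz
      have hzi : z i ≠ 0 := hz i hi
      have h2 : ContinuousAt Real.log ‖z i‖ := Real.continuousAt_log (by simpa using hzi)
      have hf : ContinuousAt (fun z : Fin m → ℂ => ‖z i‖) z :=
        ((continuous_apply i).norm).continuousAt
      exact ((ContinuousAt.comp (x := z) h2 hf).neg).continuousWithinAt
  -- assemble
  have hvalcont : Continuous (fun z : (UK m K) => (z : Fin m → ℂ)) := continuous_subtype_val
  have hrloc_at : ContinuousAt (fun z : (UK m K) => rloc z.1) z₀ := by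
    have h1 : ContinuousAt rloc z₀.1 :=
      hrloccont.continuousAt (hN'open.mem_nhds hz₀N')
    exact h1.comp hvalcont.continuousAt
  refine hrloc_at.congr ?_
  have hmem : {z : (UK m K) | (z : Fin m → ℂ) ∈ N} ∈ nhds z₀ :=
    (hNopen.preimage hvalcont).mem_nhds hz₀N
  filter_upwards [hmem] with z hz
  exact (hkey z.1 z.2 hz).symm

lemma retr_eq_of_rel
    (hKdown : ∀ I ∈ K, ∀ J ⊆ I, J ∈ K)
    (hInd : ∀ I ∈ K, LinearIndependent ℝ (fun i : I => a i.1))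
    (hInter : ∀ I ∈ K, ∀ J ∈ K, cone a I ∩ cone a J = cone a (I ∩ J))
    (hCover : (⋃ I ∈ K, cone a I) = Set.univ)
    {z w : Fin m → ℂ} (hz : z ∈ UK m K) (hw : w ∈ UK m K)
    {y : Fin m → ℝ} (hy0 : ∀ i, 0 < y i) (hyker : ∑ i, Real.log (y i) • a i = 0)
    (hrel : ∀ i, w i = (y i : ℂ) * z i) : retr a K w = retr a K z := by
  obtain ⟨y1, ⟨hy10, hy1ker⟩, hy1rel⟩ := retr_rel hKdown hInd hInter hCover hz
  obtain ⟨y2, ⟨hy20, hy2ker⟩, hy2rel⟩ := retr_rel hKdown hInd hInter hCover hw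
  refine unique_in_ZK hKdown hInd hInter
    (retr_mem_ZK hKdown hInd hInter hCover hz) (retr_mem_ZK hKdown hInd hInter hCover hw)
    (t := fun i => y2 i * y i / y1 i)
    (fun i => div_pos (mul_pos (hy20 i) (hy0 i)) (hy10 i)) ?_ ?_
  · have hterm : ∀ i, Real.log (y2 i * y i / y1 i) • a i
        = Real.log (y2 i) • a i + Real.log (y i) • a i - Real.log (y1 i) • a i := by
      intro i
      rw [Real.log_div (ne_of_gt (mul_pos (hy20 i) (hy0 i))) (ne_of_gt (hy10 i)),
        Real.log_mul (ne_of_gt (hy20 i)) (ne_of_gt (hy0 i)), sub_smul, add_smul]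
    rw [Finset.sum_congr rfl (fun i _ => hterm i), Finset.sum_sub_distrib,
      Finset.sum_add_distrib, hy2ker, hyker, hy1ker]
    simp
  · intro i
    rw [hy2rel i, hrel i, hy1rel i]
    have h1 : ((y1 i : ℂ)) ≠ 0 := Complex.ofReal_ne_zero.2 (ne_of_gt (hy10 i))
    push_cast
    field_simp

end

end

end ZKAux

/-- If `(K; a₁, …, a_m)` underlies a complete simplicial fan in ℝⁿ, then the
composition of the inclusion `Z_K ↪ U(K)` with the quotient map `U(K) → U(K)/R` is a
homeomorphism from `Z_K` onto the orbit space `U(K)/R` (with the quotient topology). -/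
theorem ZK_homeomorphic_to_UK_quotient_R (n m : ℕ) (hn : 1 ≤ n) (hm : 1 ≤ m)
    (a : Fin m → (Fin n → ℝ)) (K : Set (Set (Fin m)))
    (hKempty : ∅ ∈ K) (hKdown : ∀ I ∈ K, ∀ J ⊆ I, J ∈ K)
    (hInd : ∀ I ∈ K, LinearIndependent ℝ (fun i : I => a i.1))
    (hInter : ∀ I ∈ K, ∀ J ∈ K, cone a I ∩ cone a J = cone a (I ∩ J))
    (hCover : (⋃ I ∈ K, cone a I) = Set.univ) :
    ∃ e : momentAngleComplex m K ≃ₜ Quot (ROrbitRel n m a K),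
      ∀ (z : momentAngleComplex m K) (h : (z : Fin m → ℂ) ∈ UK m K),
        e z = Quot.mk (ROrbitRel n m a K) ⟨(z : Fin m → ℂ), h⟩ := by
  classical
  have hconst : ∀ z w : UK m K, ROrbitRel n m a K z w →
      (⟨ZKAux.retr a K z.1, ZKAux.retr_mem_ZK hKdown hInd hInter hCover z.2⟩ :
        momentAngleComplex m K)
      = ⟨ZKAux.retr a K w.1, ZKAux.retr_mem_ZK hKdown hInd hInter hCover w.2⟩ := by
    rintro z w ⟨y, ⟨hy0, hyker⟩, hyrel⟩
    exact Subtype.ext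
      (ZKAux.retr_eq_of_rel hKdown hInd hInter hCover z.2 w.2 hy0 hyker hyrel).symm
  refine ⟨⟨⟨fun z => Quot.mk _ ⟨z.1, ZKAux.ZK_subset_UK hKdown z.2⟩,
      Quot.lift (fun z : UK m K =>
        (⟨ZKAux.retr a K z.1, ZKAux.retr_mem_ZK hKdown hInd hInter hCover z.2⟩ :
          momentAngleComplex m K)) hconst,
      fun z => ?_, Quot.ind fun z => ?_⟩, ?_, ?_⟩, fun z h => rfl⟩
  · apply Subtype.ext
    show ZKAux.retr a K z.1 = z.1
    obtain ⟨y, ⟨hy0, hyker⟩, hyrel⟩ :=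
      ZKAux.retr_rel hKdown hInd hInter hCover (ZKAux.ZK_subset_UK hKdown z.2)
    exact ZKAux.unique_in_ZK hKdown hInd hInter z.2
      (ZKAux.retr_mem_ZK hKdown hInd hInter hCover (ZKAux.ZK_subset_UK hKdown z.2))
      hy0 hyker hyrel
  · apply Quot.sound
    obtain ⟨y, ⟨hy0, hyker⟩, hyrel⟩ := ZKAux.retr_rel hKdown hInd hInter hCover z.2
    refine ⟨fun i => (y i)⁻¹, ⟨fun i => inv_pos.2 (hy0 i), ?_⟩, fun i => ?_⟩
    · have hterm : ∀ i : Fin m, Real.log (y i)⁻¹ • a i = -(Real.log (y i) • a i) := fun i => by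
        rw [Real.log_inv, neg_smul]
      rw [Finset.sum_congr rfl (fun i _ => hterm i), Finset.sum_neg_distrib, hyker, neg_zero]
    · show (z : Fin m → ℂ) i = (((y i)⁻¹ : ℝ) : ℂ) * ZKAux.retr a K z.1 i
      rw [hyrel i]
      have h1 : ((y i : ℂ)) ≠ 0 := Complex.ofReal_ne_zero.2 (ne_of_gt (hy0 i))
      push_cast
      field_simp
  · exact continuous_quot_mk.comp (continuous_subtype_val.subtype_mk _)
  · exact continuous_quot_lift hconst
      ((ZKAux.retr_continuous hKdown hInd hInter hCover).subtype_mk _)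
end

section
/- Suppose that for every I ∈ K the vectors {a_i : i ∈ I} are linearly independent, and that m − n = 2ℓ. Then the group C_Ψ acts freely on U(K): if g ∈ C_Ψ, z ∈ U(K) and g_i z_i = z_i for all i = 1,…,m, then g_i = 1 for all i. -/
/-- If for every `I ∈ K` the vectors `{a i : i ∈ I}` are linearly independent
and `m - n = 2ℓ`, then the group `C_Ψ = exp Ψ(ℂ^ℓ)` acts freely on `U(K)`. -/
theorem CPsi_acts_freely_on_UK (n m l : ℕ) (hn : 1 ≤ n) (hl : 1 ≤ l)
    (hml : m = n + 2 * l)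
    (a : Fin m → (Fin n → ℝ)) (K : Set (Set (Fin m)))
    (hKempty : ∅ ∈ K) (hKdown : ∀ I ∈ K, ∀ J ⊆ I, J ∈ K)
    (hInd : ∀ I ∈ K, LinearIndependent ℝ (fun i : I => a i.1))
    (Ψ : (Fin l → ℂ) →ₗ[ℂ] (Fin m → ℂ))
    (hΨinj : Function.Injective fun w : Fin l → ℂ => fun i => (Ψ w i).re)
    (hΨker : ∀ w : Fin l → ℂ, ∑ i, (Ψ w i).re • a i = 0)
    (g : Fin m → ℂ) (hg : ∃ w : Fin l → ℂ, ∀ i, g i = Complex.exp (Ψ w i))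
    (z : Fin m → ℂ) (hz : {i | z i = 0} ∈ K)
    (hfix : ∀ i, g i * z i = z i) :
    ∀ i, g i = 1 := by
  classical
  obtain ⟨w, hw⟩ := hg
  -- For i with z i ≠ 0, g i = 1 hence Re (Ψ w i) = 0
  have hre0 : ∀ i, z i ≠ 0 → (Ψ w i).re = 0 := by
    intro i hzi
    have hgi : g i = 1 := by
      have h := hfix i
      have : g i * z i = 1 * z i := by rw [h, one_mul]
      exact mul_right_cancel₀ hzi this
    have : Complex.exp (Ψ w i) = 1 := by rw [← hw i]; exact hgi
    have habs : Real.exp ((Ψ w i).re) = 1 := by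
      have := congrArg (fun x : ℂ => ‖x‖) this
      simpa [Complex.norm_exp] using this
    rw [show (1:ℝ) = Real.exp 0 by simp] at habs
    exact Real.exp_eq_exp.mp habs
  -- On the set I = {i | z i = 0}, linear independence forces Re = 0 too
  set I : Set (Fin m) := {i | z i = 0} with hI
  have hind := hInd I hz
  have hsum : ∑ i : I, (Ψ w i.1).re • a i.1 = 0 := by
    have h1 : ∑ i : I, (Ψ w i.1).re • a i.1
        = ∑ i ∈ I.toFinset, (Ψ w i).re • a i := by
      rw [← Finset.sum_set_coe (f := fun i => (Ψ w i).re • a i)]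
    have h2 : ∑ i ∈ I.toFinset, (Ψ w i).re • a i = ∑ i, (Ψ w i).re • a i := by
      apply Finset.sum_subset (Finset.subset_univ _)
      intro i _ hi
      have : z i ≠ 0 := by
        simpa [hI, Set.mem_toFinset] using hi
      rw [hre0 i this, zero_smul]
    rw [h1, h2, hΨker w]
  have hreI : ∀ i : I, (Ψ w i.1).re = 0 := by
    have := Fintype.linearIndependent_iff.mp hind (fun i => (Ψ w i.1).re) hsum
    exact this
  have hreAll : ∀ i, (Ψ w i).re = 0 := by
    intro i
    by_cases hzi : z i = 0
    · exact hreI ⟨i, hzi⟩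
    · exact hre0 i hzi
  have hw0 : w = 0 := by
    apply hΨinj
    funext i
    simp [hreAll i, map_zero]
  intro i
  rw [hw i, hw0]
  simp
end

section
/- Suppose (K; a_1,…,a_m) underlies a complete simplicial fan in ℝ^n and m − n = 2ℓ. Then the action of C_Ψ on U(K) is proper: the map C_Ψ × U(K) → U(K) × U(K), (g, z) ↦ (g·z, z), is a proper map, i.e. the preimage of every compact subset of U(K) × U(K) is compact. -/
lemma coeff_zero {n m : ℕ} (a : Fin m → (Fin n → ℝ))
    (I : Set (Fin m)) (hind : LinearIndependent ℝ (fun i : I => a i.1))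
    (c : Fin m → ℝ) (hc : ∀ i ∉ I, c i = 0)
    (hsum : ∑ i, c i • a i = 0) : ∀ i, c i = 0 := by
  classical
  haveI : Fintype ↥I := I.toFinite.fintype
  have h1 : ∑ i ∈ I.toFinset, c i • a i = 0 := by
    rw [← hsum]
    refine Finset.sum_subset (Finset.subset_univ _) ?_
    intro i _ hi
    rw [hc i (by simpa using hi), zero_smul]
  have h2 : ∑ i : I, c i.1 • a i.1 = 0 := by
    rwa [← Finset.sum_set_coe] at h1
  have h3 := Fintype.linearIndependent_iff.mp hind (fun i : I => c i.1) h2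
  intro i
  by_cases hi : i ∈ I
  · exact h3 ⟨i, hi⟩
  · exact hc i hi

lemma key_zero {n m : ℕ} (a : Fin m → (Fin n → ℝ)) (K : Set (Set (Fin m)))
    (hInd : ∀ I ∈ K, LinearIndependent ℝ (fun i : I => a i.1))
    (hInter : ∀ I ∈ K, ∀ J ∈ K, cone a I ∩ cone a J = cone a (I ∩ J))
    {I J : Set (Fin m)} (hI : I ∈ K) (hJ : J ∈ K)
    (r : Fin m → ℝ) (h0 : ∑ i, r i • a i = 0)
    (hrI : ∀ i ∉ I, r i ≤ 0) (hrJ : ∀ i ∉ J, 0 ≤ r i) : r = 0 := by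
  classical
  set rp : Fin m → ℝ := fun i => max (r i) 0 with hrp
  set rm : Fin m → ℝ := fun i => max (-r i) 0 with hrm
  have hsub : ∀ i, r i = rp i - rm i := by
    intro i
    rcases le_total (r i) 0 with h | h
    · simp [hrp, hrm, max_eq_right h, max_eq_left (neg_nonneg.mpr h)]
    · simp [hrp, hrm, max_eq_left h, max_eq_right (neg_nonpos.mpr h)]
  have hx : ∑ i, rp i • a i = ∑ i, rm i • a i := by
    have h' : ∑ i, rp i • a i - ∑ i, rm i • a i = 0 := by
      rw [← Finset.sum_sub_distrib]
      rw [← h0]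
      exact Finset.sum_congr rfl fun i _ => by rw [← sub_smul, ← hsub]
    exact sub_eq_zero.mp h'
  have hxI : (∑ i, rp i • a i) ∈ cone a I :=
    ⟨rp, fun i => le_max_right _ _, fun i hi => max_eq_right (hrI i hi), rfl⟩
  have hxJ : (∑ i, rp i • a i) ∈ cone a J :=
    ⟨rm, fun i => le_max_right _ _,
      fun i hi => max_eq_right (neg_nonpos.mpr (hrJ i hi)), hx⟩
  have hmem : (∑ i, rp i • a i) ∈ cone a (I ∩ J) := by
    rw [← hInter I hI J hJ]; exact ⟨hxI, hxJ⟩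
  obtain ⟨μ, hμ0, hμs, hμx⟩ := hmem
  have h1 : ∀ i, rp i - μ i = 0 := by
    refine coeff_zero a I (hInd I hI) _ (fun i hi => ?_) ?_
    · have hz : rp i = 0 := max_eq_right (hrI i hi)
      rw [hz, hμs i (fun h => hi h.1), sub_zero]
    · have : ∑ i, (rp i - μ i) • a i = ∑ i, rp i • a i - ∑ i, μ i • a i := by
        rw [← Finset.sum_sub_distrib]
        exact Finset.sum_congr rfl fun i _ => by rw [sub_smul]
      rw [this, ← hμx, sub_self]
  have h2 : ∀ i, rm i - μ i = 0 := by
    refine coeff_zero a J (hInd J hJ) _ (fun i hi => ?_) ?_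
    · have hz : rm i = 0 := max_eq_right (neg_nonpos.mpr (hrJ i hi))
      rw [hz, hμs i (fun h => hi h.2), sub_zero]
    · have : ∑ i, (rm i - μ i) • a i = ∑ i, rm i • a i - ∑ i, μ i • a i := by
        rw [← Finset.sum_sub_distrib]
        exact Finset.sum_congr rfl fun i _ => by rw [sub_smul]
      rw [this, ← hx, ← hμx, sub_self]
  funext i
  have hpi : rp i = μ i := by linarith [h1 i]
  have hmi : rm i = μ i := by linarith [h2 i]
  show r i = 0
  rw [hsub i, hpi, hmi, sub_self]

lemma bdd_above_of_eventually (u : ℕ → ℝ) (N : ℕ) (C : ℝ) (h : ∀ k, N ≤ k → u k ≤ C) :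
    ∃ D, ∀ k, u k ≤ D := by
  refine ⟨max C ((Finset.range (N + 1)).sup' ⟨0, by simp⟩ u), fun k => ?_⟩
  rcases le_or_gt N k with hk | hk
  · exact le_max_of_le_left (h k hk)
  · exact le_max_of_le_right (Finset.le_sup' u (by simp [Finset.mem_range]; omega))

lemma bdd_below_of_eventually (u : ℕ → ℝ) (N : ℕ) (C : ℝ) (h : ∀ k, N ≤ k → C ≤ u k) :
    ∃ D, ∀ k, D ≤ u k := by
  refine ⟨min C ((Finset.range (N + 1)).inf' ⟨0, by simp⟩ u), fun k => ?_⟩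
  rcases le_or_gt N k with hk | hk
  · exact min_le_of_left_le (h k hk)
  · exact min_le_of_right_le (Finset.inf'_le u (by simp [Finset.mem_range]; omega))

lemma key_bound {n m : ℕ} (a : Fin m → (Fin n → ℝ)) (K : Set (Set (Fin m)))
    (hInd : ∀ I ∈ K, LinearIndependent ℝ (fun i : I => a i.1))
    (hInter : ∀ I ∈ K, ∀ J ∈ K, cone a I ∩ cone a J = cone a (I ∩ J))
    {I J : Set (Fin m)} (hI : I ∈ K) (hJ : J ∈ K)
    (u : ℕ → Fin m → ℝ) (h0 : ∀ k, ∑ i, u k i • a i = 0)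
    (hub : ∀ i ∉ I, ∃ C, ∀ k, u k i ≤ C)
    (hlb : ∀ i ∉ J, ∃ c, ∀ k, c ≤ u k i) :
    ∃ C, ∀ k, ‖u k‖ ≤ C := by
  by_contra hcon
  push_neg at hcon
  choose κ hκ using fun j : ℕ => hcon (j : ℝ)
  set t : ℕ → ℝ := fun j => (1 + ‖u (κ j)‖)⁻¹ with ht
  have hpos : ∀ j, 0 < 1 + ‖u (κ j)‖ := fun j => by positivity
  have htpos : ∀ j, 0 < t j := fun j => inv_pos.mpr (hpos j)
  set v : ℕ → Fin m → ℝ := fun j => t j • u (κ j) with hv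
  have hvnorm : ∀ j, ‖v j‖ = 1 - t j := by
    intro j
    have : ‖v j‖ = t j * ‖u (κ j)‖ := by
      rw [hv]; simp [norm_smul, Real.norm_of_nonneg (htpos j).le]
    rw [this, ht]
    field_simp
    ring
  have hvball : ∀ j, v j ∈ Metric.closedBall (0 : Fin m → ℝ) 1 := by
    intro j
    rw [Metric.mem_closedBall, dist_zero_right, hvnorm j]
    linarith [htpos j]
  obtain ⟨r, -, φ, hφ, hvr⟩ :=
    (isCompact_closedBall (0 : Fin m → ℝ) 1).isSeqCompact hvball
  have htlim : Filter.Tendsto (fun j => t (φ j)) Filter.atTop (nhds 0) := by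
    have hb : ∀ j : ℕ, t (φ j) ≤ 1 / ((j : ℝ) + 1) := by
      intro j
      have h1 : (j : ℝ) + 1 ≤ 1 + ‖u (κ (φ j))‖ := by
        have := hκ (φ j)
        have hj : (j : ℝ) ≤ (φ j : ℝ) := Nat.cast_le.mpr hφ.le_apply
        linarith
      rw [one_div]
      exact inv_anti₀ (by positivity) h1
    refine squeeze_zero (fun j => (htpos (φ j)).le) hb ?_
    exact tendsto_one_div_add_atTop_nhds_zero_nat
  have hrnorm : ‖r‖ = 1 := by
    have h1 : Filter.Tendsto (fun j => ‖v (φ j)‖) Filter.atTop (nhds ‖r‖) :=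
      (continuous_norm.tendsto r).comp hvr
    have h2 : Filter.Tendsto (fun j => ‖v (φ j)‖) Filter.atTop (nhds 1) := by
      have : Filter.Tendsto (fun j => 1 - t (φ j)) Filter.atTop (nhds (1 - 0)) :=
        tendsto_const_nhds.sub htlim
      simpa [hvnorm] using this
    exact tendsto_nhds_unique h1 h2
  have h0r : ∑ i, r i • a i = 0 := by
    have hF : Continuous fun c : Fin m → ℝ => ∑ i, c i • a i :=
      continuous_finset_sum _ fun i _ => (continuous_apply i).smul continuous_const
    have h1 : Filter.Tendsto (fun j => ∑ i, v (φ j) i • a i) Filter.atTop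
        (nhds (∑ i, r i • a i)) := (hF.tendsto r).comp hvr
    have h2 : ∀ j, ∑ i, v (φ j) i • a i = 0 := by
      intro j
      have : ∑ i, v (φ j) i • a i = t (φ j) • ∑ i, u (κ (φ j)) i • a i := by
        rw [Finset.smul_sum]
        exact Finset.sum_congr rfl fun i _ => by rw [hv]; simp [smul_smul]
      rw [this, h0, smul_zero]
    rw [funext h2] at h1
    exact (tendsto_nhds_unique h1 tendsto_const_nhds).symm ▸ rfl
  have hcI : ∀ i ∉ I, r i ≤ 0 := by
    intro i hi
    obtain ⟨C, hC⟩ := hub i hi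
    have hco : Filter.Tendsto (fun j => v (φ j) i) Filter.atTop (nhds (r i)) :=
      (tendsto_pi_nhds.mp hvr) i
    have hbo : Filter.Tendsto (fun j => t (φ j) * C) Filter.atTop (nhds 0) := by
      simpa using htlim.mul_const C
    refine le_of_tendsto_of_tendsto' hco hbo ?_
    intro j
    show t (φ j) * u (κ (φ j)) i ≤ t (φ j) * C
    exact mul_le_mul_of_nonneg_left (hC _) (htpos _).le
  have hcJ : ∀ i ∉ J, 0 ≤ r i := by
    intro i hi
    obtain ⟨C, hC⟩ := hlb i hi
    have hco : Filter.Tendsto (fun j => v (φ j) i) Filter.atTop (nhds (r i)) :=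
      (tendsto_pi_nhds.mp hvr) i
    have hbo : Filter.Tendsto (fun j => t (φ j) * C) Filter.atTop (nhds 0) := by
      simpa using htlim.mul_const C
    refine le_of_tendsto_of_tendsto' hbo hco ?_
    intro j
    show t (φ j) * C ≤ t (φ j) * u (κ (φ j)) i
    exact mul_le_mul_of_nonneg_left (hC _) (htpos _).le
  have := key_zero a K hInd hInter hI hJ r h0r hcI hcJ
  rw [this] at hrnorm
  simp at hrnorm

/-- If `(K; a₁, …, a_m)` underlies a complete simplicial fan in ℝⁿ and
`m - n = 2ℓ`, then the action of `C_Ψ = exp Ψ(ℂ^ℓ)` on `U(K)` is proper: the map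
`C_Ψ × U(K) → U(K) × U(K)`, `(g, z) ↦ (g·z, z)`, has compact preimages of compact sets. -/
theorem CPsi_action_on_UK_is_proper (n m l : ℕ) (hn : 1 ≤ n) (hl : 1 ≤ l)
    (hml : m = n + 2 * l)
    (a : Fin m → (Fin n → ℝ)) (K : Set (Set (Fin m)))
    (hKempty : ∅ ∈ K) (hKdown : ∀ I ∈ K, ∀ J ⊆ I, J ∈ K)
    (hInd : ∀ I ∈ K, LinearIndependent ℝ (fun i : I => a i.1))
    (hInter : ∀ I ∈ K, ∀ J ∈ K, cone a I ∩ cone a J = cone a (I ∩ J))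
    (hCover : (⋃ I ∈ K, cone a I) = Set.univ)
    (Ψ : (Fin l → ℂ) →ₗ[ℂ] (Fin m → ℂ))
    (hΨinj : Function.Injective fun w : Fin l → ℂ => fun i => (Ψ w i).re)
    (hΨker : ∀ w : Fin l → ℂ, ∑ i, (Ψ w i).re • a i = 0) :
    ∀ V : Set ((Fin m → ℂ) × (Fin m → ℂ)),
      V ⊆ {z | {i | z i = 0} ∈ K} ×ˢ {z | {i | z i = 0} ∈ K} →
      IsCompact V →
      IsCompact {p : (Fin m → ℂ) × (Fin m → ℂ) |
        (∃ w : Fin l → ℂ, ∀ i, p.1 i = Complex.exp (Ψ w i)) ∧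
        {i | p.2 i = 0} ∈ K ∧
        ((fun i => p.1 i * p.2 i), p.2) ∈ V} := by
  intro V hV hVc
  -- the real-linear map w ↦ Re (Ψ w)
  let f : (Fin l → ℂ) →ₗ[ℝ] (Fin m → ℝ) :=
    { toFun := fun w => fun i => (Ψ w i).re
      map_add' := by intro w₁ w₂; funext i; simp [Ψ.map_add]
      map_smul' := by
        intro c w; funext i
        have h1 : c • w = (c : ℂ) • w := by
          funext j
          simp [Pi.smul_apply, Complex.real_smul]
        show (Ψ (c • w) i).re = c * (Ψ w i).re
        rw [h1, Ψ.map_smul]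
        simp [Complex.re_ofReal_mul] }
  have hfemb : Topology.IsClosedEmbedding f :=
    LinearMap.isClosedEmbedding_of_injective (LinearMap.ker_eq_bot.mpr hΨinj)
  -- sequential compactness
  apply IsSeqCompact.isCompact
  intro x hx
  choose w hw using fun k => (hx k).1
  set q : ℕ → (Fin m → ℂ) × (Fin m → ℂ) :=
    fun k => ((fun i => (x k).1 i * (x k).2 i), (x k).2) with hqdef
  have hqV : ∀ k, q k ∈ V := fun k => (hx k).2.2
  obtain ⟨⟨y, zb⟩, hyzV, φ₁, hφ₁, hq1⟩ := hVc.isSeqCompact hqV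
  have hy : Filter.Tendsto (fun k => (q (φ₁ k)).1) Filter.atTop (nhds y) :=
    (continuous_fst.tendsto _).comp hq1
  have hz : Filter.Tendsto (fun k => (q (φ₁ k)).2) Filter.atTop (nhds zb) :=
    (continuous_snd.tendsto _).comp hq1
  have hyi : ∀ i, Filter.Tendsto (fun k => ‖(x (φ₁ k)).1 i * (x (φ₁ k)).2 i‖)
      Filter.atTop (nhds (‖y i‖)) := fun i =>
    (continuous_norm.tendsto _).comp (tendsto_pi_nhds.mp hy i)
  have hzi : ∀ i, Filter.Tendsto (fun k => ‖(x (φ₁ k)).2 i‖)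
      Filter.atTop (nhds (‖zb i‖)) := fun i =>
    (continuous_norm.tendsto _).comp (tendsto_pi_nhds.mp hz i)
  set u : ℕ → Fin m → ℝ := fun k => f (w (φ₁ k)) with hudef
  -- the key product identity
  have hprod : ∀ k i,
      ‖(x (φ₁ k)).1 i * (x (φ₁ k)).2 i‖
        = Real.exp (u k i) * ‖(x (φ₁ k)).2 i‖ := by
    intro k i
    rw [norm_mul, hw (φ₁ k) i, Complex.norm_exp]
    rfl
  have hIK : {i | zb i = 0} ∈ K := (hV hyzV).2
  have hJK : {i | y i = 0} ∈ K := (hV hyzV).1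
  have h0u : ∀ k, ∑ i, u k i • a i = 0 := fun k => hΨker (w (φ₁ k))
  have hub : ∀ i ∉ {i | zb i = 0}, ∃ C, ∀ k, u k i ≤ C := by
    intro i hi
    have hzpos : 0 < ‖zb i‖ := by
      simpa [norm_pos_iff] using hi
    have hynn : 0 ≤ ‖y i‖ := norm_nonneg _
    have h1 : ∀ᶠ k in Filter.atTop,
        ‖zb i‖ / 2 < ‖(x (φ₁ k)).2 i‖ :=
      (hzi i).eventually_const_lt (by linarith)
    have h2 : ∀ᶠ k in Filter.atTop,
        ‖(x (φ₁ k)).1 i * (x (φ₁ k)).2 i‖ < ‖y i‖ + 1 :=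
      (hyi i).eventually_lt_const (by linarith)
    obtain ⟨N, hN⟩ := Filter.eventually_atTop.mp (h1.and h2)
    refine bdd_above_of_eventually _ N
      (Real.log ((‖y i‖ + 1) / (‖zb i‖ / 2))) ?_
    intro k hk
    obtain ⟨ha1, ha2⟩ := hN k hk
    rw [Real.le_log_iff_exp_le (by positivity), le_div_iff₀ (by positivity)]
    calc Real.exp (u k i) * (‖zb i‖ / 2)
        ≤ Real.exp (u k i) * ‖(x (φ₁ k)).2 i‖ :=
          mul_le_mul_of_nonneg_left ha1.le (Real.exp_nonneg _)
      _ = ‖(x (φ₁ k)).1 i * (x (φ₁ k)).2 i‖ := (hprod k i).symm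
      _ ≤ ‖y i‖ + 1 := ha2.le
  have hlb : ∀ i ∉ {i | y i = 0}, ∃ c, ∀ k, c ≤ u k i := by
    intro i hi
    have hypos : 0 < ‖y i‖ := by
      simpa [norm_pos_iff] using hi
    have hznn : 0 ≤ ‖zb i‖ := norm_nonneg _
    have h1 : ∀ᶠ k in Filter.atTop,
        ‖(x (φ₁ k)).2 i‖ < ‖zb i‖ + 1 :=
      (hzi i).eventually_lt_const (by linarith)
    have h2 : ∀ᶠ k in Filter.atTop,
        ‖y i‖ / 2 < ‖(x (φ₁ k)).1 i * (x (φ₁ k)).2 i‖ :=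
      (hyi i).eventually_const_lt (by linarith)
    obtain ⟨N, hN⟩ := Filter.eventually_atTop.mp (h1.and h2)
    refine bdd_below_of_eventually _ N
      (Real.log ((‖y i‖ / 2) / (‖zb i‖ + 1))) ?_
    intro k hk
    obtain ⟨ha1, ha2⟩ := hN k hk
    rw [Real.log_le_iff_le_exp (by positivity), div_le_iff₀ (by positivity)]
    calc ‖y i‖ / 2
        ≤ ‖(x (φ₁ k)).1 i * (x (φ₁ k)).2 i‖ := ha2.le
      _ = Real.exp (u k i) * ‖(x (φ₁ k)).2 i‖ := hprod k i
      _ ≤ Real.exp (u k i) * (‖zb i‖ + 1) :=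
          mul_le_mul_of_nonneg_left ha1.le (Real.exp_nonneg _)
  obtain ⟨C, hC⟩ := key_bound a K hInd hInter hIK hJK u h0u hub hlb
  have hmemball : ∀ k, w (φ₁ k) ∈ f ⁻¹' Metric.closedBall 0 C := by
    intro k
    simp only [Set.mem_preimage, Metric.mem_closedBall, dist_zero_right]
    exact hC k
  obtain ⟨ws, -, φ₂, hφ₂, hwlim⟩ :=
    (hfemb.isCompact_preimage (isCompact_closedBall _ _)).isSeqCompact hmemball
  set E : (Fin l → ℂ) → (Fin m → ℂ) := fun v => fun i => Complex.exp (Ψ v i) with hE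
  have hEc : Continuous E := continuous_pi fun i =>
    Complex.continuous_exp.comp ((continuous_apply i).comp Ψ.continuous_of_finiteDimensional)
  have hxeq : ∀ k, (x k).1 = E (w k) := fun k => funext (hw k)
  have hglim : Filter.Tendsto (fun k => (x (φ₁ (φ₂ k))).1) Filter.atTop (nhds (E ws)) := by
    have h1 : Filter.Tendsto (fun k => E (w (φ₁ (φ₂ k)))) Filter.atTop (nhds (E ws)) :=
      (hEc.tendsto ws).comp hwlim
    simpa only [hxeq] using h1
  have hzlim : Filter.Tendsto (fun k => (x (φ₁ (φ₂ k))).2) Filter.atTop (nhds zb) :=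
    hz.comp hφ₂.tendsto_atTop
  have hyeq : (fun i => E ws i * zb i) = y := by
    have h1 : Filter.Tendsto (fun k => (q (φ₁ (φ₂ k))).1) Filter.atTop (nhds y) :=
      hy.comp hφ₂.tendsto_atTop
    have h2 : Filter.Tendsto (fun k => (q (φ₁ (φ₂ k))).1) Filter.atTop
        (nhds (fun i => E ws i * zb i)) := by
      rw [tendsto_pi_nhds]
      intro i
      exact ((tendsto_pi_nhds.mp hglim) i).mul ((tendsto_pi_nhds.mp hzlim) i)
    exact tendsto_nhds_unique h2 h1
  refine ⟨(E ws, zb), ⟨⟨ws, fun i => rfl⟩, hIK, ?_⟩, φ₁ ∘ φ₂, hφ₁.comp hφ₂, ?_⟩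
  · show ((fun i => E ws i * zb i), zb) ∈ V
    rw [hyeq]
    exact hyzV
  · exact hglim.prodMk_nhds hzlim
end

section
/- Suppose (K; a_1,…,a_m) underlies a complete simplicial fan in ℝ^n, N has rank k, and m − n − k = 2ℓ. Then the inclusion Z_K ↪ U(K) induces a homeomorphism between the orbit space Z_K/T(N) and the orbit space U(K)/C_Ω(N), both equipped with the quotient topology. -/
/-- The real span `N_ℝ ⊆ ℝ^m` of a subgroup `N ⊆ ℤ^m`. -/
def NR (m : ℕ) (N : AddSubgroup (Fin m → ℤ)) : Submodule ℝ (Fin m → ℝ) :=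
  Submodule.span ℝ ((fun x : Fin m → ℤ => fun i => (x i : ℝ)) '' (N : Set (Fin m → ℤ)))

/-- The complex span `N_ℂ ⊆ ℂ^m` of a subgroup `N ⊆ ℤ^m`. -/
noncomputable def NC (m : ℕ) (N : AddSubgroup (Fin m → ℤ)) : Submodule ℂ (Fin m → ℂ) :=
  Submodule.span ℂ ((fun x : Fin m → ℤ => fun i => (x i : ℂ)) '' (N : Set (Fin m → ℤ)))

/-- The `T(N)`-orbit relation on the moment-angle complex `Z_K`.  The orbit space
`Z_K / T(N)` with the quotient topology is `Quot (TNOrbitRel m K N)`. -/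
def TNOrbitRel (m : ℕ) (K : Set (Set (Fin m))) (N : AddSubgroup (Fin m → ℤ))
    (z w : momentAngleComplex m K) : Prop :=
  ∃ x : Fin m → ℝ, x ∈ NR m N ∧
    ∀ i, (w : Fin m → ℂ) i =
      Complex.exp (2 * (Real.pi : ℂ) * Complex.I * (x i : ℂ)) * (z : Fin m → ℂ) i

/-- The `C_Ω(N)`-orbit relation on `U(K)`.  The orbit space `U(K) / C_Ω(N)` with the quotient
topology is `Quot (COmegaNOrbitRel m l K N Ω)`. -/
def COmegaNOrbitRel (m l : ℕ) (K : Set (Set (Fin m))) (N : AddSubgroup (Fin m → ℤ))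
    (Ω : (Fin l → ℂ) →ₗ[ℂ] (Fin m → ℂ)) (z w : UK m K) : Prop :=
  ∃ u : Fin m → ℂ, u ∈ NC m N ∧ ∃ v : Fin l → ℂ,
    ∀ i, (w : Fin m → ℂ) i =
      Complex.exp (2 * (Real.pi : ℂ) * Complex.I * u i + Ω v i) * (z : Fin m → ℂ) i


open Filter Topology Module

namespace PUaux

variable {n m l : ℕ}


noncomputable def Amap (a : Fin m → Fin n → ℝ) : (Fin m → ℝ) →ₗ[ℝ] (Fin n → ℝ) where
  toFun x := ∑ i, x i • a i
  map_add' x y := by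
    simp only [Pi.add_apply, add_smul]
    exact Finset.sum_add_distrib
  map_smul' c x := by
    simp only [Pi.smul_apply, smul_eq_mul, RingHom.id_apply, Finset.smul_sum, mul_smul]

@[simp] lemma Amap_apply (a : Fin m → Fin n → ℝ) (x : Fin m → ℝ) :
    Amap a x = ∑ i, x i • a i := rfl

noncomputable def cmap (m : ℕ) : (Fin m → ℝ) →ₗ[ℝ] (Fin m → ℂ) where
  toFun x := fun i => (x i : ℂ)
  map_add' x y := by funext i; simp
  map_smul' c x := by funext i; simp [Complex.real_smul]

@[simp] lemma cmap_apply (x : Fin m → ℝ) (i : Fin m) : cmap m x i = (x i : ℂ) := rfl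

lemma linIndep_support {a : Fin m → Fin n → ℝ} {I : Set (Fin m)}
    (h : LinearIndependent ℝ (fun i : I => a i.1)) (μ : Fin m → ℝ)
    (hsupp : ∀ i ∉ I, μ i = 0) (hsum : ∑ i, μ i • a i = 0) : ∀ i, μ i = 0 := by
  classical
  haveI : Fintype I := Set.Finite.fintype (Set.toFinite I)
  have key : ∑ i : I, μ i.1 • a i.1 = 0 := by
    rw [Finset.sum_set_coe (f := fun i => μ i • a i)]
    rw [← hsum]
    exact Finset.sum_subset (Finset.subset_univ _) fun i _ hi => by
      rw [hsupp i (by simpa using hi), zero_smul]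
  have h2 := Fintype.linearIndependent_iff.mp h (fun i => μ i.1) key
  intro i
  by_cases hi : i ∈ I
  · exact h2 ⟨i, hi⟩
  · exact hsupp i hi

lemma zero_mem_cone (a : Fin m → Fin n → ℝ) (I : Set (Fin m)) : (0 : Fin n → ℝ) ∈ cone a I :=
  ⟨0, fun _ => le_refl 0, fun _ _ => rfl, by simp⟩

lemma cone_empty (a : Fin m → Fin n → ℝ) : cone a (∅ : Set (Fin m)) = {0} := by
  ext x
  constructor
  · rintro ⟨μ, -, hsupp, rfl⟩
    have h0 : ∀ i, μ i = 0 := fun i => hsupp i (Set.notMem_empty i)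
    simp [h0]
  · rintro h
    rw [Set.mem_singleton_iff] at h
    exact h ▸ zero_mem_cone a ∅

lemma cone_isClosed {a : Fin m → Fin n → ℝ} {I : Set (Fin m)}
    (h : LinearIndependent ℝ (fun i : I => a i.1)) : IsClosed (cone a I) := by
  classical
  haveI : Fintype I := Set.Finite.fintype (Set.toFinite I)
  set L : (I → ℝ) →ₗ[ℝ] (Fin n → ℝ) :=
    { toFun := fun ν => ∑ i : I, ν i • a i.1
      map_add' := fun x y => by simp only [Pi.add_apply, add_smul]; exact Finset.sum_add_distrib
      map_smul' := fun c x => by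
        simp only [Pi.smul_apply, smul_eq_mul, RingHom.id_apply, Finset.smul_sum, mul_smul] }
    with hL
  have hker : LinearMap.ker L = ⊥ := by
    rw [LinearMap.ker_eq_bot']
    intro ν hν
    funext i
    exact Fintype.linearIndependent_iff.mp h ν hν i
  have hemb := LinearMap.isClosedEmbedding_of_injective hker
  have heq : cone a I = L '' {ν : I → ℝ | ∀ i, 0 ≤ ν i} := by
    ext x
    constructor
    · rintro ⟨μ, hμ0, hsupp, rfl⟩
      refine ⟨fun i => μ i.1, fun i => hμ0 i.1, ?_⟩
      show ∑ i : I, μ i.1 • a i.1 = ∑ i, μ i • a i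
      rw [Finset.sum_set_coe (f := fun i => μ i • a i)]
      exact Finset.sum_subset (Finset.subset_univ _) fun i _ hi => by
        rw [hsupp i (by simpa using hi), zero_smul]
    · rintro ⟨ν, hν0, rfl⟩
      refine ⟨fun j => if hj : j ∈ I then ν ⟨j, hj⟩ else 0, ?_, ?_, ?_⟩
      · intro i
        by_cases hj : i ∈ I
        · simpa only [dif_pos hj] using hν0 ⟨i, hj⟩
        · simp only [dif_neg hj]; exact le_refl 0
      · intro i hi; exact dif_neg hi
      · show L ν = _
        rw [hL]
        simp only [LinearMap.coe_mk, AddHom.coe_mk]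
        rw [show (∑ i, (if hj : i ∈ I then ν ⟨i, hj⟩ else 0) • a i)
            = ∑ i : I, (if hj : (i : Fin m) ∈ I then ν ⟨i.1, hj⟩ else 0) • a i.1 from ?_]
        · exact Finset.sum_congr rfl fun i _ => by rw [dif_pos i.2]
        · rw [Finset.sum_set_coe (f := fun i => (if hj : i ∈ I then ν ⟨i, hj⟩ else 0) • a i)]
          exact (Finset.sum_subset (Finset.subset_univ _) fun i _ hi => by
            rw [dif_neg (by simpa using hi), zero_smul]).symm
  rw [heq]
  refine hemb.isClosedMap _ ?_
  have : {ν : I → ℝ | ∀ i, 0 ≤ ν i} = ⋂ i, {ν : I → ℝ | 0 ≤ ν i} := by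
    ext ν; simp [Set.mem_iInter]
  rw [this]
  exact isClosed_iInter fun i => isClosed_le continuous_const (continuous_apply i)

lemma key_zero {a : Fin m → Fin n → ℝ} {K : Set (Set (Fin m))}
    (hInd : ∀ I ∈ K, LinearIndependent ℝ (fun i : I => a i.1))
    (hInter : ∀ I ∈ K, ∀ J ∈ K, cone a I ∩ cone a J = cone a (I ∩ J))
    (h : Fin m → ℝ) (hsum : ∑ i, h i • a i = 0)
    (hP : {i | 0 < h i} ∈ K) (hQ : {i | h i < 0} ∈ K) : h = 0 := by
  set pos : Fin m → ℝ := fun i => max (h i) 0 with hposdef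
  set neg : Fin m → ℝ := fun i => max (-h i) 0 with hnegdef
  have hsplit : ∀ i, pos i - neg i = h i := fun i => max_zero_sub_max_neg_zero_eq_self (h i)
  have hpq : ∑ i, pos i • a i = ∑ i, neg i • a i := by
    rw [← sub_eq_zero, ← Finset.sum_sub_distrib]
    rw [← hsum]
    exact Finset.sum_congr rfl fun i _ => by rw [← sub_smul, hsplit i]
  have hpmem : (∑ i, pos i • a i) ∈ cone a {i | 0 < h i} :=
    ⟨pos, fun i => le_max_right _ _,
     fun i hi => max_eq_right (le_of_not_gt (by simpa using hi)), rfl⟩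
  have hqmem : (∑ i, pos i • a i) ∈ cone a {i | h i < 0} := by
    rw [hpq]
    exact ⟨neg, fun i => le_max_right _ _,
      fun i hi => max_eq_right (by simp only [Set.mem_setOf_eq, not_lt] at hi; linarith), rfl⟩
  have hint : (∑ i, pos i • a i) ∈ cone a ({i | 0 < h i} ∩ {i | h i < 0}) := by
    rw [← hInter _ hP _ hQ]; exact ⟨hpmem, hqmem⟩
  have hempty : ({i | 0 < h i} ∩ {i | h i < 0}) = (∅ : Set (Fin m)) := by
    ext i
    simp only [Set.mem_inter_iff, Set.mem_setOf_eq, Set.mem_empty_iff_false, iff_false, not_and]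
    intro h1 h2; linarith
  rw [hempty, cone_empty] at hint
  rw [Set.mem_singleton_iff] at hint
  have hpos0 := linIndep_support (hInd _ hP) pos
    (fun i hi => max_eq_right (le_of_not_gt (by simpa using hi))) hint
  have hq0 : ∑ i, neg i • a i = 0 := by rw [← hpq]; exact hint
  have hneg0 := linIndep_support (hInd _ hQ) neg
    (fun i hi => max_eq_right (by simp only [Set.mem_setOf_eq, not_lt] at hi; linarith)) hq0
  funext i
  have h1 := hsplit i
  rw [hpos0 i, hneg0 i] at h1
  simp only [Pi.zero_apply]
  linarith




lemma ZK_subset_UK {K : Set (Set (Fin m))} (hKdown : ∀ I ∈ K, ∀ J ⊆ I, J ∈ K) :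
    momentAngleComplex m K ⊆ UK m K := by
  rintro z ⟨hle, hK⟩
  refine hKdown _ hK _ fun i hi => ?_
  simp only [Set.mem_setOf_eq] at hi ⊢
  rw [hi]; norm_num

lemma ZK_isCompact {K : Set (Set (Fin m))} (hKdown : ∀ I ∈ K, ∀ J ⊆ I, J ∈ K) :
    IsCompact (momentAngleComplex m K) := by
  apply Metric.isCompact_of_isClosed_isBounded
  · have heq : momentAngleComplex m K =
        ⋃ I ∈ K, {z : Fin m → ℂ | (∀ i, ‖z i‖ ≤ 1) ∧ ∀ i, i ∉ I → ‖z i‖ = 1} := by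
      ext z
      simp only [Set.mem_iUnion, Set.mem_setOf_eq]
      constructor
      · rintro ⟨hle, hK⟩
        exact ⟨_, hK, hle, fun i hi => le_antisymm (hle i) (le_of_not_gt (by simpa using hi))⟩
      · rintro ⟨I, hI, hle, hbd⟩
        refine ⟨hle, hKdown _ hI _ fun i hi => ?_⟩
        simp only [Set.mem_setOf_eq] at hi
        by_contra hiI
        rw [hbd i hiI] at hi
        exact lt_irrefl 1 hi
    rw [heq]
    refine Set.Finite.isClosed_biUnion (Set.toFinite K) fun I _ => ?_
    have h1 : IsClosed (⋂ i, {z : Fin m → ℂ | ‖z i‖ ≤ 1}) :=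
      isClosed_iInter fun i => isClosed_le ((continuous_apply i).norm) continuous_const
    have h2 : IsClosed (⋂ i, {z : Fin m → ℂ | i ∉ I → ‖z i‖ = 1}) := by
      refine isClosed_iInter fun i => ?_
      by_cases hi : i ∈ I
      · simp only [hi, not_true_eq_false, false_implies, Set.setOf_true]
        exact isClosed_univ
      · simp only [hi, not_false_eq_true, true_implies]
        exact isClosed_eq ((continuous_apply i).norm) continuous_const
    have heq2 : {z : Fin m → ℂ | (∀ i, ‖z i‖ ≤ 1) ∧ ∀ i, i ∉ I → ‖z i‖ = 1} =
        (⋂ i, {z : Fin m → ℂ | ‖z i‖ ≤ 1}) ∩ ⋂ i, {z : Fin m → ℂ | i ∉ I → ‖z i‖ = 1} := by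
      ext z; simp [Set.mem_iInter]
    rw [heq2]
    exact h1.inter h2
  · refine Bornology.IsBounded.subset (Metric.isBounded_closedBall (x := (0 : Fin m → ℂ)) (r := 1))
      fun z hz => ?_
    rw [Metric.mem_closedBall, dist_zero_right]
    exact pi_norm_le_iff_of_nonneg zero_le_one |>.mpr hz.1

lemma NR_sum {a : Fin m → Fin n → ℝ} {N : AddSubgroup (Fin m → ℤ)}
    (hNker : ∀ x ∈ N, ∑ i, (x i : ℝ) • a i = 0) :
    ∀ x ∈ NR m N, ∑ i, x i • a i = 0 := by
  intro x hx
  induction hx using Submodule.span_induction with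
  | mem x hx =>
      obtain ⟨g, hg, rfl⟩ := hx
      exact hNker g hg
  | zero => simp
  | add x y hx hy ihx ihy =>
      simp only [Pi.add_apply, add_smul, Finset.sum_add_distrib, ihx, ihy, add_zero]
  | smul c x hx ih =>
      simp only [Pi.smul_apply, smul_eq_mul, mul_smul, ← Finset.smul_sum, ih, smul_zero]

lemma re_im_mem_NR {N : AddSubgroup (Fin m → ℤ)} {u : Fin m → ℂ} (hu : u ∈ NC m N) :
    (fun i => (u i).re) ∈ NR m N ∧ (fun i => (u i).im) ∈ NR m N := by
  induction hu using Submodule.span_induction with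
  | mem x hx =>
      obtain ⟨g, hg, rfl⟩ := hx
      constructor
      · have he : (fun i => ((g i : ℂ)).re) = fun i => ((g i : ℝ)) := by funext i; simp
        rw [he]; exact Submodule.subset_span ⟨g, hg, rfl⟩
      · have he : (fun i => ((g i : ℂ)).im) = (0 : Fin m → ℝ) := by funext i; simp
        rw [he]; exact Submodule.zero_mem _
  | zero =>
      refine ⟨?_, ?_⟩
      · have he : (fun i => ((0 : Fin m → ℂ) i).re) = (0 : Fin m → ℝ) := by funext i; simp
        rw [he]; exact Submodule.zero_mem _
      · have he : (fun i => ((0 : Fin m → ℂ) i).im) = (0 : Fin m → ℝ) := by funext i; simp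
        rw [he]; exact Submodule.zero_mem _
  | add x y hx hy ihx ihy =>
      constructor
      · have he : (fun i => ((x + y) i).re) = (fun i => (x i).re) + fun i => (y i).re := by
          funext i; simp [Complex.add_re]
        rw [he]; exact Submodule.add_mem _ ihx.1 ihy.1
      · have he : (fun i => ((x + y) i).im) = (fun i => (x i).im) + fun i => (y i).im := by
          funext i; simp [Complex.add_im]
        rw [he]; exact Submodule.add_mem _ ihx.2 ihy.2
  | smul c x hx ih =>
      constructor
      · have he : (fun i => ((c • x) i).re)
            = c.re • (fun i => (x i).re) - c.im • fun i => (x i).im := by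
          funext i
          simp [Complex.mul_re, Complex.smul_re]
        rw [he]
        exact Submodule.sub_mem _ (Submodule.smul_mem _ _ ih.1) (Submodule.smul_mem _ _ ih.2)
      · have he : (fun i => ((c • x) i).im)
            = c.re • (fun i => (x i).im) + c.im • fun i => (x i).re := by
          funext i
          simp [Complex.mul_im, Complex.smul_im]
        rw [he]
        exact Submodule.add_mem _ (Submodule.smul_mem _ _ ih.2) (Submodule.smul_mem _ _ ih.1)



lemma cmap_mem_NC {N : AddSubgroup (Fin m → ℤ)} {x : Fin m → ℝ} (hx : x ∈ NR m N) :
    cmap m x ∈ NC m N := by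
  induction hx using Submodule.span_induction with
  | mem x hx =>
      obtain ⟨g, hg, rfl⟩ := hx
      have he : cmap m (fun i => (g i : ℝ)) = fun i => (g i : ℂ) := by
        funext i; simp
      rw [he]; exact Submodule.subset_span ⟨g, hg, rfl⟩
  | zero => rw [map_zero]; exact Submodule.zero_mem _
  | add x y hx hy ihx ihy => rw [map_add]; exact Submodule.add_mem _ ihx ihy
  | smul c x hx ih => rw [map_smul]; exact Submodule.smul_of_tower_mem _ c ih

noncomputable def ReOm (Ω : (Fin l → ℂ) →ₗ[ℂ] (Fin m → ℂ)) :
    (Fin l → ℂ) →ₗ[ℝ] (Fin m → ℝ) :=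
  (LinearMap.compLeft Complex.reLm (Fin m)).comp (Ω.restrictScalars ℝ)

@[simp] lemma ReOm_apply (Ω : (Fin l → ℂ) →ₗ[ℂ] (Fin m → ℂ)) (v : Fin l → ℂ) (i : Fin m) :
    ReOm Ω v i = (Ω v i).re := rfl

lemma ReOm_zero_eq {Ω : (Fin l → ℂ) →ₗ[ℂ] (Fin m → ℂ)} :
    (fun i => (Ω (0 : Fin l → ℂ) i).re) = (0 : Fin m → ℝ) := by
  funext i; simp

lemma ReOm_ker {N : AddSubgroup (Fin m → ℤ)} {Ω : (Fin l → ℂ) →ₗ[ℂ] (Fin m → ℂ)}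
    (hΩinj : Function.Injective fun w : Fin l → ℂ => (NR m N).mkQ (fun i => (Ω w i).re)) :
    LinearMap.ker (ReOm Ω) = ⊥ := by
  rw [LinearMap.ker_eq_bot']
  intro v hv
  apply hΩinj
  have h1 : (fun i => (Ω v i).re) = (0 : Fin m → ℝ) := by
    funext i; exact congrFun hv i
  show (NR m N).mkQ (fun i => (Ω v i).re) = (NR m N).mkQ (fun i => (Ω 0 i).re)
  rw [h1, ReOm_zero_eq]

lemma mkQ_eq_zero_of_mem {N : AddSubgroup (Fin m → ℤ)} {x : Fin m → ℝ} (hx : x ∈ NR m N) :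
    (NR m N).mkQ x = 0 := by
  rwa [Submodule.mkQ_apply, Submodule.Quotient.mk_eq_zero]

lemma exists_decomp {k : ℕ} {a : Fin m → Fin n → ℝ} {K : Set (Set (Fin m))}
    {N : AddSubgroup (Fin m → ℤ)} {Ω : (Fin l → ℂ) →ₗ[ℂ] (Fin m → ℂ)}
    (hml : m = n + k + 2 * l)
    (hCover : (⋃ I ∈ K, cone a I) = Set.univ)
    (hNker : ∀ x ∈ N, ∑ i, (x i : ℝ) • a i = 0)
    (hNrank : Module.finrank ℝ (NR m N) = k)
    (hΩinj : Function.Injective fun w : Fin l → ℂ => (NR m N).mkQ (fun i => (Ω w i).re))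
    (hΩker : ∀ w : Fin l → ℂ, ∑ i, (Ω w i).re • a i = 0)
    (h : Fin m → ℝ) (hker : ∑ i, h i • a i = 0) :
    ∃ x ∈ NR m N, ∃ v : Fin l → ℂ, h = x + ReOm Ω v := by
  have hsurj : Function.Surjective (Amap a) := by
    intro y
    have hy : y ∈ ⋃ I ∈ K, cone a I := by rw [hCover]; trivial
    simp only [Set.mem_iUnion] at hy
    obtain ⟨I, -, μ, -, -, rfl⟩ := hy
    exact ⟨μ, rfl⟩
  have hrange : LinearMap.range (Amap a) = ⊤ := LinearMap.range_eq_top.mpr hsurj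
  have hkerdim : finrank ℝ (LinearMap.ker (Amap a)) = k + 2 * l := by
    have h1 := LinearMap.finrank_range_add_finrank_ker (Amap a)
    rw [hrange, finrank_top] at h1
    simp only [Module.finrank_pi, Fintype.card_fin] at h1
    omega
  have hReOmdim : finrank ℝ (LinearMap.range (ReOm Ω)) = 2 * l := by
    have h1 := LinearMap.finrank_range_add_finrank_ker (ReOm Ω)
    rw [ReOm_ker hΩinj, finrank_bot, add_zero] at h1
    rw [h1]
    rw [Module.finrank_pi_fintype]
    simp [Complex.finrank_real_complex]
    ring
  have hdisj : NR m N ⊓ LinearMap.range (ReOm Ω) = ⊥ := by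
    rw [eq_bot_iff]
    rintro x ⟨hx1, v, rfl⟩
    have h1 : v = 0 := by
      apply hΩinj
      show (NR m N).mkQ (fun i => (Ω v i).re) = (NR m N).mkQ (fun i => (Ω 0 i).re)
      rw [ReOm_zero_eq, map_zero]
      have : (fun i => (Ω v i).re) = ReOm Ω v := rfl
      rw [this]
      exact mkQ_eq_zero_of_mem hx1
    rw [h1, map_zero]
    exact Submodule.zero_mem ⊥
  have hle : NR m N ⊔ LinearMap.range (ReOm Ω) ≤ LinearMap.ker (Amap a) := by
    apply sup_le
    · intro x hx
      rw [LinearMap.mem_ker, Amap_apply]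
      exact NR_sum hNker x hx
    · rintro x ⟨v, rfl⟩
      rw [LinearMap.mem_ker, Amap_apply]
      exact hΩker v
  have hsupdim : finrank ℝ ↥(NR m N ⊔ LinearMap.range (ReOm Ω)) = k + 2 * l := by
    have h1 := Submodule.finrank_sup_add_finrank_inf_eq (NR m N) (LinearMap.range (ReOm Ω))
    rw [hdisj, finrank_bot, add_zero, hNrank, hReOmdim] at h1
    exact h1
  have heq : NR m N ⊔ LinearMap.range (ReOm Ω) = LinearMap.ker (Amap a) :=
    Submodule.eq_of_le_of_finrank_le hle (by rw [hkerdim, hsupdim])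
  have hmem : h ∈ NR m N ⊔ LinearMap.range (ReOm Ω) := by
    rw [heq, LinearMap.mem_ker, Amap_apply]
    exact hker
  rw [Submodule.mem_sup] at hmem
  obtain ⟨x, hx, y, hy, rfl⟩ := hmem
  obtain ⟨v, rfl⟩ := hy
  exact ⟨x, hx, v, rfl⟩

noncomputable def Wsub (N : AddSubgroup (Fin m → ℤ)) (Ω : (Fin l → ℂ) →ₗ[ℂ] (Fin m → ℂ)) :
    Submodule ℝ (Fin m → ℂ) :=
  (NR m N).map (cmap m) ⊔ LinearMap.range (Ω.restrictScalars ℝ)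

lemma mem_Wsub {N : AddSubgroup (Fin m → ℤ)} {Ω : (Fin l → ℂ) →ₗ[ℂ] (Fin m → ℂ)}
    {ζ : Fin m → ℂ} :
    ζ ∈ Wsub N Ω ↔ ∃ x ∈ NR m N, ∃ v : Fin l → ℂ, ζ = cmap m x + Ω v := by
  rw [Wsub, Submodule.mem_sup]
  constructor
  · rintro ⟨y, ⟨x, hx, rfl⟩, w, ⟨v, rfl⟩, rfl⟩
    exact ⟨x, hx, v, rfl⟩
  · rintro ⟨x, hx, v, rfl⟩
    exact ⟨_, ⟨x, hx, rfl⟩, _, ⟨v, rfl⟩, rfl⟩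

lemma Wsub_re_ker {a : Fin m → Fin n → ℝ} {N : AddSubgroup (Fin m → ℤ)}
    {Ω : (Fin l → ℂ) →ₗ[ℂ] (Fin m → ℂ)}
    (hNker : ∀ x ∈ N, ∑ i, (x i : ℝ) • a i = 0)
    (hΩker : ∀ w : Fin l → ℂ, ∑ i, (Ω w i).re • a i = 0)
    {ζ : Fin m → ℂ} (hζ : ζ ∈ Wsub N Ω) : ∑ i, (ζ i).re • a i = 0 := by
  obtain ⟨x, hx, v, rfl⟩ := mem_Wsub.mp hζ
  have h1 : ∀ i, ((cmap m x + Ω v) i).re = x i + (Ω v i).re := by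
    intro i; simp [Complex.add_re]
  calc ∑ i, ((cmap m x + Ω v) i).re • a i
      = ∑ i, (x i • a i + (Ω v i).re • a i) := by
        refine Finset.sum_congr rfl fun i _ => ?_
        rw [h1 i, add_smul]
    _ = ∑ i, x i • a i + ∑ i, (Ω v i).re • a i := Finset.sum_add_distrib
    _ = 0 := by rw [NR_sum hNker x hx, hΩker v, add_zero]

lemma Wsub_nondeg {N : AddSubgroup (Fin m → ℤ)} {Ω : (Fin l → ℂ) →ₗ[ℂ] (Fin m → ℂ)}
    (hΩinj : Function.Injective fun w : Fin l → ℂ => (NR m N).mkQ (fun i => (Ω w i).re))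
    {ζ : Fin m → ℂ} (hζ : ζ ∈ Wsub N Ω) (hre : ∀ i, (ζ i).re = 0) : ζ = 0 := by
  obtain ⟨x, hx, v, rfl⟩ := mem_Wsub.mp hζ
  have h1 : ∀ i, x i + (Ω v i).re = 0 := by
    intro i
    have := hre i
    simpa [Complex.add_re] using this
  have h2 : (fun i => (Ω v i).re) ∈ NR m N := by
    have he : (fun i => (Ω v i).re) = -x := by
      funext i; have := h1 i; simp only [Pi.neg_apply]; linarith
    rw [he]
    exact Submodule.neg_mem _ hx
  have hv : v = 0 := by
    apply hΩinj
    show (NR m N).mkQ (fun i => (Ω v i).re) = (NR m N).mkQ (fun i => (Ω 0 i).re)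
    rw [ReOm_zero_eq, map_zero, mkQ_eq_zero_of_mem h2]
  have hx0 : x = 0 := by
    funext i
    have h3 := h1 i
    rw [hv] at h3
    simpa using h3
  rw [hv, hx0]
  simp

lemma NC_scale {N : AddSubgroup (Fin m → ℤ)} {x : Fin m → ℝ} (hx : x ∈ NR m N) :
    ∃ u : Fin m → ℂ, u ∈ NC m N ∧
      ∀ i, 2 * (Real.pi : ℂ) * Complex.I * u i = (x i : ℂ) := by
  refine ⟨fun i => (((2 * Real.pi)⁻¹ : ℝ) : ℂ) * (-Complex.I) * (x i : ℂ), ?_, ?_⟩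
  · have he : (fun i => (((2 * Real.pi)⁻¹ : ℝ) : ℂ) * (-Complex.I) * (x i : ℂ))
        = ((((2 * Real.pi)⁻¹ : ℝ) : ℂ) * (-Complex.I)) • cmap m x := by
      funext i
      simp [smul_eq_mul]
    rw [he]
    exact Submodule.smul_mem _ _ (cmap_mem_NC hx)
  · intro i
    have h2π : ((2 * Real.pi : ℝ) : ℂ) ≠ 0 := by
      exact_mod_cast ne_of_gt Real.two_pi_pos
    calc 2 * (Real.pi : ℂ) * Complex.I * ((((2 * Real.pi)⁻¹ : ℝ) : ℂ) * (-Complex.I) * (x i : ℂ))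
        = (((2 * Real.pi : ℝ) : ℂ) * (((2 * Real.pi)⁻¹ : ℝ) : ℂ)) * (-(Complex.I * Complex.I))
          * (x i : ℂ) := by push_cast; ring
      _ = (x i : ℂ) := by
          rw [Complex.I_mul_I, ← Complex.ofReal_mul, mul_inv_cancel₀ (ne_of_gt Real.two_pi_pos)]
          simp

lemma chain {z w₁ w₂ : Fin m → ℂ} {c d : Fin m → ℂ}
    (h1 : ∀ i, w₁ i = Complex.exp (c i) * z i) (h2 : ∀ i, w₂ i = Complex.exp (d i) * z i) :
    ∀ i, w₂ i = Complex.exp (d i - c i) * w₁ i := by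
  intro i
  rw [h2 i, h1 i, ← mul_assoc, ← Complex.exp_add, sub_add_cancel]

lemma norm_exp_mul (c z : ℂ) : ‖Complex.exp c * z‖ = Real.exp c.re * ‖z‖ := by
  rw [norm_mul, Complex.norm_exp]

lemma uniq {a : Fin m → Fin n → ℝ} {K : Set (Set (Fin m))} {N : AddSubgroup (Fin m → ℤ)}
    {Ω : (Fin l → ℂ) →ₗ[ℂ] (Fin m → ℂ)}
    (hKdown : ∀ I ∈ K, ∀ J ⊆ I, J ∈ K)
    (hInd : ∀ I ∈ K, LinearIndependent ℝ (fun i : I => a i.1))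
    (hInter : ∀ I ∈ K, ∀ J ∈ K, cone a I ∩ cone a J = cone a (I ∩ J))
    (hNker : ∀ x ∈ N, ∑ i, (x i : ℝ) • a i = 0)
    (hΩinj : Function.Injective fun w : Fin l → ℂ => (NR m N).mkQ (fun i => (Ω w i).re))
    (hΩker : ∀ w : Fin l → ℂ, ∑ i, (Ω w i).re • a i = 0)
    {z w : Fin m → ℂ} (hz : z ∈ momentAngleComplex m K) (hw : w ∈ momentAngleComplex m K)
    {u : Fin m → ℂ} (hu : u ∈ NC m N) (vv : Fin l → ℂ)
    (hrel : ∀ i, w i = Complex.exp (2 * (Real.pi : ℂ) * Complex.I * u i + Ω vv i) * z i) :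
    ∃ x : Fin m → ℝ, x ∈ NR m N ∧
      ∀ i, w i = Complex.exp (2 * (Real.pi : ℂ) * Complex.I * (x i : ℂ)) * z i := by
  set h : Fin m → ℝ := fun i => (2 * (Real.pi : ℂ) * Complex.I * u i + Ω vv i).re with hh
  have hre : ∀ i, h i = (-(2 * Real.pi)) * (u i).im + (Ω vv i).re := by
    intro i
    rw [hh]
    simp only [Complex.add_re, Complex.mul_re, Complex.mul_im, Complex.I_re, Complex.I_im,
      Complex.ofReal_re, Complex.ofReal_im, Complex.re_ofNat, Complex.im_ofNat]
    ring
  have hsum : ∑ i, h i • a i = 0 := by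
    have h1 : (fun i => (u i).im) ∈ NR m N := (re_im_mem_NR hu).2
    have h2 := NR_sum hNker _ h1
    have h3 := hΩker vv
    calc ∑ i, h i • a i
        = ∑ i, ((-(2 * Real.pi)) • ((u i).im • a i) + (Ω vv i).re • a i) := by
          refine Finset.sum_congr rfl fun i _ => ?_
          rw [hre i, add_smul, smul_smul]
      _ = (-(2 * Real.pi)) • ∑ i, (u i).im • a i + ∑ i, (Ω vv i).re • a i := by
          rw [Finset.sum_add_distrib, Finset.smul_sum]
      _ = 0 := by rw [h2, h3, smul_zero, add_zero]
  have hnorm : ∀ i, ‖w i‖ = Real.exp (h i) * ‖z i‖ := fun i => by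
    rw [hrel i, norm_exp_mul]
  have hP : {i | 0 < h i} ⊆ {i | ‖z i‖ < 1} := by
    intro i hi
    simp only [Set.mem_setOf_eq] at hi ⊢
    by_cases h0 : z i = 0
    · rw [h0]; norm_num
    · have h1 : ‖w i‖ ≤ 1 := hw.1 i
      have h2 : 0 < ‖z i‖ := norm_pos_iff.mpr h0
      have h3 : 1 < Real.exp (h i) := by
        rw [show (1:ℝ) = Real.exp 0 from (Real.exp_zero).symm]
        exact Real.exp_lt_exp.mpr hi
      have h4 := hnorm i
      nlinarith
  have hQ : {i | h i < 0} ⊆ {i | ‖w i‖ < 1} := by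
    intro i hi
    simp only [Set.mem_setOf_eq] at hi ⊢
    have h1 : ‖z i‖ ≤ 1 := hz.1 i
    have h2 : Real.exp (h i) < 1 := by
      rw [show (1:ℝ) = Real.exp 0 from (Real.exp_zero).symm]
      exact Real.exp_lt_exp.mpr hi
    rw [hnorm i]
    nlinarith [norm_nonneg (z i), Real.exp_pos (h i)]
  have hPK : {i | 0 < h i} ∈ K := hKdown _ hz.2 _ hP
  have hQK : {i | h i < 0} ∈ K := hKdown _ hw.2 _ hQ
  have h0 : h = 0 := key_zero hInd hInter h hsum hPK hQK
  have hmemNR : (fun i => (Ω vv i).re) ∈ NR m N := by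
    have he : (fun i => (Ω vv i).re) = (2 * Real.pi) • fun i => (u i).im := by
      funext i
      have h1 := congrFun h0 i
      rw [hre i] at h1
      simp only [Pi.zero_apply] at h1
      simp only [Pi.smul_apply, smul_eq_mul]
      linarith
    rw [he]
    exact Submodule.smul_mem _ _ (re_im_mem_NR hu).2
  have hv0 : vv = 0 := by
    apply hΩinj
    show (NR m N).mkQ (fun i => (Ω vv i).re) = (NR m N).mkQ (fun i => (Ω 0 i).re)
    rw [ReOm_zero_eq, map_zero, mkQ_eq_zero_of_mem hmemNR]
  have him0 : ∀ i, (u i).im = 0 := by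
    intro i
    have h1 := congrFun h0 i
    rw [hre i, hv0] at h1
    simp only [Pi.zero_apply, map_zero, Complex.zero_re, add_zero] at h1
    have hπ : (0:ℝ) < 2 * Real.pi := Real.two_pi_pos
    rcases mul_eq_zero.mp h1 with h2 | h2
    · exfalso
      rw [neg_eq_zero] at h2
      linarith
    · exact h2
  refine ⟨fun i => (u i).re, (re_im_mem_NR hu).1, fun i => ?_⟩
  have hui : u i = (((u i).re : ℝ) : ℂ) := by
    apply Complex.ext
    · simp
    · simp [him0 i]
  rw [hrel i, hv0]
  simp only [map_zero, Pi.zero_apply, add_zero]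
  rw [← hui]


lemma exists_star {a : Fin m → Fin n → ℝ} {K : Set (Set (Fin m))}
    (hInd : ∀ I ∈ K, LinearIndependent ℝ (fun i : I => a i.1))
    (hInter : ∀ I ∈ K, ∀ J ∈ K, cone a I ∩ cone a J = cone a (I ∩ J))
    (hCover : (⋃ I ∈ K, cone a I) = Set.univ)
    {Z : Set (Fin m)} (hZ : Z ∈ K) (v : Fin n → ℝ) :
    ∃ I ∈ K, Z ⊆ I ∧ ∃ μ : Fin m → ℝ, (∀ i, 0 ≤ μ i) ∧ (∀ i ∈ Z, μ i = 0) ∧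
      (∀ i, i ∉ I → μ i = 0) ∧ v - ∑ i, μ i • a i ∈ Submodule.span ℝ (a '' Z) := by
  classical
  set p : Fin n → ℝ := ∑ i, (if i ∈ Z then (1:ℝ) else 0) • a i with hpdef
  have hpZ : p ∈ cone a Z := by
    refine ⟨fun i => if i ∈ Z then 1 else 0, fun i => ?_, fun i hi => if_neg hi, rfl⟩
    show (0:ℝ) ≤ if i ∈ Z then 1 else 0
    by_cases hi : i ∈ Z
    · rw [if_pos hi]; norm_num
    · rw [if_neg hi]
  have hmem : ∀ j : ℕ, ∃ I, I ∈ K ∧ p + ((j : ℝ) + 1)⁻¹ • v ∈ cone a I := by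
    intro j
    have hy : p + ((j : ℝ) + 1)⁻¹ • v ∈ ⋃ I ∈ K, cone a I := by rw [hCover]; trivial
    simpa only [Set.mem_iUnion, exists_prop] using hy
  choose F hFK hFmem using hmem
  obtain ⟨I, hIinf'⟩ := Finite.exists_infinite_fiber F
  have hIinf : (F ⁻¹' {I}).Infinite := Set.infinite_coe_iff.mp hIinf'
  have hIK : I ∈ K := by
    obtain ⟨j, hj⟩ := hIinf.nonempty
    simp only [Set.mem_preimage, Set.mem_singleton_iff] at hj
    exact hj ▸ hFK j
  have hfreq : ∃ᶠ j in atTop, F j = I := by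
    rw [Filter.frequently_atTop]
    intro a0
    obtain ⟨b, hb, hab⟩ := hIinf.exists_gt a0
    simp only [Set.mem_preimage, Set.mem_singleton_iff] at hb
    exact ⟨b, hab.le, hb⟩
  have htend : Tendsto (fun j : ℕ => p + ((j : ℝ) + 1)⁻¹ • v) atTop (𝓝 p) := by
    have h1 : Tendsto (fun j : ℕ => ((j : ℝ) + 1)⁻¹) atTop (𝓝 0) := by
      simpa only [one_div] using tendsto_one_div_add_atTop_nhds_zero_nat (𝕜 := ℝ)
    have h2 := (h1.smul_const v).const_add p
    simpa using h2
  have hpI : p ∈ cone a I := by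
    have hcls := cone_isClosed (hInd I hIK)
    have hfreq2 : ∃ᶠ j : ℕ in atTop, p + ((j : ℝ) + 1)⁻¹ • v ∈ cone a I :=
      hfreq.mono fun j hj => hj ▸ hFmem j
    have := mem_closure_of_frequently_of_tendsto hfreq2 htend
    rwa [hcls.closure_eq] at this
  have hpZI : p ∈ cone a (Z ∩ I) := by
    rw [← hInter _ hZ _ hIK]; exact ⟨hpZ, hpI⟩
  obtain ⟨κ, hκ0, hκsupp, hκsum⟩ := hpZI
  have hZI : Z ⊆ I := by
    have hdiff : ∑ i, ((if i ∈ Z then (1:ℝ) else 0) - κ i) • a i = 0 := by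
      simp only [sub_smul, Finset.sum_sub_distrib]
      rw [← hpdef, hκsum, sub_self]
    have hsupp : ∀ i ∉ Z, ((if i ∈ Z then (1:ℝ) else 0) - κ i) = 0 := by
      intro i hi
      rw [if_neg hi, hκsupp i (fun hmem => hi hmem.1), sub_zero]
    have hall := linIndep_support (hInd Z hZ) _ hsupp hdiff
    intro i hiZ
    by_contra hiI
    have h1 := hall i
    rw [if_pos hiZ, hκsupp i (fun hmem => hiI hmem.2), sub_zero] at h1
    norm_num at h1
  obtain ⟨j, hj⟩ := hIinf.nonempty
  simp only [Set.mem_preimage, Set.mem_singleton_iff] at hj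
  set ε : ℝ := ((j : ℝ) + 1)⁻¹ with hε_def
  have hε : 0 < ε := by positivity
  have hmemj : p + ε • v ∈ cone a I := hj ▸ hFmem j
  obtain ⟨μ', hμ'0, hμ'supp, hμ'sum⟩ := hmemj
  set μf : Fin m → ℝ := fun i => if i ∈ Z then 0 else ε⁻¹ * μ' i with hμf
  have hμfapp : ∀ i, μf i = if i ∈ Z then 0 else ε⁻¹ * μ' i := fun i => rfl
  refine ⟨I, hIK, hZI, μf, ?_, ?_, ?_, ?_⟩
  · intro i
    rw [hμfapp i]
    by_cases hi : i ∈ Z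
    · rw [if_pos hi]
    · rw [if_neg hi]
      have := hμ'0 i
      positivity
  · intro i hi; rw [hμfapp i, if_pos hi]
  · intro i hi
    rw [hμfapp i]
    by_cases hiZ : i ∈ Z
    · rw [if_pos hiZ]
    · rw [if_neg hiZ, hμ'supp i hi, mul_zero]
  · have hv : v = ∑ i, (ε⁻¹ * (μ' i - if i ∈ Z then 1 else 0)) • a i := by
      have h1 : ε • v = ∑ i, μ' i • a i - p := by
        rw [← hμ'sum]; abel
      have h2 : v = ε⁻¹ • (ε • v) := by
        rw [smul_smul, inv_mul_cancel₀ hε.ne', one_smul]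
      rw [h2, h1, hpdef, ← Finset.sum_sub_distrib, Finset.smul_sum]
      refine Finset.sum_congr rfl fun i _ => ?_
      rw [← sub_smul, smul_smul]
    rw [hv]
    have h3 : (∑ i, (ε⁻¹ * (μ' i - if i ∈ Z then 1 else 0)) • a i)
        - ∑ i, μf i • a i
        = ∑ i, (if i ∈ Z then ε⁻¹ * (μ' i - 1) else 0) • a i := by
      rw [← Finset.sum_sub_distrib]
      refine Finset.sum_congr rfl fun i _ => ?_
      rw [← sub_smul, hμfapp i]
      congr 1
      by_cases hi : i ∈ Z
      · rw [if_pos hi, if_pos hi, if_pos hi, sub_zero]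
      · rw [if_neg hi, if_neg hi, if_neg hi, sub_zero, sub_self]
    rw [h3]
    refine Submodule.sum_mem _ fun i _ => ?_
    by_cases hi : i ∈ Z
    · rw [if_pos hi]
      exact Submodule.smul_mem _ _ (Submodule.subset_span ⟨i, hi, rfl⟩)
    · rw [if_neg hi, zero_smul]
      exact Submodule.zero_mem _

lemma exists_normal {k : ℕ} {a : Fin m → Fin n → ℝ} {K : Set (Set (Fin m))}
    {N : AddSubgroup (Fin m → ℤ)} {Ω : (Fin l → ℂ) →ₗ[ℂ] (Fin m → ℂ)}
    (hml : m = n + k + 2 * l)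
    (hKdown : ∀ I ∈ K, ∀ J ⊆ I, J ∈ K)
    (hInd : ∀ I ∈ K, LinearIndependent ℝ (fun i : I => a i.1))
    (hInter : ∀ I ∈ K, ∀ J ∈ K, cone a I ∩ cone a J = cone a (I ∩ J))
    (hCover : (⋃ I ∈ K, cone a I) = Set.univ)
    (hNker : ∀ x ∈ N, ∑ i, (x i : ℝ) • a i = 0)
    (hNrank : Module.finrank ℝ (NR m N) = k)
    (hΩinj : Function.Injective fun w : Fin l → ℂ => (NR m N).mkQ (fun i => (Ω w i).re))
    (hΩker : ∀ w : Fin l → ℂ, ∑ i, (Ω w i).re • a i = 0)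
    {z : Fin m → ℂ} (hz : z ∈ UK m K) :
    ∃ w, w ∈ momentAngleComplex m K ∧ ∃ x ∈ NR m N, ∃ vv : Fin l → ℂ,
      ∀ i, w i = Complex.exp ((x i : ℂ) + Ω vv i) * z i := by
  classical
  set Z : Set (Fin m) := {i | z i = 0} with hZdef
  have hZK : Z ∈ K := hz
  set d : Fin m → ℝ := fun i => if z i = 0 then 0 else Real.log ‖z i‖ with hd
  have hdapp : ∀ i, d i = if z i = 0 then 0 else Real.log ‖z i‖ := fun i => rfl
  obtain ⟨I, hIK, hZI, μ, hμ0, hμZ, hμI, hspan⟩ :=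
    exists_star hInd hInter hCover hZK (-(∑ i, d i • a i))
  haveI : Fintype Z := Set.Finite.fintype (Set.toFinite Z)
  have hrange : a '' Z = Set.range (fun i : Z => a i.1) := by
    rw [Set.image_eq_range]
  rw [hrange, Submodule.mem_span_range_iff_exists_fun] at hspan
  obtain ⟨c, hc⟩ := hspan
  set lam : Fin m → ℝ := fun i => if h : i ∈ Z then c ⟨i, h⟩ else 0 with hlam
  have hlamapp : ∀ i, lam i = if h : i ∈ Z then c ⟨i, h⟩ else 0 := fun i => rfl
  have hlamsum : ∑ i, lam i • a i = (-(∑ i, d i • a i)) - ∑ i, μ i • a i := by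
    rw [← hc]
    calc ∑ i : Fin m, lam i • a i
        = ∑ i ∈ Z.toFinset, lam i • a i :=
          (Finset.sum_subset (Finset.subset_univ _) fun i _ hi => by
            rw [hlamapp i, dif_neg (by simpa using hi), zero_smul]).symm
      _ = ∑ i : Z, lam i.1 • a i.1 := Eq.symm (Finset.sum_set_coe (f := fun i => lam i • a i) Z)
      _ = ∑ i : Z, c i • a i.1 := by
          refine Finset.sum_congr rfl fun i _ => ?_
          rw [hlamapp i.1, dif_pos i.2]
  set hfun : Fin m → ℝ := fun i => -lam i - d i - μ i with hhfun
  have hsum0 : ∑ i, hfun i • a i = 0 := by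
    have e1 : ∑ i, hfun i • a i
        = (∑ i, -(lam i • a i)) - ∑ i, d i • a i - ∑ i, μ i • a i := by
      rw [← Finset.sum_sub_distrib, ← Finset.sum_sub_distrib]
      refine Finset.sum_congr rfl fun i _ => ?_
      rw [show hfun i = -lam i - d i - μ i from rfl, sub_smul, sub_smul, neg_smul]
    rw [e1, Finset.sum_neg_distrib, hlamsum]
    abel
  obtain ⟨x, hx, v, hxv⟩ := exists_decomp hml hCover hNker hNrank hΩinj hΩker hfun hsum0
  have hre : ∀ i, ((x i : ℂ) + Ω v i).re = -lam i - d i - μ i := by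
    intro i
    have h1 := congrFun hxv i
    simp only [Pi.add_apply, ReOm_apply] at h1
    simp only [Complex.add_re, Complex.ofReal_re]
    rw [← h1]
  refine ⟨fun i => Complex.exp ((x i : ℂ) + Ω v i) * z i, ⟨?_, ?_⟩, x, hx, v, fun i => rfl⟩
  · intro i
    rw [norm_exp_mul]
    by_cases h0 : z i = 0
    · rw [h0]
      simp
    · have hiZ : i ∉ Z := h0
      have hlam0 : lam i = 0 := by rw [hlamapp i, dif_neg hiZ]
      have hzpos : 0 < ‖z i‖ := norm_pos_iff.mpr h0
      have hznorm : ‖z i‖ = Real.exp (d i) := by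
        rw [hdapp i, if_neg h0, Real.exp_log hzpos]
      rw [hre i, hznorm, hlam0, ← Real.exp_add]
      rw [Real.exp_le_one_iff]
      have := hμ0 i
      linarith
  · refine hKdown _ hIK _ fun i hi => ?_
    simp only [Set.mem_setOf_eq] at hi
    by_cases h0 : z i = 0
    · exact hZI h0
    · have hiZ : i ∉ Z := h0
      have hlam0 : lam i = 0 := by rw [hlamapp i, dif_neg hiZ]
      have hzpos : 0 < ‖z i‖ := norm_pos_iff.mpr h0
      have hznorm : ‖z i‖ = Real.exp (d i) := by
        rw [hdapp i, if_neg h0, Real.exp_log hzpos]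
      rw [norm_exp_mul, hre i, hznorm, hlam0, ← Real.exp_add] at hi
      by_contra hiI
      rw [hμI i hiI] at hi
      simp at hi

end PUaux

set_option maxHeartbeats 2000000

/-- If `(K; a₁,…,a_m)` underlies a complete simplicial fan in ℝⁿ, `N` has rank
`k` and `m - n - k = 2ℓ`, then the inclusion `Z_K ↪ U(K)` induces a homeomorphism
`Z_K / T(N) ≅ U(K) / C_Ω(N)` of orbit spaces with their quotient topologies. -/
theorem ZK_mod_TN_homeomorphic_UK_mod_COmegaN (n m k l : ℕ) (hn : 1 ≤ n) (hl : 1 ≤ l)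
    (hml : m = n + k + 2 * l)
    (a : Fin m → (Fin n → ℝ)) (K : Set (Set (Fin m)))
    (hKempty : ∅ ∈ K) (hKdown : ∀ I ∈ K, ∀ J ⊆ I, J ∈ K)
    (hInd : ∀ I ∈ K, LinearIndependent ℝ (fun i : I => a i.1))
    (hInter : ∀ I ∈ K, ∀ J ∈ K, cone a I ∩ cone a J = cone a (I ∩ J))
    (hCover : (⋃ I ∈ K, cone a I) = Set.univ)
    (N : AddSubgroup (Fin m → ℤ))
    (hNtf : ∀ (x : Fin m → ℤ) (c : ℤ), c ≠ 0 → c • x ∈ N → x ∈ N)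
    (hNker : ∀ x ∈ N, ∑ i, (x i : ℝ) • a i = 0)
    (hNrank : Module.finrank ℝ (NR m N) = k)
    (Ω : (Fin l → ℂ) →ₗ[ℂ] (Fin m → ℂ))
    (hΩinj : Function.Injective fun w : Fin l → ℂ =>
      (NR m N).mkQ (fun i => (Ω w i).re))
    (hΩker : ∀ w : Fin l → ℂ, ∑ i, (Ω w i).re • a i = 0) :
    ∃ e : Quot (TNOrbitRel m K N) ≃ₜ Quot (COmegaNOrbitRel m l K N Ω),
      ∀ (z : momentAngleComplex m K) (h : (z : Fin m → ℂ) ∈ UK m K),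
        e (Quot.mk (TNOrbitRel m K N) z) =
          Quot.mk (COmegaNOrbitRel m l K N Ω) ⟨(z : Fin m → ℂ), h⟩ := by
  classical
  have hZU : momentAngleComplex m K ⊆ UK m K := PUaux.ZK_subset_UK hKdown
  -- the retraction r with its normal-form data
  have hex : ∀ z : UK m K, ∃ w : momentAngleComplex m K, ∃ x, x ∈ NR m N ∧ ∃ vv : Fin l → ℂ,
      ∀ i, (w : Fin m → ℂ) i = Complex.exp ((x i : ℂ) + Ω vv i) * (z : Fin m → ℂ) i := by
    intro z
    obtain ⟨w, hw, x, hx, vv, hrel⟩ :=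
      PUaux.exists_normal hml hKdown hInd hInter hCover hNker hNrank hΩinj hΩker z.2
    exact ⟨⟨w, hw⟩, x, hx, vv, hrel⟩
  choose r xr hxr vr hrel using hex
  -- uniqueness in packaged form
  have huniq : ∀ (z w : momentAngleComplex m K) (u : Fin m → ℂ), u ∈ NC m N →
      ∀ vv : Fin l → ℂ,
      (∀ i, (w : Fin m → ℂ) i =
        Complex.exp (2 * (Real.pi : ℂ) * Complex.I * u i + Ω vv i) * (z : Fin m → ℂ) i) →
      TNOrbitRel m K N z w := by
    intro z w u hu vv hrelzw
    exact PUaux.uniq hKdown hInd hInter hNker hΩinj hΩker z.2 w.2 hu vv hrelzw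
  -- two normal forms of the same point are TN-related
  have hnf_rel : ∀ (z : UK m K) (w₁ w₂ : momentAngleComplex m K)
      (x₁ x₂ : Fin m → ℝ), x₁ ∈ NR m N → x₂ ∈ NR m N → ∀ (v₁ v₂ : Fin l → ℂ),
      (∀ i, (w₁ : Fin m → ℂ) i = Complex.exp ((x₁ i : ℂ) + Ω v₁ i) * (z : Fin m → ℂ) i) →
      (∀ i, (w₂ : Fin m → ℂ) i = Complex.exp ((x₂ i : ℂ) + Ω v₂ i) * (z : Fin m → ℂ) i) →
      TNOrbitRel m K N w₁ w₂ := by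
    intro z w₁ w₂ x₁ x₂ hx₁ hx₂ v₁ v₂ h1 h2
    obtain ⟨u, huNC, hu⟩ := PUaux.NC_scale (Submodule.sub_mem _ hx₂ hx₁)
    refine huniq w₁ w₂ u huNC (v₂ - v₁) ?_
    have h3 := PUaux.chain h1 h2
    intro i
    rw [h3 i]
    congr 1
    rw [hu i]
    simp only [map_sub, Pi.sub_apply, Complex.ofReal_sub]
    ring
  -- TN implies C-relation
  have hTN_to_RC : ∀ z w : momentAngleComplex m K, TNOrbitRel m K N z w →
      COmegaNOrbitRel m l K N Ω ⟨(z : Fin m → ℂ), hZU z.2⟩ ⟨(w : Fin m → ℂ), hZU w.2⟩ := by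
    rintro z w ⟨x, hx, hzw⟩
    refine ⟨PUaux.cmap m x, PUaux.cmap_mem_NC hx, 0, fun i => ?_⟩
    rw [hzw i]
    congr 1
    simp
  -- C-relation: symmetry and transitivity
  have hRC_symm : ∀ z w : UK m K, COmegaNOrbitRel m l K N Ω z w →
      COmegaNOrbitRel m l K N Ω w z := by
    rintro z w ⟨u, hu, vv, h⟩
    refine ⟨-u, Submodule.neg_mem _ hu, -vv, fun i => ?_⟩
    rw [h i, ← mul_assoc, ← Complex.exp_add]
    have he : (2 * (Real.pi : ℂ) * Complex.I * (-u) i + Ω (-vv) i)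
        + (2 * (Real.pi : ℂ) * Complex.I * u i + Ω vv i) = 0 := by
      simp only [Pi.neg_apply, map_neg]
      ring
    rw [he, Complex.exp_zero, one_mul]
  -- the normal form is C-related to the original point
  have hnf_RC : ∀ z : UK m K,
      COmegaNOrbitRel m l K N Ω z ⟨((r z : momentAngleComplex m K) : Fin m → ℂ), hZU (r z).2⟩ := by
    intro z
    obtain ⟨u, huNC, hu⟩ := PUaux.NC_scale (hxr z)
    refine ⟨u, huNC, vr z, fun i => ?_⟩
    rw [hrel z i]
    congr 1
    rw [hu i]
  -- the two lift maps
  have hliftf : ∀ z w : momentAngleComplex m K, TNOrbitRel m K N z w →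
      Quot.mk (COmegaNOrbitRel m l K N Ω) ⟨(z : Fin m → ℂ), hZU z.2⟩
        = Quot.mk (COmegaNOrbitRel m l K N Ω) ⟨(w : Fin m → ℂ), hZU w.2⟩ :=
    fun z w h => Quot.sound (hTN_to_RC z w h)
  set f : Quot (TNOrbitRel m K N) → Quot (COmegaNOrbitRel m l K N Ω) :=
    Quot.lift (fun z : momentAngleComplex m K =>
      Quot.mk (COmegaNOrbitRel m l K N Ω) ⟨(z : Fin m → ℂ), hZU z.2⟩) hliftf with hf
  have hliftg : ∀ z w : UK m K, COmegaNOrbitRel m l K N Ω z w →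
      Quot.mk (TNOrbitRel m K N) (r z) = Quot.mk (TNOrbitRel m K N) (r w) := by
    intro z w hrc
    obtain ⟨u, hu, vv, hzw⟩ := hrc
    apply Quot.sound
    -- build a composite exponential relation from (r z) to (r w)
    have h2' : ∀ i, ((r w : momentAngleComplex m K) : Fin m → ℂ) i =
        Complex.exp (((xr w i : ℂ) + Ω (vr w) i) + (2 * (Real.pi : ℂ) * Complex.I * u i + Ω vv i))
          * (z : Fin m → ℂ) i := by
      intro i
      rw [hrel w i, hzw i, ← mul_assoc, ← Complex.exp_add]
    have h3 := PUaux.chain (hrel z) h2'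
    obtain ⟨u₀, hu₀NC, hu₀⟩ := PUaux.NC_scale (Submodule.sub_mem _ (hxr w) (hxr z))
    refine huniq (r z) (r w) (u₀ + u) (Submodule.add_mem _ hu₀NC hu) (vr w + vv - vr z)
      fun i => ?_
    rw [h3 i]
    congr 1
    have h4 : 2 * (Real.pi : ℂ) * Complex.I * (u₀ + u) i
        = 2 * (Real.pi : ℂ) * Complex.I * u₀ i + 2 * (Real.pi : ℂ) * Complex.I * u i := by
      simp only [Pi.add_apply]
      ring
    rw [h4, hu₀ i]
    simp only [map_add, map_sub, Pi.add_apply, Pi.sub_apply, Complex.ofReal_sub]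
    ring
  set g : Quot (COmegaNOrbitRel m l K N Ω) → Quot (TNOrbitRel m K N) :=
    Quot.lift (fun z : UK m K => Quot.mk (TNOrbitRel m K N) (r z)) hliftg with hg
  -- inverses
  have hgf : ∀ q, g (f q) = q := by
    refine Quot.ind fun z => ?_
    rw [hf, hg]
    show Quot.mk (TNOrbitRel m K N) (r ⟨(z : Fin m → ℂ), hZU z.2⟩) = Quot.mk _ z
    refine Quot.sound (hnf_rel ⟨(z : Fin m → ℂ), hZU z.2⟩ _ z
      (xr ⟨(z : Fin m → ℂ), hZU z.2⟩) 0 (hxr _) (Submodule.zero_mem _)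
      (vr ⟨(z : Fin m → ℂ), hZU z.2⟩) 0 (hrel _) fun i => ?_)
    simp
  have hfg : ∀ q, f (g q) = q := by
    refine Quot.ind fun z => ?_
    rw [hg, hf]
    show Quot.mk (COmegaNOrbitRel m l K N Ω) ⟨((r z : momentAngleComplex m K) : Fin m → ℂ), hZU (r z).2⟩
        = Quot.mk _ z
    exact Quot.sound (hRC_symm _ _ (hnf_RC z))
  -- continuity of f
  have hfc : Continuous f :=
    continuous_quot_lift _ (continuous_quot_mk.comp (Continuous.subtype_mk continuous_subtype_val _))
  -- continuity of g
  have hgc : Continuous g := by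
    refine continuous_quot_lift _ ?_
    have hZKcpt : IsCompact (momentAngleComplex m K) := PUaux.ZK_isCompact hKdown
    rw [continuous_iff_seqContinuous]
    intro zs z hz
    apply Filter.tendsto_of_subseq_tendsto
    intro ns hns
    have hy : Tendsto (fun j => zs (ns j)) atTop (𝓝 z) := hz.comp hns
    -- Step 1 : extract a convergent subsequence of the normal forms
    obtain ⟨winf, hwinf, φ₁, hφ₁, hconv⟩ := hZKcpt.tendsto_subseq
      (x := fun j => ((r (zs (ns j)) : momentAngleComplex m K) : Fin m → ℂ))
      (fun j => (r (zs (ns j))).2)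
    set y1 : ℕ → UK m K := fun j => zs (ns (φ₁ j)) with hy1def
    have hy1 : Tendsto y1 atTop (𝓝 z) := hy.comp hφ₁.tendsto_atTop
    have hzval : Tendsto (fun j => ((y1 j : Fin m → ℂ))) atTop (𝓝 (z : Fin m → ℂ)) :=
      tendsto_subtype_rng.mp hy1
    have hwval : Tendsto (fun j => ((r (y1 j) : momentAngleComplex m K) : Fin m → ℂ))
        atTop (𝓝 winf) := hconv
    set ξ : ℕ → (Fin m → ℂ) := fun j => PUaux.cmap m (xr (y1 j)) + Ω (vr (y1 j)) with hξdef
    have hξW : ∀ j, ξ j ∈ PUaux.Wsub N Ω := fun j => PUaux.mem_Wsub.mpr ⟨_, hxr _, _, rfl⟩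
    have hrelj : ∀ j i, ((r (y1 j) : momentAngleComplex m K) : Fin m → ℂ) i =
        Complex.exp (ξ j i) * (y1 j : Fin m → ℂ) i := by
      intro j i
      rw [hrel (y1 j) i, hξdef]
      simp only [Pi.add_apply, PUaux.cmap_apply]
    have hWclosed : IsClosed (PUaux.Wsub N Ω : Set (Fin m → ℂ)) :=
      Submodule.closed_of_finiteDimensional _
    -- Step 2 : the exponents are bounded
    have hbdd : ∃ C : ℝ, ∀ j, ‖ξ j‖ ≤ C := by
      by_contra hC
      push_neg at hC
      have hsel : ∀ nn : ℕ, ∃ j, (nn : ℝ) < ‖ξ j‖ ∧ nn ≤ j := by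
        intro nn
        obtain ⟨j, hj⟩ := hC ((nn : ℝ) + ∑ t ∈ Finset.range nn, ‖ξ t‖)
        have hs0 : (0:ℝ) ≤ ∑ t ∈ Finset.range nn, ‖ξ t‖ :=
          Finset.sum_nonneg fun t _ => norm_nonneg _
        refine ⟨j, by linarith, ?_⟩
        by_contra hlt
        push_neg at hlt
        have h1 : ‖ξ j‖ ≤ ∑ t ∈ Finset.range nn, ‖ξ t‖ :=
          Finset.single_le_sum (fun t _ => norm_nonneg (ξ t)) (Finset.mem_range.mpr hlt)
        have h2 : (0:ℝ) ≤ (nn : ℝ) := Nat.cast_nonneg nn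
        linarith
      choose φ₂ hφ₂a hφ₂b using hsel
      have hφ₂top : Tendsto φ₂ atTop atTop :=
        tendsto_atTop_mono hφ₂b tendsto_id
      have hnorm_top : Tendsto (fun nn => ‖ξ (φ₂ nn)‖) atTop atTop :=
        tendsto_atTop_mono (fun nn => (hφ₂a nn).le) tendsto_natCast_atTop_atTop
      have hpos : ∀ nn, 0 < ‖ξ (φ₂ nn)‖ := fun nn =>
        lt_of_le_of_lt (Nat.cast_nonneg nn) (hφ₂a nn)
      set η : ℕ → (Fin m → ℂ) := fun nn => ‖ξ (φ₂ nn)‖⁻¹ • ξ (φ₂ nn) with hηdef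
      have hηsph : ∀ nn, η nn ∈ Metric.sphere (0 : Fin m → ℂ) 1 := by
        intro nn
        rw [mem_sphere_zero_iff_norm, hηdef, norm_smul, norm_inv, norm_norm,
          inv_mul_cancel₀ (hpos nn).ne']
      obtain ⟨ηinf, hηinf, φ₃, hφ₃, hηconv⟩ :=
        (isCompact_sphere (0 : Fin m → ℂ) 1).tendsto_subseq hηsph
      have hηW : ηinf ∈ PUaux.Wsub N Ω :=
        hWclosed.mem_of_tendsto hηconv
          (Filter.Eventually.of_forall fun nn => Submodule.smul_mem _ _ (hξW _))
      have hη1 : ‖ηinf‖ = 1 := mem_sphere_zero_iff_norm.mp hηinf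
      set hcap : Fin m → ℝ := fun i => (ηinf i).re with hhcap
      have hcsum : ∑ i, hcap i • a i = 0 := PUaux.Wsub_re_ker hNker hΩker hηW
      set J : ℕ → ℕ := fun nn => φ₂ (φ₃ nn) with hJdef
      have hJtop : Tendsto J atTop atTop := hφ₂top.comp hφ₃.tendsto_atTop
      have hnormJ : Tendsto (fun nn => ‖ξ (J nn)‖) atTop atTop :=
        hnorm_top.comp hφ₃.tendsto_atTop
      have hre_i : ∀ i, Tendsto (fun nn => ((η (φ₃ nn)) i).re) atTop (𝓝 (hcap i)) := by
        intro i
        have h1 : Tendsto (fun nn => η (φ₃ nn) i) atTop (𝓝 (ηinf i)) :=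
          tendsto_pi_nhds.mp hηconv i
        exact (Complex.continuous_re.tendsto _).comp h1
      have hreξ : ∀ nn i, (ξ (J nn) i).re = ‖ξ (J nn)‖ * ((η (φ₃ nn)) i).re := by
        intro nn i
        have h0 : η (φ₃ nn) i = (‖ξ (J nn)‖⁻¹ : ℝ) • ξ (J nn) i := rfl
        rw [h0, Complex.real_smul, Complex.mul_re]
        simp only [Complex.ofReal_re, Complex.ofReal_im, zero_mul, sub_zero]
        rw [← mul_assoc, mul_inv_cancel₀ (hpos (φ₃ nn)).ne', one_mul]
      have hy1J : ∀ i, Tendsto (fun nn => ‖(y1 (J nn) : Fin m → ℂ) i‖) atTop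
          (𝓝 ‖(z : Fin m → ℂ) i‖) := by
        intro i
        have hzvalJ : Tendsto (fun nn => (y1 (J nn) : Fin m → ℂ)) atTop (𝓝 (z : Fin m → ℂ)) :=
          hzval.comp hJtop
        exact (tendsto_pi_nhds.mp hzvalJ i).norm
      have hPsub : ∀ i, 0 < hcap i → (z : Fin m → ℂ) i = 0 := by
        intro i hi
        have htop : Tendsto (fun nn => (ξ (J nn) i).re) atTop atTop := by
          rw [tendsto_congr (fun nn => hreξ nn i)]
          exact hnormJ.atTop_mul_pos hi (hre_i i)
        have hb : ∀ nn, ‖(y1 (J nn) : Fin m → ℂ) i‖ ≤ Real.exp (-(ξ (J nn) i).re) := by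
          intro nn
          have h1 : ‖((r (y1 (J nn)) : momentAngleComplex m K) : Fin m → ℂ) i‖ ≤ 1 :=
            (r (y1 (J nn))).2.1 i
          rw [hrelj (J nn) i, PUaux.norm_exp_mul] at h1
          rw [Real.exp_neg]
          have h2 := Real.exp_pos ((ξ (J nn) i).re)
          calc ‖(y1 (J nn) : Fin m → ℂ) i‖
              = (Real.exp ((ξ (J nn) i).re))⁻¹
                * (Real.exp ((ξ (J nn) i).re) * ‖(y1 (J nn) : Fin m → ℂ) i‖) := by
                rw [← mul_assoc, inv_mul_cancel₀ h2.ne', one_mul]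
            _ ≤ (Real.exp ((ξ (J nn) i).re))⁻¹ * 1 :=
                mul_le_mul_of_nonneg_left h1 (by positivity)
            _ = (Real.exp ((ξ (J nn) i).re))⁻¹ := mul_one _
        have h0 : Tendsto (fun nn => ‖(y1 (J nn) : Fin m → ℂ) i‖) atTop (𝓝 0) :=
          squeeze_zero (fun nn => norm_nonneg _) hb
            (Real.tendsto_exp_atBot.comp (tendsto_neg_atTop_atBot.comp htop))
        have := tendsto_nhds_unique (hy1J i) h0
        exact norm_eq_zero.mp this
      have hQsub : ∀ i, hcap i < 0 → winf i = 0 := by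
        intro i hi
        have hbot : Tendsto (fun nn => (ξ (J nn) i).re) atTop atBot := by
          rw [tendsto_congr (fun nn => hreξ nn i)]
          exact hnormJ.atTop_mul_neg hi (hre_i i)
        have h2 : Tendsto (fun nn => Real.exp ((ξ (J nn) i).re) * ‖(y1 (J nn) : Fin m → ℂ) i‖)
            atTop (𝓝 (0 * ‖(z : Fin m → ℂ) i‖)) :=
          (Real.tendsto_exp_atBot.comp hbot).mul (hy1J i)
        rw [zero_mul] at h2
        have hwvalJ : Tendsto (fun nn => ((r (y1 (J nn)) : momentAngleComplex m K) : Fin m → ℂ))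
            atTop (𝓝 winf) := hwval.comp hJtop
        have h3 : Tendsto (fun nn => ‖((r (y1 (J nn)) : momentAngleComplex m K) : Fin m → ℂ) i‖)
            atTop (𝓝 ‖winf i‖) := (tendsto_pi_nhds.mp hwvalJ i).norm
        have h4 : ∀ nn, ‖((r (y1 (J nn)) : momentAngleComplex m K) : Fin m → ℂ) i‖
            = Real.exp ((ξ (J nn) i).re) * ‖(y1 (J nn) : Fin m → ℂ) i‖ := fun nn => by
          rw [hrelj (J nn) i, PUaux.norm_exp_mul]
        rw [tendsto_congr h4] at h3
        exact norm_eq_zero.mp (tendsto_nhds_unique h3 h2)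
      have hPK : {i | 0 < hcap i} ∈ K := by
        refine hKdown _ z.2 _ fun i hi => ?_
        exact hPsub i hi
      have hwinfUK : {i | winf i = 0} ∈ K := by
        refine hKdown _ hwinf.2 _ fun i hi => ?_
        simp only [Set.mem_setOf_eq] at hi ⊢
        rw [hi]
        norm_num
      have hQK : {i | hcap i < 0} ∈ K := by
        refine hKdown _ hwinfUK _ fun i hi => ?_
        exact hQsub i hi
      have h0 : hcap = 0 := PUaux.key_zero hInd hInter hcap hcsum hPK hQK
      have hη0 : ηinf = 0 := PUaux.Wsub_nondeg hΩinj hηW (fun i => congrFun h0 i)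
      rw [hη0] at hη1
      simp at hη1
    obtain ⟨C, hCb⟩ := hbdd
    -- Step 3 : extract a convergent subsequence of the exponents
    obtain ⟨ξinf, hξinfball, φ₄, hφ₄, hξconv⟩ :=
      (isCompact_closedBall (0 : Fin m → ℂ) C).tendsto_subseq (x := ξ)
        (fun j => by
          rw [Metric.mem_closedBall, dist_zero_right]
          exact hCb j)
    have hξinfW : ξinf ∈ PUaux.Wsub N Ω :=
      hWclosed.mem_of_tendsto hξconv (Filter.Eventually.of_forall fun j => hξW _)
    -- Step 4 : identify the limit
    have hlim : ∀ i, winf i = Complex.exp (ξinf i) * (z : Fin m → ℂ) i := by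
      intro i
      have hwval4 : Tendsto (fun j => ((r (y1 (φ₄ j)) : momentAngleComplex m K) : Fin m → ℂ))
          atTop (𝓝 winf) := hwval.comp hφ₄.tendsto_atTop
      have h1 : Tendsto (fun j => ((r (y1 (φ₄ j)) : momentAngleComplex m K) : Fin m → ℂ) i)
          atTop (𝓝 (winf i)) := tendsto_pi_nhds.mp hwval4 i
      have h2 : Tendsto (fun j => Complex.exp (ξ (φ₄ j) i) * (y1 (φ₄ j) : Fin m → ℂ) i)
          atTop (𝓝 (Complex.exp (ξinf i) * (z : Fin m → ℂ) i)) := by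
        have hz4 : Tendsto (fun j => (y1 (φ₄ j) : Fin m → ℂ)) atTop (𝓝 (z : Fin m → ℂ)) :=
          hzval.comp hφ₄.tendsto_atTop
        refine Filter.Tendsto.mul ?_ (tendsto_pi_nhds.mp hz4 i)
        exact (Complex.continuous_exp.tendsto _).comp (tendsto_pi_nhds.mp hξconv i)
      rw [tendsto_congr (fun j => hrelj (φ₄ j) i)] at h1
      exact tendsto_nhds_unique h1 h2
    obtain ⟨xinf, hxinf, vinf, hdec⟩ := PUaux.mem_Wsub.mp hξinfW
    have hlim' : ∀ i, winf i = Complex.exp ((xinf i : ℂ) + Ω vinf i) * (z : Fin m → ℂ) i := by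
      intro i
      rw [hlim i, hdec]
      simp only [Pi.add_apply, PUaux.cmap_apply]
    have hkey : TNOrbitRel m K N (r z) ⟨winf, hwinf⟩ :=
      hnf_rel z (r z) ⟨winf, hwinf⟩ (xr z) xinf (hxr z) hxinf (vr z) vinf (hrel z) hlim'
    -- Step 5 : conclude
    refine ⟨φ₁ ∘ φ₄, ?_⟩
    have hsub : Tendsto (fun j => r (y1 (φ₄ j))) atTop
        (𝓝 (⟨winf, hwinf⟩ : momentAngleComplex m K)) :=
      tendsto_subtype_rng.mpr (hwval.comp hφ₄.tendsto_atTop)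
    have hfin := ((continuous_quot_mk (r := TNOrbitRel m K N)).tendsto
      ((⟨winf, hwinf⟩ : momentAngleComplex m K))).comp hsub
    rw [← Quot.sound hkey] at hfin
    exact hfin

  refine ⟨{ toFun := f, invFun := g, left_inv := hgf, right_inv := hfg,
            continuous_toFun := hfc, continuous_invFun := hgc }, fun z h => rfl⟩
end

section
/- The intersection of quadrics Z_P is nondegenerate if and only if the presentation of P is generic; that is: the ℝ-linear derivative at z of the map f : ℂ^m → ℝ^{m−n} (viewing ℂ^m as ℝ^{2m}), f(z)_j = Σ_{k=1}^m γ_{jk}|z_k|², is surjective at every point z ∈ Z_P if and only if for every x ∈ P the set of vectors {a_i : ⟨a_i,x⟩ + b_i = 0} is linearly independent. -/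
open scoped RealInnerProductSpace

/-- pairing representation of a dual vector on `Fin p → ℝ`. -/
lemma dual_rep {p : ℕ} (φ : Module.Dual ℝ (Fin p → ℝ)) (u : Fin p → ℝ) :
    φ u = ∑ j, φ ((Pi.single j 1 : Fin p → ℝ)) * u j := by
  have hu : u = ∑ j, u j • (Pi.single j 1 : Fin p → ℝ) := by
    conv_lhs => rw [← Finset.univ_sum_single u]
    refine Finset.sum_congr rfl fun j _ => ?_
    rw [← Pi.single_smul, smul_eq_mul, mul_one]
  conv_lhs => rw [hu]
  rw [map_sum]
  simp [mul_comm]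

lemma exists_pair_nmem {p : ℕ} (W : Submodule ℝ (Fin p → ℝ)) {v : Fin p → ℝ} (hv : v ∉ W) :
    ∃ c : Fin p → ℝ, (∑ j, c j * v j) ≠ 0 ∧ ∀ w ∈ W, ∑ j, c j * w j = 0 := by
  obtain ⟨φ, hφv, hφW⟩ := W.exists_dual_map_eq_bot_of_notMem hv inferInstance
  refine ⟨fun j => φ ((Pi.single j 1 : Fin p → ℝ)), by rw [← dual_rep]; exact hφv, ?_⟩
  intro w hw
  rw [← dual_rep]
  have : φ w ∈ W.map φ := Submodule.mem_map_of_mem hw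
  rw [hφW] at this
  simpa using this

lemma exists_pair_lt_top {p : ℕ} (W : Submodule ℝ (Fin p → ℝ)) (hW : W ≠ ⊤) :
    ∃ c : Fin p → ℝ, c ≠ 0 ∧ ∀ w ∈ W, ∑ j, c j * w j = 0 := by
  obtain ⟨v, hv⟩ : ∃ v, v ∉ W := by
    by_contra h
    push_neg at h
    exact hW (eq_top_iff.2 fun u _ => h u)
  obtain ⟨c, hc0, hcW⟩ := exists_pair_nmem W hv
  refine ⟨c, ?_, hcW⟩
  intro h
  exact hc0 (by simp [h])

lemma pairing_zero_of_span_top {p : ℕ} {S : Set (Fin p → ℝ)}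
    (hS : Submodule.span ℝ S = ⊤) (c : Fin p → ℝ)
    (hc : ∀ v ∈ S, ∑ j, c j * v j = 0) : c = 0 := by
  set ℓ : (Fin p → ℝ) →ₗ[ℝ] ℝ := ∑ j, c j • (LinearMap.proj j) with hℓ
  have hℓv : ∀ v, ℓ v = ∑ j, c j * v j := by
    intro v; simp [hℓ]
  have hker : Submodule.span ℝ S ≤ LinearMap.ker ℓ :=
    Submodule.span_le.2 fun v hv => by
      rw [SetLike.mem_coe, LinearMap.mem_ker, hℓv]; exact hc v hv
  have hc0 : ℓ c = 0 := hker (hS ▸ Submodule.mem_top)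
  rw [hℓv] at hc0
  funext j
  have := (Finset.sum_eq_zero_iff_of_nonneg
      (fun j _ => mul_self_nonneg (c j))).1 hc0 j (Finset.mem_univ j)
  exact mul_self_eq_zero.mp this

/-- Gale duality. -/
lemma gale {n m p : ℕ} (a : Fin m → Fin n → ℝ) (Γ : Fin p → Fin m → ℝ)
    (hΓrel : ∀ j, ∑ k, Γ j k • a k = 0)
    (hΓind : LinearIndependent ℝ Γ)
    (hΓspan : ∀ γ : Fin m → ℝ, (∑ k, γ k • a k = 0) → γ ∈ Submodule.span ℝ (Set.range Γ))
    (A : Fin m → Prop) :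
    Submodule.span ℝ {v : Fin p → ℝ | ∃ k, ¬ A k ∧ v = fun j => Γ j k} = ⊤ ↔
      LinearIndependent ℝ (fun i : {k : Fin m // A k} => a i.1) := by
  classical
  constructor
  · intro hspan
    rw [Fintype.linearIndependent_iff]
    intro g hg i
    set γ : Fin m → ℝ := fun k => if h : A k then g ⟨k, h⟩ else 0 with hγ
    have h1 : ∑ k ∈ Finset.univ.filter A, γ k • a k = ∑ k, γ k • a k :=
      Finset.sum_filter_of_ne (fun k _ hne => by
        by_contra hA; simp [hγ, hA] at hne)
    have h2 : ∑ k ∈ Finset.univ.filter A, γ k • a k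
        = ∑ i : {k : Fin m // A k}, γ i.1 • a i.1 :=
      Finset.sum_subtype _ (by simp) _
    have hγrel : ∑ k, γ k • a k = 0 := by
      rw [← h1, h2]
      rw [← hg]
      apply Finset.sum_congr rfl
      intro i _
      simp [hγ, i.2]
    obtain ⟨c, hc⟩ := Submodule.mem_span_range_iff_exists_fun ℝ |>.1 (hΓspan γ hγrel)
    have hcgen : ∀ v ∈ {v : Fin p → ℝ | ∃ k, ¬ A k ∧ v = fun j => Γ j k},
        ∑ j, c j * v j = 0 := by
      rintro v ⟨k, hk, rfl⟩
      have : γ k = 0 := by simp [hγ, hk]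
      rw [← hc] at this
      simpa [Finset.sum_apply] using this
    have hc0 : c = 0 := pairing_zero_of_span_top hspan c hcgen
    have hγ0 : γ = 0 := by rw [← hc, hc0]; simp
    have := congrFun hγ0 i.1
    simpa [hγ, i.2] using this
  · intro hind
    by_contra hne
    obtain ⟨c, hc0, hcW⟩ := exists_pair_lt_top _ hne
    set γ : Fin m → ℝ := fun k => ∑ j, c j * Γ j k with hγ
    have hγeq : γ = ∑ j, c j • Γ j := by
      funext k; simp [hγ, Finset.sum_apply]
    have hγ0 : ∀ k, ¬ A k → γ k = 0 := fun k hk =>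
      hcW _ (Submodule.subset_span ⟨k, hk, rfl⟩)
    have hγrel : ∑ k, γ k • a k = 0 := by
      have : ∑ k, γ k • a k = ∑ j, c j • ∑ k, Γ j k • a k := by
        simp only [hγ, Finset.sum_smul, Finset.smul_sum, smul_smul]
        exact Finset.sum_comm
      rw [this]
      simp [hΓrel]
    have hγne : γ ≠ 0 := by
      intro h
      apply hc0
      funext j
      exact Fintype.linearIndependent_iff.1 hΓind c (by rw [← hγeq, h]) j
    set g : {k : Fin m // A k} → ℝ := fun i => γ i.1 with hgdef
    have h1 : ∑ k ∈ Finset.univ.filter A, γ k • a k = ∑ k, γ k • a k :=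
      Finset.sum_filter_of_ne (fun k _ hne => by
        by_contra hA
        rw [hγ0 k hA] at hne
        simp at hne)
    have h2 : ∑ k ∈ Finset.univ.filter A, γ k • a k
        = ∑ i : {k : Fin m // A k}, γ i.1 • a i.1 :=
      Finset.sum_subtype _ (by simp) _
    have hgz : ∀ i, g i = 0 :=
      Fintype.linearIndependent_iff.1 hind g (by rw [hgdef]; rw [← h2, h1, hγrel])
    apply hγne
    funext k
    by_cases hA : A k
    · exact hgz ⟨k, hA⟩
    · exact hγ0 k hA

noncomputable def nsqD (c : ℂ) : ℂ →L[ℝ] ℝ := (2:ℝ) • (innerSL ℝ c)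

lemma hasFDerivAt_nsq (c : ℂ) : HasFDerivAt (fun w : ℂ => ‖w‖ ^ 2) (nsqD c) c := by
  have h := (hasFDerivAt_id c).inner ℝ (hasFDerivAt_id c)
  have hfun : (fun t : ℂ => (inner ℝ (id t) (id t) : ℝ)) = fun w : ℂ => ‖w‖ ^ 2 := by
    funext w; simpa using real_inner_self_eq_norm_sq w
  rw [hfun] at h
  refine h.congr_fderiv ?_
  ext w
  simp [nsqD, fderivInnerCLM_apply, real_inner_comm, two_mul]

noncomputable def Dz {m p : ℕ} (Γ : Fin p → Fin m → ℝ) (z : Fin m → ℂ) :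
    (Fin m → ℂ) →L[ℝ] (Fin p → ℝ) :=
  ContinuousLinearMap.pi fun j =>
    ∑ k, Γ j k • ((nsqD (z k)).comp (ContinuousLinearMap.proj k))

lemma Dz_apply {m p : ℕ} (Γ : Fin p → Fin m → ℝ) (z : Fin m → ℂ)
    (w : Fin m → ℂ) (j : Fin p) :
    Dz Γ z w j = ∑ k, Γ j k * (2 * (inner ℝ (z k) (w k) : ℝ)) := by
  simp [Dz, nsqD, ContinuousLinearMap.pi_apply, ContinuousLinearMap.sum_apply,
    ContinuousLinearMap.smul_apply, ContinuousLinearMap.comp_apply,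
    ContinuousLinearMap.proj_apply, mul_assoc]

lemma hasFDeriv_f {m p : ℕ} (Γ : Fin p → Fin m → ℝ) (z : Fin m → ℂ) :
    HasFDerivAt (fun z : Fin m → ℂ => fun j => ∑ k, Γ j k * ‖z k‖ ^ 2) (Dz Γ z) z := by
  rw [hasFDerivAt_pi']
  intro j
  rw [Dz, ContinuousLinearMap.proj_pi]
  apply HasFDerivAt.fun_sum
  intro k _
  have hp : HasFDerivAt (fun z : Fin m → ℂ => z k)
      (ContinuousLinearMap.proj k : (Fin m → ℂ) →L[ℝ] ℂ) z :=
    (ContinuousLinearMap.proj k : (Fin m → ℂ) →L[ℝ] ℂ).hasFDerivAt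
  have h1 : HasFDerivAt (fun z : Fin m → ℂ => ‖z k‖ ^ 2)
      ((nsqD (z k)).comp (ContinuousLinearMap.proj k)) z :=
    by have := (hasFDerivAt_nsq (z k)).comp z hp; exact this
  exact h1.const_mul (Γ j k)

lemma surj_iff {m p : ℕ} (Γ : Fin p → Fin m → ℝ) (z : Fin m → ℂ) :
    Function.Surjective (Dz Γ z) ↔
      Submodule.span ℝ {v : Fin p → ℝ | ∃ k, z k ≠ 0 ∧ v = fun j => Γ j k} = ⊤ := by
  classical
  constructor
  · intro hs
    rw [eq_top_iff]
    intro v _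
    obtain ⟨w, hw⟩ := hs v
    rw [← hw]
    have hD : Dz Γ z w = ∑ k, (2 * (inner ℝ (z k) (w k) : ℝ)) • (fun j => Γ j k) := by
      funext j
      rw [Dz_apply]
      simp [Finset.sum_apply, mul_comm]
    rw [hD]
    apply Submodule.sum_mem
    intro k _
    by_cases hk : z k = 0
    · simp [hk]
    · exact Submodule.smul_mem _ _ (Submodule.subset_span ⟨k, hk, rfl⟩)
  · intro hspan
    have key : ∀ v ∈ Submodule.span ℝ
        {v : Fin p → ℝ | ∃ k, z k ≠ 0 ∧ v = fun j => Γ j k}, ∃ w, Dz Γ z w = v := by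
      intro v hv
      induction hv using Submodule.span_induction with
      | mem v hv =>
        obtain ⟨k, hk, rfl⟩ := hv
        refine ⟨Pi.single k (((2 * ‖z k‖ ^ 2)⁻¹ : ℝ) • z k), ?_⟩
        funext j
        rw [Dz_apply]
        rw [Finset.sum_eq_single k]
        · have h0 : ‖z k‖ ≠ 0 := norm_ne_zero_iff.mpr hk
          rw [Pi.single_eq_same, real_inner_smul_right, real_inner_self_eq_norm_sq]
          have h2 : (2:ℝ) * ((2 * ‖z k‖ ^ 2)⁻¹ * ‖z k‖ ^ 2) = 1 := by
            rw [mul_comm ((2 * ‖z k‖ ^ 2)⁻¹), ← mul_assoc, mul_inv_cancel₀]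
            exact mul_ne_zero two_ne_zero (pow_ne_zero _ h0)
          rw [h2, mul_one]
        · intro k' _ hk'
          rw [Pi.single_eq_of_ne hk']
          simp
        · intro h; exact absurd (Finset.mem_univ k) h
      | zero => exact ⟨0, map_zero _⟩
      | add x y _ _ hx hy =>
        obtain ⟨w1, h1⟩ := hx
        obtain ⟨w2, h2⟩ := hy
        exact ⟨w1 + w2, by rw [map_add, h1, h2]⟩
      | smul r x _ hx =>
        obtain ⟨w, h⟩ := hx
        exact ⟨r • w, by rw [map_smul, h]⟩
    exact fun v => key v (hspan ▸ Submodule.mem_top)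

lemma quad_rel {n m p : ℕ} (a : Fin m → Fin n → ℝ) (Γ : Fin p → Fin m → ℝ)
    (hΓrel : ∀ j, ∑ k, Γ j k • a k = 0) (j : Fin p) (x : Fin n → ℝ) :
    ∑ k, Γ j k * (∑ i, a k i * x i) = 0 := by
  have hcomp : ∀ i, ∑ k, Γ j k * a k i = 0 := by
    intro i
    have := congrFun (hΓrel j) i
    simpa [Finset.sum_apply] using this
  calc ∑ k, Γ j k * (∑ i, a k i * x i)
      = ∑ k, ∑ i, Γ j k * a k i * x i := by
        simp [Finset.mul_sum, mul_assoc]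
    _ = ∑ i, (∑ k, Γ j k * a k i) * x i := by
        rw [Finset.sum_comm]
        simp [Finset.sum_mul]
    _ = 0 := by simp [hcomp]

/-- The intersection of quadrics `Z_P` is nondegenerate (the real derivative of
`f(z)_j = Σ_k γ_{jk}|z_k|²` is surjective at every point of `Z_P`) if and only if the
presentation of `P` is generic (at every `x ∈ P` the active normal vectors are linearly
independent). -/
theorem ZP_nondegenerate_iff_generic (n m : ℕ) (hn : 1 ≤ n) (hm : 1 ≤ m)
    (a : Fin m → (Fin n → ℝ)) (b : Fin m → ℝ)
    (P : Set (Fin n → ℝ))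
    (hP : P = {x | ∀ i, 0 ≤ ∑ j, a i j * x j + b i})
    (hPbdd : Bornology.IsBounded P)
    (hPint : (interior P).Nonempty)
    (hspan : Submodule.span ℝ (Set.range a) = ⊤)
    (Γ : Fin (m - n) → (Fin m → ℝ))
    (hΓrel : ∀ j, ∑ k, Γ j k • a k = 0)
    (hΓind : LinearIndependent ℝ Γ)
    (hΓspan : ∀ γ : Fin m → ℝ, (∑ k, γ k • a k = 0) → γ ∈ Submodule.span ℝ (Set.range Γ))
    (ZP : Set (Fin m → ℂ))
    (hZP : ZP = {z | ∀ j, ∑ k, Γ j k * ‖z k‖ ^ 2 = ∑ k, Γ j k * b k}) :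
    (∀ z ∈ ZP, ∃ D : (Fin m → ℂ) →L[ℝ] (Fin (m - n) → ℝ),
        HasFDerivAt (fun z : Fin m → ℂ => fun j => ∑ k, Γ j k * ‖z k‖ ^ 2) D z ∧
        Function.Surjective D) ↔
    (∀ x ∈ P, LinearIndependent ℝ
        (fun i : {i : Fin m // ∑ j, a i j * x j + b i = 0} => a i.1)) := by
  classical
  subst hP hZP
  constructor
  · intro hND x hx
    have htnn : ∀ k, 0 ≤ ∑ j, a k j * x j + b k := hx
    set z : Fin m → ℂ := fun k => ((Real.sqrt (∑ j, a k j * x j + b k) : ℝ) : ℂ) with hzdef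
    have hzn : ∀ k, ‖z k‖ ^ 2 = ∑ j, a k j * x j + b k := by
      intro k
      rw [hzdef]
      rw [Complex.norm_real, Real.norm_eq_abs, sq_abs, Real.sq_sqrt (htnn k)]
    have hz0 : ∀ k, (z k = 0 ↔ ∑ j, a k j * x j + b k = 0) := by
      intro k
      rw [hzdef]
      simp only [Complex.ofReal_eq_zero]
      constructor
      · intro h
        exact le_antisymm (Real.sqrt_eq_zero'.1 h) (htnn k)
      · intro h; rw [h, Real.sqrt_zero]
    have hzZP : ∀ j, ∑ k, Γ j k * ‖z k‖ ^ 2 = ∑ k, Γ j k * b k := by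
      intro j
      calc ∑ k, Γ j k * ‖z k‖ ^ 2
          = ∑ k, (Γ j k * (∑ i, a k i * x i) + Γ j k * b k) := by
            refine Finset.sum_congr rfl fun k _ => ?_
            rw [hzn k, mul_add]
        _ = ∑ k, Γ j k * b k := by
            rw [Finset.sum_add_distrib, quad_rel a Γ hΓrel j x, zero_add]
    obtain ⟨D, hD, hDs⟩ := hND z hzZP
    have hDeq : D = Dz Γ z := hD.unique (hasFDeriv_f Γ z)
    rw [hDeq] at hDs
    have hsurj := (surj_iff Γ z).1 hDs
    have hset : {v : Fin (m - n) → ℝ | ∃ k, z k ≠ 0 ∧ v = fun j => Γ j k}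
        = {v : Fin (m - n) → ℝ | ∃ k, ¬ (∑ j, a k j * x j + b k = 0) ∧ v = fun j => Γ j k} := by
      ext v
      constructor
      · rintro ⟨k, hk, rfl⟩; exact ⟨k, fun h => hk ((hz0 k).2 h), rfl⟩
      · rintro ⟨k, hk, rfl⟩; exact ⟨k, fun h => hk ((hz0 k).1 h), rfl⟩
    rw [hset] at hsurj
    exact (gale a Γ hΓrel hΓind hΓspan _).1 hsurj
  · intro hgen z hz
    set T : (Fin n → ℝ) →ₗ[ℝ] (Fin m → ℝ) :=
      LinearMap.pi (fun k => ∑ i, a k i • LinearMap.proj i) with hT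
    have hTapp : ∀ x k, T x k = ∑ i, a k i * x i := by
      intro x k; simp [hT]
    set v : Fin m → ℝ := fun k => ‖z k‖ ^ 2 - b k with hv
    have hvmem : v ∈ LinearMap.range T := by
      by_contra hvn
      obtain ⟨γ, hγv, hγW⟩ := exists_pair_nmem _ hvn
      have hγrel : ∑ k, γ k • a k = 0 := by
        funext i
        have h1 := hγW (T (Pi.single i 1 : Fin n → ℝ)) (LinearMap.mem_range_self T _)
        have h2 : ∀ k, T (Pi.single i 1 : Fin n → ℝ) k = a k i := by
          intro k
          rw [hTapp]
          rw [Finset.sum_eq_single i]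
          · rw [Pi.single_eq_same, mul_one]
          · intro i' _ hi'; rw [Pi.single_eq_of_ne hi', mul_zero]
          · intro h; exact absurd (Finset.mem_univ i) h
        simp only [h2] at h1
        simpa [Finset.sum_apply] using h1
      obtain ⟨c, hc⟩ := Submodule.mem_span_range_iff_exists_fun ℝ |>.1 (hΓspan γ hγrel)
      apply hγv
      have hγk : ∀ k, γ k = ∑ j, c j * Γ j k := by
        intro k; rw [← hc]; simp [Finset.sum_apply]
      calc ∑ k, γ k * v k
          = ∑ k, ∑ j, c j * Γ j k * v k := by
            refine Finset.sum_congr rfl fun k _ => ?_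
            rw [hγk k, Finset.sum_mul]
        _ = ∑ j, c j * ∑ k, Γ j k * v k := by
            rw [Finset.sum_comm]
            simp [Finset.mul_sum, mul_assoc]
        _ = 0 := by
            refine Finset.sum_eq_zero fun j _ => ?_
            have hzj : ∑ k, Γ j k * v k = 0 := by
              have h := hz j
              simp only [hv, mul_sub, Finset.sum_sub_distrib]
              rw [h, sub_self]
            rw [hzj, mul_zero]
    obtain ⟨x, hxT⟩ := hvmem
    have hxk : ∀ k, ∑ i, a k i * x i = ‖z k‖ ^ 2 - b k := by
      intro k; rw [← hTapp x k, hxT]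
    have hsum : ∀ k, ∑ j, a k j * x j + b k = ‖z k‖ ^ 2 := by
      intro k; rw [hxk k]; ring
    have hxP : x ∈ {x | ∀ i, 0 ≤ ∑ j, a i j * x j + b i} := by
      intro k
      rw [hsum k]
      positivity
    have hz0 : ∀ k, ((∑ j, a k j * x j + b k = 0) ↔ z k = 0) := by
      intro k
      rw [hsum k]
      constructor
      · intro h
        exact norm_eq_zero.1 (pow_eq_zero_iff (two_ne_zero) |>.1 h)
      · intro h; rw [h]; simp
    refine ⟨Dz Γ z, hasFDeriv_f Γ z, (surj_iff Γ z).2 ?_⟩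
    have hind := hgen x hxP
    have hspan2 := (gale a Γ hΓrel hΓind hΓspan
      (fun k => ∑ j, a k j * x j + b k = 0)).2 hind
    have hset : {v : Fin (m - n) → ℝ | ∃ k, z k ≠ 0 ∧ v = fun j => Γ j k}
        = {v : Fin (m - n) → ℝ | ∃ k, ¬ (∑ j, a k j * x j + b k = 0) ∧ v = fun j => Γ j k} := by
      ext u
      constructor
      · rintro ⟨k, hk, rfl⟩; exact ⟨k, fun h => hk ((hz0 k).1 h), rfl⟩
      · rintro ⟨k, hk, rfl⟩; exact ⟨k, fun h => hk ((hz0 k).2 h), rfl⟩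
    rw [hset]
    exact hspan2
end
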